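/- arXiv:1511.03936 — 8 statements merged into one kernel-verified Lean document; each statement's English description precedes it below -/
import Mathlib

section
/- There exists a unique linear left action ▷ of U(g^L) on U(g) such that 1 ▷ X = X, X_μ ▷ X = X_μ X, T_{μν} ▷ 1 = δ_{μν}, and (ab) ▷ X = a ▷ (b ▷ X); moreover this action satisfies the multiplicativity property T_{μν} ▷ (XY) = Σ_α (T_{μα} ▷ X)(T_{αν} ▷ Y) for all X, Y in U(g). -/
open UniversalEnvelopingAlgebra

section PortInst

attribute [local instance 100] LieRing.ofAssociativeRing

section Aux

variable {K : Type*} [Field K] {n : ℕ}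
    {g : Type*} [LieRing g] [LieAlgebra K g]

/-- Induction principle for the universal enveloping algebra. -/
theorem uea_induction {C : UniversalEnvelopingAlgebra K g → Prop}
    (halg : ∀ r, C (algebraMap K _ r)) (hι : ∀ x, C (ι K x))
    (hmul : ∀ a b, C a → C b → C (a * b)) (hadd : ∀ a b, C a → C b → C (a + b))
    (a : UniversalEnvelopingAlgebra K g) : C a := by
  obtain ⟨a, rfl⟩ := RingCon.mkₐ_surjective (α := K) (UniversalEnvelopingAlgebra.ringCon K g) a
  refine TensorAlgebra.induction (C := fun t =>
      C (UniversalEnvelopingAlgebra.mkAlgHom K g t)) ?_ ?_ ?_ ?_ a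
  · intro r; rw [AlgHom.commutes]; exact halg r
  · intro x; exact hι x
  · intro a b ha hb; rw [map_mul]; exact hmul _ _ ha hb
  · intro a b ha hb; rw [map_add]; exact hadd _ _ ha hb

end Aux

section Aux2

variable {K : Type*} [Field K] {n : ℕ}
    {g : Type*} [LieRing g] [LieAlgebra K g] (b : Module.Basis (Fin n) K g)
    (C : Fin n → Fin n → Fin n → K)

theorem lie_sum' {K : Type*} [CommRing K] {L : Type*} [LieRing L] [LieAlgebra K L]
    {ι : Type*} (s : Finset ι) (x : L) (f : ι → L) :
    ⁅x, ∑ i ∈ s, f i⁆ = ∑ i ∈ s, ⁅x, f i⁆ :=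
  map_sum (LieAlgebra.ad K L x) f s

theorem sum_lie' {K : Type*} [CommRing K] {L : Type*} [LieRing L] [LieAlgebra K L]
    {ι : Type*} (s : Finset ι) (x : L) (f : ι → L) :
    ⁅∑ i ∈ s, f i, x⁆ = ∑ i ∈ s, ⁅f i, x⁆ := by
  rw [← lie_skew, lie_sum' (K := K) s x f, ← Finset.sum_neg_distrib]
  refine Finset.sum_congr rfl fun i _ => ?_
  rw [← lie_skew, neg_neg]

theorem coeff_eq {d e : Fin n → K} (h : ∑ α, d α • b α = ∑ α, e α • b α) : ∀ ν, d ν = e ν := by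
  intro ν
  have := congrArg (fun z => b.repr z ν) h
  simpa [Finsupp.single_apply] using this

theorem C_antisymm (hg : ∀ μ ν, ⁅b μ, b ν⁆ = ∑ α, C μ ν α • b α) (μ ν α : Fin n) :
    C μ ν α = - C ν μ α := by
  have h : ∑ β, C μ ν β • b β = ∑ β, (fun x => -C ν μ x) β • b β := by
    rw [← hg, ← lie_skew, hg, ← Finset.sum_neg_distrib]
    simp [neg_smul]
  exact coeff_eq b h α

theorem C_jacobi (hg : ∀ μ ν, ⁅b μ, b ν⁆ = ∑ α, C μ ν α • b α) (μ lam ρ ν : Fin n) :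
    ∑ α, C μ lam α * C α ρ ν = (∑ σ, C lam ρ σ * C μ σ ν) + ∑ α, C μ ρ α * C α lam ν := by
  have jac : ⁅b μ, ⁅b lam, b ρ⁆⁆ = ⁅⁅b μ, b lam⁆, b ρ⁆ + ⁅b lam, ⁅b μ, b ρ⁆⁆ := by
    rw [leibniz_lie]
  have lhs : ⁅b μ, ⁅b lam, b ρ⁆⁆ = ∑ ν', (∑ σ, C lam ρ σ * C μ σ ν') • b ν' := by
    rw [hg, lie_sum' (K := K)]
    simp only [lie_smul, hg, Finset.smul_sum, smul_smul, Finset.sum_smul]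
    rw [Finset.sum_comm]
  have rhs1 : ⁅⁅b μ, b lam⁆, b ρ⁆ = ∑ ν', (∑ α, C μ lam α * C α ρ ν') • b ν' := by
    rw [hg, sum_lie' (K := K)]
    simp only [smul_lie, hg, Finset.smul_sum, smul_smul, Finset.sum_smul]
    rw [Finset.sum_comm]
  have rhs2 : ⁅b lam, ⁅b μ, b ρ⁆⁆ = ∑ ν', (∑ α, C μ ρ α * C lam α ν') • b ν' := by
    rw [hg, lie_sum' (K := K)]
    simp only [lie_smul, hg, Finset.smul_sum, smul_smul, Finset.sum_smul]
    rw [Finset.sum_comm]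
  have h : ∑ ν', (∑ α, C μ lam α * C α ρ ν') • b ν'
      = ∑ ν', ((∑ σ, C lam ρ σ * C μ σ ν') - (∑ α, C μ ρ α * C lam α ν')) • b ν' := by
    simp only [sub_smul, Finset.sum_sub_distrib, ← lhs, ← rhs1, ← rhs2]
    rw [jac]; abel
  rw [coeff_eq b h ν, sub_eq_add_neg]
  congr 1
  rw [← Finset.sum_neg_distrib]
  refine Finset.sum_congr rfl fun α _ => ?_
  rw [C_antisymm b C hg lam α ν]
  ring

end Aux2

section Aux3

variable {K : Type*} [Field K] {n : ℕ}
    {g : Type*} [LieRing g] [LieAlgebra K g]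

/-- The generator matrices. -/
noncomputable def Mgen (b : Module.Basis (Fin n) K g) (C : Fin n → Fin n → Fin n → K) (lam : Fin n) :
    Matrix (Fin n) (Fin n) (UniversalEnvelopingAlgebra K g) :=
  Matrix.of fun μ ν => (if μ = ν then ι K (b lam) else 0)
    + algebraMap K (UniversalEnvelopingAlgebra K g) (C μ lam ν)

/-- The linear map `g → Matrix`. -/
noncomputable def Mlin (b : Module.Basis (Fin n) K g) (C : Fin n → Fin n → Fin n → K) :
    g →ₗ[K] Matrix (Fin n) (Fin n) (UniversalEnvelopingAlgebra K g) :=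
  b.constr K (Mgen b C)

theorem Mlin_basis (b : Module.Basis (Fin n) K g) (C : Fin n → Fin n → Fin n → K) (lam : Fin n) :
    Mlin b C (b lam) = Mgen b C lam :=
  b.constr_basis K (Mgen b C) lam

end Aux3

section Aux4

variable {K : Type*} [Field K] {n : ℕ}
    {g : Type*} [LieRing g] [LieAlgebra K g]
    (b : Module.Basis (Fin n) K g) (C : Fin n → Fin n → Fin n → K)

theorem Mgen_mul_apply (lam ρ μ ν : Fin n) :
    (Mgen b C lam * Mgen b C ρ) μ ν
      = (if μ = ν then ι K (b lam) * ι K (b ρ) else 0)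
        + ι K (b lam) * algebraMap K (UniversalEnvelopingAlgebra K g) (C μ ρ ν)
        + algebraMap K (UniversalEnvelopingAlgebra K g) (C μ lam ν) * ι K (b ρ)
        + ∑ α, algebraMap K (UniversalEnvelopingAlgebra K g) (C μ lam α * C α ρ ν) := by
  simp only [Mgen, Matrix.mul_apply, Matrix.of_apply, add_mul, mul_add, ite_mul, mul_ite,
    zero_mul, mul_zero, zero_add, add_zero, Finset.sum_add_distrib, map_mul]
  rw [Finset.sum_ite_eq', Finset.sum_ite_eq]
  simp [map_mul, add_assoc, add_comm, add_left_comm]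

theorem Mgen_bracket (hg : ∀ μ ν, ⁅b μ, b ν⁆ = ∑ α, C μ ν α • b α) (lam ρ : Fin n) :
    Mgen b C lam * Mgen b C ρ - Mgen b C ρ * Mgen b C lam = ∑ σ, C lam ρ σ • Mgen b C σ := by
  ext μ ν
  rw [Matrix.sub_apply, Mgen_mul_apply, Mgen_mul_apply]
  have hcomm : ∀ (r : K) (u : UniversalEnvelopingAlgebra K g),
      algebraMap K _ r * u = u * algebraMap K _ r := fun r u => Algebra.commutes r u
  rw [hcomm (C μ lam ν), hcomm (C μ ρ ν)]
  have hsum : ∑ σ, (C lam ρ σ • Mgen b C σ) μ ν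
      = (if μ = ν then ∑ σ, C lam ρ σ • ι K (b σ) else 0)
        + ∑ σ, algebraMap K (UniversalEnvelopingAlgebra K g) (C lam ρ σ * C μ σ ν) := by
    by_cases hμν : μ = ν <;>
      simp [Mgen, hμν, Algebra.smul_def, mul_add, Finset.sum_add_distrib, map_mul]
  rw [Matrix.sum_apply, hsum]
  have hlie : (if μ = ν then ι K (b lam) * ι K (b ρ) else 0)
      - (if μ = ν then ι K (b ρ) * ι K (b lam) else 0)
      = if μ = ν then ∑ σ, C lam ρ σ • ι K (b σ) else 0 := by
    split
    · rw [← LieRing.of_associative_ring_bracket,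
        ← (ι K : g →ₗ⁅K⁆ UniversalEnvelopingAlgebra K g).map_lie, hg]
      simp
    · simp
  have hjac : ∑ α, algebraMap K (UniversalEnvelopingAlgebra K g) (C μ lam α * C α ρ ν)
      - ∑ α, algebraMap K (UniversalEnvelopingAlgebra K g) (C μ ρ α * C α lam ν)
      = ∑ σ, algebraMap K (UniversalEnvelopingAlgebra K g) (C lam ρ σ * C μ σ ν) := by
    rw [← map_sum, ← map_sum, ← map_sum, ← map_sub]
    congr 1
    rw [C_jacobi b C hg μ lam ρ ν]
    ring
  rw [← hlie, ← hjac]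
  abel

/-- `Mlin` as a morphism of Lie algebras. -/
noncomputable def MlieHom (hg : ∀ μ ν, ⁅b μ, b ν⁆ = ∑ α, C μ ν α • b α) :
    g →ₗ⁅K⁆ Matrix (Fin n) (Fin n) (UniversalEnvelopingAlgebra K g) :=
  { Mlin b C with
    map_lie' := by
      intro x y
      have key : ∀ lam ρ, Mlin b C ⁅b lam, b ρ⁆ = ⁅Mlin b C (b lam), Mlin b C (b ρ)⁆ := by
        intro lam ρ
        rw [hg, map_sum]
        simp only [map_smul, Mlin_basis, LieRing.of_associative_ring_bracket]
        rw [Mgen_bracket b C hg lam ρ]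
      let B1 : g →ₗ[K] g →ₗ[K] Matrix (Fin n) (Fin n) (UniversalEnvelopingAlgebra K g) :=
        LinearMap.mk₂ K (fun x y => Mlin b C ⁅x, y⁆)
          (fun x x' y => by simp [add_lie])
          (fun r x y => by simp [smul_lie])
          (fun x y y' => by simp [lie_add])
          (fun r x y => by simp [lie_smul])
      let B2 : g →ₗ[K] g →ₗ[K] Matrix (Fin n) (Fin n) (UniversalEnvelopingAlgebra K g) :=
        LinearMap.mk₂ K (fun x y => ⁅Mlin b C x, Mlin b C y⁆)
          (fun x x' y => by simp [add_lie])
          (fun r x y => by simp [smul_lie])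
          (fun x y y' => by simp [lie_add])
          (fun r x y => by simp [LieRing.of_associative_ring_bracket, smul_sub, mul_smul_comm, smul_mul_assoc])
      have : B1 = B2 := LinearMap.ext_basis b b key
      exact LinearMap.congr_fun (LinearMap.congr_fun this x) y }

/-- The algebra morphism `U(g) → Matrix n n U(g)`. -/
noncomputable def Theta (hg : ∀ μ ν, ⁅b μ, b ν⁆ = ∑ α, C μ ν α • b α) :
    UniversalEnvelopingAlgebra K g →ₐ[K] Matrix (Fin n) (Fin n) (UniversalEnvelopingAlgebra K g) :=
  UniversalEnvelopingAlgebra.lift K (MlieHom b C hg)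

theorem Theta_ι (hg : ∀ μ ν, ⁅b μ, b ν⁆ = ∑ α, C μ ν α • b α) (x : g) :
    Theta b C hg (ι K x) = Mlin b C x :=
  UniversalEnvelopingAlgebra.lift_ι_apply K (MlieHom b C hg) x

end Aux4

section Aux5

variable {K : Type*} [Field K] {n : ℕ}
    {g : Type*} [LieRing g] [LieAlgebra K g]
    (b : Module.Basis (Fin n) K g) (C : Fin n → Fin n → Fin n → K)
    (hg : ∀ μ ν, ⁅b μ, b ν⁆ = ∑ α, C μ ν α • b α)

theorem Theta_basis_entry (lam μ ν : Fin n) :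
    Theta b C hg (ι K (b lam)) μ ν
      = (if μ = ν then ι K (b lam) else 0)
        + algebraMap K (UniversalEnvelopingAlgebra K g) (C μ lam ν) := by
  rw [Theta_ι, Mlin_basis]
  rfl

theorem Theta_algebraMap_entry (r : K) (μ ν : Fin n) :
    Theta b C hg (algebraMap K (UniversalEnvelopingAlgebra K g) r) μ ν
      = if μ = ν then algebraMap K (UniversalEnvelopingAlgebra K g) r else 0 := by
  rw [AlgHom.commutes]
  simp [Matrix.algebraMap_eq_diagonal, Matrix.diagonal_apply]

theorem Theta2_basis (lam μ ν α β : Fin n) :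
    Theta b C hg (Theta b C hg (ι K (b lam)) α β) μ ν
      = (if α = β then ((if μ = ν then ι K (b lam) else 0)
            + algebraMap K (UniversalEnvelopingAlgebra K g) (C μ lam ν)) else 0)
        + (if μ = ν then algebraMap K (UniversalEnvelopingAlgebra K g) (C α lam β) else 0) := by
  rw [Theta_basis_entry, map_add, Matrix.add_apply]
  congr 1
  · by_cases h1 : α = β
    · rw [if_pos h1, if_pos h1, Theta_basis_entry]
    · rw [if_neg h1, if_neg h1, map_zero, Matrix.zero_apply]
  · rw [Theta_algebraMap_entry]

theorem Theta_symm (x : UniversalEnvelopingAlgebra K g) :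
    ∀ μ ν α β : Fin n,
      Theta b C hg (Theta b C hg x α β) μ ν = Theta b C hg (Theta b C hg x μ ν) α β := by
  induction x using uea_induction with
  | halg r =>
    intro μ ν α β
    rw [Theta_algebraMap_entry, Theta_algebraMap_entry]
    by_cases h1 : α = β <;> by_cases h2 : μ = ν <;>
      simp [h1, h2, Theta_algebraMap_entry]
  | hι x =>
    intro μ ν α β
    have base : ∀ lam, Theta b C hg (Theta b C hg (ι K (b lam)) α β) μ ν
        = Theta b C hg (Theta b C hg (ι K (b lam)) μ ν) α β := by
      intro lam
      rw [Theta2_basis, Theta2_basis]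
      by_cases h1 : α = β <;> by_cases h2 : μ = ν <;> simp [h1, h2] <;> abel
    calc Theta b C hg (Theta b C hg (ι K x) α β) μ ν
        = ∑ lam, b.repr x lam • Theta b C hg (Theta b C hg (ι K (b lam)) α β) μ ν := by
          conv_lhs => rw [← b.sum_repr x]
          simp [map_sum, Finset.sum_apply, Matrix.sum_apply, -UniversalEnvelopingAlgebra.ι_apply, -Module.Basis.sum_repr]
      _ = ∑ lam, b.repr x lam • Theta b C hg (Theta b C hg (ι K (b lam)) μ ν) α β := by
          exact Finset.sum_congr rfl fun lam _ => by rw [base lam]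
      _ = Theta b C hg (Theta b C hg (ι K x) μ ν) α β := by
          conv_rhs => rw [← b.sum_repr x]
          simp [map_sum, Finset.sum_apply, Matrix.sum_apply, -UniversalEnvelopingAlgebra.ι_apply, -Module.Basis.sum_repr]
  | hmul a c iha ihc =>
    intro μ ν α β
    rw [map_mul, Matrix.mul_apply, Matrix.mul_apply, map_sum, map_sum,
      Matrix.sum_apply, Matrix.sum_apply]
    calc ∑ γ, Theta b C hg (Theta b C hg a α γ * Theta b C hg c γ β) μ ν
        = ∑ γ, ∑ δ, Theta b C hg (Theta b C hg a α γ) μ δ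
            * Theta b C hg (Theta b C hg c γ β) δ ν := by
          exact Finset.sum_congr rfl fun γ _ => by rw [map_mul, Matrix.mul_apply]
      _ = ∑ δ, ∑ γ, Theta b C hg (Theta b C hg a μ δ) α γ
            * Theta b C hg (Theta b C hg c δ ν) γ β := by
          rw [Finset.sum_comm]
          exact Finset.sum_congr rfl fun δ _ => Finset.sum_congr rfl fun γ _ => by
            rw [iha μ δ α γ, ihc δ ν γ β]
      _ = ∑ δ, Theta b C hg (Theta b C hg a μ δ * Theta b C hg c δ ν) α β := by
          exact Finset.sum_congr rfl fun δ _ => by rw [map_mul, Matrix.mul_apply]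
  | hadd a c iha ihc =>
    intro μ ν α β
    simp only [map_add, Matrix.add_apply, map_add]
    rw [iha μ ν α β, ihc μ ν α β]

end Aux5

section Aux6

variable {K : Type*} [Field K] {n : ℕ}
    {g : Type*} [LieRing g] [LieAlgebra K g]
    (b : Module.Basis (Fin n) K g) (C : Fin n → Fin n → Fin n → K)
    (hg : ∀ μ ν, ⁅b μ, b ν⁆ = ∑ α, C μ ν α • b α)

/-- The operator `T_{μν} ▷ ·` on `U(g)`. -/
noncomputable def Smap (μ ν : Fin n) :
    Module.End K (UniversalEnvelopingAlgebra K g) where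
  toFun x := Theta b C hg x μ ν
  map_add' x y := by simp only [map_add, Matrix.add_apply]
  map_smul' r x := by simp only [map_smul, Matrix.smul_apply, RingHom.id_apply]

theorem Smap_apply (μ ν : Fin n) (x : UniversalEnvelopingAlgebra K g) :
    Smap b C hg μ ν x = Theta b C hg x μ ν := rfl

theorem Smap_one (μ ν : Fin n) :
    Smap b C hg μ ν 1 = if μ = ν then 1 else 0 := by
  rw [Smap_apply, map_one, Matrix.one_apply]

theorem Smap_mul (μ ν : Fin n) (x y : UniversalEnvelopingAlgebra K g) :
    Smap b C hg μ ν (x * y) = ∑ α, Smap b C hg μ α x * Smap b C hg α ν y := by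
  simp only [Smap_apply, map_mul, Matrix.mul_apply]

theorem Smap_mulLeft (μ ν lam : Fin n) (x : UniversalEnvelopingAlgebra K g) :
    Smap b C hg μ ν (ι K (b lam) * x)
      = ι K (b lam) * Smap b C hg μ ν x + ∑ α, C μ lam α • Smap b C hg α ν x := by
  rw [Smap_mul]
  have : ∀ α, Smap b C hg μ α (ι K (b lam))
      = (if μ = α then ι K (b lam) else 0)
        + algebraMap K (UniversalEnvelopingAlgebra K g) (C μ lam α) := fun α =>
    Theta_basis_entry b C hg lam μ α
  simp only [this, add_mul, ite_mul, zero_mul, Finset.sum_add_distrib,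
    Finset.sum_ite_eq, Finset.mem_univ, if_true]
  congr 1

theorem Smap_comm (μ ν α β : Fin n) (x : UniversalEnvelopingAlgebra K g) :
    Smap b C hg μ ν (Smap b C hg α β x) = Smap b C hg α β (Smap b C hg μ ν x) :=
  Theta_symm b C hg x μ ν α β

end Aux6

section Aux7

variable {K : Type*} [Field K] {n : ℕ}
    {g : Type*} [LieRing g] [LieAlgebra K g]
    {gL : Type*} [LieRing gL] [LieAlgebra K gL]
    (b : Module.Basis (Fin n) K g) (bL : Module.Basis (Fin n ⊕ Fin n × Fin n) K gL)
    (C : Fin n → Fin n → Fin n → K)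
    (hg : ∀ μ ν, ⁅b μ, b ν⁆ = ∑ α, C μ ν α • b α)

/-- The underlying linear map `gL → End (U(g))`. -/
noncomputable def fEnd : gL →ₗ[K] Module.End K (UniversalEnvelopingAlgebra K g) :=
  bL.constr K (Sum.elim (fun μ => LinearMap.mulLeft K (ι K (b μ)))
    (fun p => Smap b C hg p.1 p.2))

theorem fEnd_inl (μ : Fin n) :
    fEnd b bL C hg (bL (Sum.inl μ)) = LinearMap.mulLeft K (ι K (b μ)) := by
  rw [fEnd, bL.constr_basis]; rfl

theorem fEnd_inr (μ ν : Fin n) :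
    fEnd b bL C hg (bL (Sum.inr (μ, ν))) = Smap b C hg μ ν := by
  rw [fEnd, bL.constr_basis]; rfl

theorem fEnd_lie
    (hXX : ∀ μ ν, ⁅bL (Sum.inl μ), bL (Sum.inl ν)⁆ = ∑ α, C μ ν α • bL (Sum.inl α))
    (hTT : ∀ μ ν α β, ⁅bL (Sum.inr (μ, ν)), bL (Sum.inr (α, β))⁆ = 0)
    (hTX : ∀ μ ν lam, ⁅bL (Sum.inr (μ, ν)), bL (Sum.inl lam)⁆
        = ∑ α, C μ lam α • bL (Sum.inr (α, ν)))
    (x y : gL) :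
    fEnd b bL C hg ⁅x, y⁆ = ⁅fEnd b bL C hg x, fEnd b bL C hg y⁆ := by
  have key : ∀ i j, fEnd b bL C hg ⁅bL i, bL j⁆
      = ⁅fEnd b bL C hg (bL i), fEnd b bL C hg (bL j)⁆ := by
    have TXcase : ∀ μ ν lam, fEnd b bL C hg ⁅bL (Sum.inr (μ, ν)), bL (Sum.inl lam)⁆
        = ⁅fEnd b bL C hg (bL (Sum.inr (μ, ν))), fEnd b bL C hg (bL (Sum.inl lam))⁆ := by
      intro μ ν lam
      rw [hTX, map_sum, fEnd_inr, fEnd_inl, LieRing.of_associative_ring_bracket]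
      ext x
      simp only [map_smul, fEnd_inr, LinearMap.sum_apply, LinearMap.smul_apply,
        LinearMap.sub_apply, Module.End.mul_apply, LinearMap.mulLeft_apply]
      rw [Smap_mulLeft]
      abel
    rintro (μ | ⟨μ, ν⟩) (lam | ⟨α, β⟩)
    · -- inl inl
      rw [hXX, map_sum, fEnd_inl, fEnd_inl, LieRing.of_associative_ring_bracket]
      ext x
      simp only [map_smul, fEnd_inl, LinearMap.sum_apply, LinearMap.smul_apply,
        LinearMap.sub_apply, Module.End.mul_apply, LinearMap.mulLeft_apply]
      have hx : ∑ α, C μ lam α • (ι K (b α) * x)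
          = (∑ α, C μ lam α • ι K (b α)) * x := by
        rw [Finset.sum_mul]
        exact Finset.sum_congr rfl fun α _ => (smul_mul_assoc _ _ _).symm
      rw [hx]
      have hb : (∑ α, C μ lam α • ι K (b α)) = ι K (b μ) * ι K (b lam) - ι K (b lam) * ι K (b μ) := by
        have h0 : (∑ α, C μ lam α • ι K (b α)) = ι K ⁅b μ, b lam⁆ := by
          rw [hg μ lam]
          simp
        rw [h0, (ι K : g →ₗ⁅K⁆ UniversalEnvelopingAlgebra K g).map_lie,
          LieRing.of_associative_ring_bracket]
      rw [hb, sub_mul, mul_assoc, mul_assoc]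
    · -- inl inr : use antisymmetry and TXcase
      have h := TXcase α β μ
      rw [← lie_skew, map_neg, h, ← lie_skew (fEnd b bL C hg (bL (Sum.inr (α, β)))), neg_neg]
    · exact TXcase μ ν lam
    · -- inr inr
      rw [hTT, map_zero, fEnd_inr, fEnd_inr, LieRing.of_associative_ring_bracket]
      ext x
      simp only [LinearMap.zero_apply, LinearMap.sub_apply, Module.End.mul_apply]
      rw [Smap_comm, sub_self]
  let B1 : gL →ₗ[K] gL →ₗ[K] Module.End K (UniversalEnvelopingAlgebra K g) :=
    LinearMap.mk₂ K (fun x y => fEnd b bL C hg ⁅x, y⁆)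
      (fun x x' y => by simp [add_lie])
      (fun r x y => by simp [smul_lie])
      (fun x y y' => by simp [lie_add])
      (fun r x y => by simp [lie_smul])
  let B2 : gL →ₗ[K] gL →ₗ[K] Module.End K (UniversalEnvelopingAlgebra K g) :=
    LinearMap.mk₂ K (fun x y => ⁅fEnd b bL C hg x, fEnd b bL C hg y⁆)
      (fun x x' y => by simp [add_lie])
      (fun r x y => by simp [smul_lie])
      (fun x y y' => by simp [lie_add])
      (fun r x y => by
        simp [LieRing.of_associative_ring_bracket, smul_sub, mul_smul_comm, smul_mul_assoc])
  have : B1 = B2 := LinearMap.ext_basis bL bL key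
  exact LinearMap.congr_fun (LinearMap.congr_fun this x) y

/-- `fEnd` as a Lie algebra morphism. -/
noncomputable def fLie
    (hXX : ∀ μ ν, ⁅bL (Sum.inl μ), bL (Sum.inl ν)⁆ = ∑ α, C μ ν α • bL (Sum.inl α))
    (hTT : ∀ μ ν α β, ⁅bL (Sum.inr (μ, ν)), bL (Sum.inr (α, β))⁆ = 0)
    (hTX : ∀ μ ν lam, ⁅bL (Sum.inr (μ, ν)), bL (Sum.inl lam)⁆
        = ∑ α, C μ lam α • bL (Sum.inr (α, ν))) :
    gL →ₗ⁅K⁆ Module.End K (UniversalEnvelopingAlgebra K g) :=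
  { fEnd b bL C hg with
    map_lie' := fun {x y} => fEnd_lie b bL C hg hXX hTT hTX x y }

end Aux7

end PortInst

/-- existence and uniqueness of the left action `▷` of `U(g^L)` on `U(g)`
with `1 ▷ X = X`, `X_μ ▷ X = X_μ X`, `T_{μν} ▷ 1 = δ_{μν}`, `(ab) ▷ X = a ▷ (b ▷ X)`,
satisfying `T_{μν} ▷ (XY) = Σ_α (T_{μα} ▷ X)(T_{αν} ▷ Y)`.  The action is encoded as an
algebra homomorphism `U(g^L) → End(U(g))`. -/
theorem stmt3 {K : Type*} [Field K] {n : ℕ}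
    {g : Type*} [LieRing g] [LieAlgebra K g] (b : Module.Basis (Fin n) K g)
    {gL : Type*} [LieRing gL] [LieAlgebra K gL]
    (bL : Module.Basis (Fin n ⊕ Fin n × Fin n) K gL)
    (C : Fin n → Fin n → Fin n → K)
    (hg : ∀ μ ν, ⁅b μ, b ν⁆ = ∑ α, C μ ν α • b α)
    (hXX : ∀ μ ν, ⁅bL (Sum.inl μ), bL (Sum.inl ν)⁆ = ∑ α, C μ ν α • bL (Sum.inl α))
    (hTT : ∀ μ ν α β, ⁅bL (Sum.inr (μ, ν)), bL (Sum.inr (α, β))⁆ = 0)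
    (hTX : ∀ μ ν lam, ⁅bL (Sum.inr (μ, ν)), bL (Sum.inl lam)⁆
        = ∑ α, C μ lam α • bL (Sum.inr (α, ν))) :
    ∃! φ : UniversalEnvelopingAlgebra K gL →ₐ[K]
        Module.End K (UniversalEnvelopingAlgebra K g),
      (∀ μ, φ (ι K (bL (Sum.inl μ))) = LinearMap.mulLeft K (ι K (b μ)))
      ∧ (∀ μ ν, φ (ι K (bL (Sum.inr (μ, ν)))) 1 = if μ = ν then 1 else 0)
      ∧ (∀ μ ν (x y : UniversalEnvelopingAlgebra K g),
          φ (ι K (bL (Sum.inr (μ, ν)))) (x * y)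
            = ∑ α, φ (ι K (bL (Sum.inr (μ, α)))) x * φ (ι K (bL (Sum.inr (α, ν)))) y) := by
  classical
  letI : LieRing (UniversalEnvelopingAlgebra K gL) := LieRing.ofAssociativeRing
  letI : LieRing (Module.End K (UniversalEnvelopingAlgebra K g)) := LieRing.ofAssociativeRing
  set φ₀ : UniversalEnvelopingAlgebra K gL →ₐ[K]
      Module.End K (UniversalEnvelopingAlgebra K g) :=
    UniversalEnvelopingAlgebra.lift K (fLie b bL C hg hXX hTT hTX) with hφ₀
  have key : ∀ z, φ₀ (ι K z) = fEnd b bL C hg z := fun z => by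
    rw [hφ₀, UniversalEnvelopingAlgebra.lift_ι_apply]; rfl
  have P1 : ∀ μ, φ₀ (ι K (bL (Sum.inl μ))) = LinearMap.mulLeft K (ι K (b μ)) := by
    intro μ; rw [key, fEnd_inl]
  have P1' : ∀ μ ν, φ₀ (ι K (bL (Sum.inr (μ, ν)))) = Smap b C hg μ ν := by
    intro μ ν; rw [key, fEnd_inr]
  have P2 : ∀ μ ν, φ₀ (ι K (bL (Sum.inr (μ, ν)))) 1 = if μ = ν then 1 else 0 := by
    intro μ ν; rw [P1', Smap_one]
  have P3 : ∀ μ ν (x y : UniversalEnvelopingAlgebra K g),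
      φ₀ (ι K (bL (Sum.inr (μ, ν)))) (x * y)
        = ∑ α, φ₀ (ι K (bL (Sum.inr (μ, α)))) x * φ₀ (ι K (bL (Sum.inr (α, ν)))) y := by
    intro μ ν x y
    simp only [P1']
    exact Smap_mul b C hg μ ν x y
  have act_basis : ∀ (χ : UniversalEnvelopingAlgebra K gL →ₐ[K]
        Module.End K (UniversalEnvelopingAlgebra K g)),
      (∀ μ, χ (ι K (bL (Sum.inl μ))) = LinearMap.mulLeft K (ι K (b μ))) →
      (∀ μ ν, χ (ι K (bL (Sum.inr (μ, ν)))) 1 = if μ = ν then 1 else 0) →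
      ∀ μ ν lam, χ (ι K (bL (Sum.inr (μ, ν)))) (ι K (b lam))
        = (if μ = ν then ι K (b lam) else 0) + C μ lam ν • 1 := by
    intro χ h1 h2 μ ν lam
    have hrel : ι K (bL (Sum.inr (μ, ν))) * ι K (bL (Sum.inl lam))
        = ι K (bL (Sum.inl lam)) * ι K (bL (Sum.inr (μ, ν)))
          + ∑ α, C μ lam α • ι K (bL (Sum.inr (α, ν))) := by
      have h := (ι K : gL →ₗ⁅K⁆ UniversalEnvelopingAlgebra K gL).map_lie
        (x := bL (Sum.inr (μ, ν))) (y := bL (Sum.inl lam))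
      rw [hTX μ ν lam, LieRing.of_associative_ring_bracket] at h
      have h' : ι K (bL (Sum.inr (μ, ν))) * ι K (bL (Sum.inl lam))
          - ι K (bL (Sum.inl lam)) * ι K (bL (Sum.inr (μ, ν)))
          = ∑ α, C μ lam α • ι K (bL (Sum.inr (α, ν))) := by
        rw [← h]; simp
      rw [sub_eq_iff_eq_add.mp h', add_comm]
    have happ := congrArg χ hrel
    simp only [map_mul, map_add, map_sum, map_smul] at happ
    have hev := LinearMap.congr_fun happ 1
    simp only [Module.End.mul_apply, LinearMap.add_apply, LinearMap.sum_apply, h1, h2,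
      LinearMap.mulLeft_apply, mul_one, map_smul, LinearMap.smul_apply] at hev
    rw [hev]
    simp [Finset.sum_ite_eq', mul_ite, mul_one, mul_zero, smul_ite]
  refine ⟨φ₀, ⟨P1, P2, P3⟩, ?_⟩
  rintro ψ ⟨Q1, Q2, Q3⟩
  have hT : ∀ (x : UniversalEnvelopingAlgebra K g), ∀ μ ν,
      ψ (ι K (bL (Sum.inr (μ, ν)))) x = φ₀ (ι K (bL (Sum.inr (μ, ν)))) x := by
    intro x
    induction x using uea_induction with
    | halg r =>
      intro μ ν
      rw [Algebra.algebraMap_eq_smul_one, map_smul, map_smul, Q2, P2]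
    | hι x =>
      intro μ ν
      have base : ∀ lam, ψ (ι K (bL (Sum.inr (μ, ν)))) (ι K (b lam))
          = φ₀ (ι K (bL (Sum.inr (μ, ν)))) (ι K (b lam)) := by
        intro lam
        rw [act_basis ψ Q1 Q2, act_basis φ₀ P1 P2]
      calc ψ (ι K (bL (Sum.inr (μ, ν)))) (ι K x)
          = ∑ lam, b.repr x lam • ψ (ι K (bL (Sum.inr (μ, ν)))) (ι K (b lam)) := by
            conv_lhs => rw [← b.sum_repr x]
            simp [map_sum, -UniversalEnvelopingAlgebra.ι_apply, -Module.Basis.sum_repr]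
        _ = ∑ lam, b.repr x lam • φ₀ (ι K (bL (Sum.inr (μ, ν)))) (ι K (b lam)) := by
            exact Finset.sum_congr rfl fun lam _ => by rw [base lam]
        _ = φ₀ (ι K (bL (Sum.inr (μ, ν)))) (ι K x) := by
            conv_rhs => rw [← b.sum_repr x]
            simp [map_sum, -UniversalEnvelopingAlgebra.ι_apply, -Module.Basis.sum_repr]
    | hmul a c iha ihc =>
      intro μ ν
      rw [Q3, P3]
      exact Finset.sum_congr rfl fun α _ => by rw [iha μ α, ihc α ν]
    | hadd a c iha ihc =>
      intro μ ν
      rw [map_add, map_add, iha μ ν, ihc μ ν]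
  have hbasis : ∀ i, ψ (ι K (bL i)) = φ₀ (ι K (bL i)) := by
    rintro (μ | ⟨μ, ν⟩)
    · rw [Q1, P1]
    · exact LinearMap.ext fun x => hT x μ ν
  apply UniversalEnvelopingAlgebra.hom_ext
  apply LieHom.ext
  intro z
  show ψ (ι K z) = φ₀ (ι K z)
  calc ψ (ι K z) = ∑ i, bL.repr z i • ψ (ι K (bL i)) := by
        conv_lhs => rw [← bL.sum_repr z]
        simp [map_sum, -UniversalEnvelopingAlgebra.ι_apply, -Module.Basis.sum_repr]
    _ = ∑ i, bL.repr z i • φ₀ (ι K (bL i)) := by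
        exact Finset.sum_congr rfl fun i _ => by rw [hbasis i]
    _ = φ₀ (ι K z) := by
        conv_rhs => rw [← bL.sum_repr z]
        simp [map_sum, -UniversalEnvelopingAlgebra.ι_apply, -Module.Basis.sum_repr]
end

section
/- For any monomial X = X_{μ1}···X_{μk} in U(g) ⊂ U(g^L), shifting X_μ to the far right yields X_μ · X = Σ_α (T_{μα} ▷ X) · X_α, where ▷ is the left action of U(g^L) on U(g). -/
open UniversalEnvelopingAlgebra

/-- for any monomial `X = X_{μ1}⋯X_{μk}` in `U(g)`, shifting `X_μ` to the far
right gives `X_μ X = Σ_α (T_{μα} ▷ X) X_α`, where `▷` is the left action of `U(g^L)` on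
`U(g)` (encoded by an algebra map `φ` with its defining properties). -/
theorem stmt5 {K : Type*} [Field K] {n : ℕ}
    {g : Type*} [LieRing g] [LieAlgebra K g] (b : Module.Basis (Fin n) K g)
    {gL : Type*} [LieRing gL] [LieAlgebra K gL]
    (bL : Module.Basis (Fin n ⊕ Fin n × Fin n) K gL)
    (C : Fin n → Fin n → Fin n → K)
    (hg : ∀ μ ν, ⁅b μ, b ν⁆ = ∑ α, C μ ν α • b α)
    (hXX : ∀ μ ν, ⁅bL (Sum.inl μ), bL (Sum.inl ν)⁆ = ∑ α, C μ ν α • bL (Sum.inl α))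
    (hTT : ∀ μ ν α β, ⁅bL (Sum.inr (μ, ν)), bL (Sum.inr (α, β))⁆ = 0)
    (hTX : ∀ μ ν lam, ⁅bL (Sum.inr (μ, ν)), bL (Sum.inl lam)⁆
        = ∑ α, C μ lam α • bL (Sum.inr (α, ν)))
    (φ : UniversalEnvelopingAlgebra K gL →ₐ[K]
        Module.End K (UniversalEnvelopingAlgebra K g))
    (hφX : ∀ μ, φ (ι K (bL (Sum.inl μ))) = LinearMap.mulLeft K (ι K (b μ)))
    (hφT1 : ∀ μ ν, φ (ι K (bL (Sum.inr (μ, ν)))) 1 = if μ = ν then 1 else 0)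
    (hφTmul : ∀ μ ν (x y : UniversalEnvelopingAlgebra K g),
        φ (ι K (bL (Sum.inr (μ, ν)))) (x * y)
          = ∑ α, φ (ι K (bL (Sum.inr (μ, α)))) x * φ (ι K (bL (Sum.inr (α, ν)))) y) :
    ∀ (μ : Fin n) (l : List (Fin n)),
      ι K (b μ) * (l.map fun i => ι K (b i)).prod
        = ∑ α, φ (ι K (bL (Sum.inr (μ, α)))) ((l.map fun i => ι K (b i)).prod)
            * ι K (b α) := by

  intro μ l
  induction l generalizing μ with
  | nil =>
      simp only [List.map_nil, List.prod_nil, mul_one, hφT1, ite_mul, one_mul, zero_mul,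
        Finset.sum_ite_eq, Finset.mem_univ, if_true]
  | cons lam rest ih =>
      set P : UniversalEnvelopingAlgebra K g := (rest.map fun i => ι K (b i)).prod with hP
      have hmulP : (((lam :: rest).map fun i => ι K (b i)).prod) = ι K (b lam) * P := by
        simp [hP]
      rw [hmulP]
      -- key1: action of T on a single generator
      have key1 : ∀ μ γ lam, φ (ι K (bL (Sum.inr (μ, γ)))) (ι K (b lam))
          = (if μ = γ then ι K (b lam) else 0) + C μ lam γ • 1 := by
        intro μ γ lam
        have hsum : (ι K) (∑ α, C μ lam α • bL (Sum.inr (α, γ)))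
            = ∑ α, C μ lam α • (ι K) (bL (Sum.inr (α, γ))) := by
          rw [map_sum]
          simp
        have h := congrArg (fun z => φ (ι K z) (1 : UniversalEnvelopingAlgebra K g))
          (hTX μ γ lam)
        simp only [LieHom.map_lie, Ring.lie_def, hsum, map_sub, map_mul, map_sum, map_smul,
          LinearMap.sub_apply, Module.End.mul_apply, LinearMap.sum_apply,
          LinearMap.smul_apply, hφX, LinearMap.mulLeft_apply, hφT1, mul_one,
          smul_ite, smul_zero] at h
        rw [Finset.sum_ite_eq' Finset.univ γ
          (fun α => C μ lam α • (1:UniversalEnvelopingAlgebra K g))] at h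
        simp only [Finset.mem_univ, if_true] at h
        rcases eq_or_ne μ γ with hmg | hmg
        · simp only [hmg, if_true, mul_one] at h ⊢
          exact sub_eq_iff_eq_add'.mp h
        · simp only [hmg, if_false, mul_zero, sub_zero, zero_add] at h ⊢
          exact h
      -- key2: action of T on ι (b lam) * P
      have key2 : ∀ μ α, φ (ι K (bL (Sum.inr (μ, α)))) (ι K (b lam) * P)
          = ι K (b lam) * φ (ι K (bL (Sum.inr (μ, α)))) P
            + ∑ γ, C μ lam γ • φ (ι K (bL (Sum.inr (γ, α)))) P := by
        intro μ α
        rw [hφTmul]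
        simp only [key1, add_mul, ite_mul, zero_mul, smul_mul_assoc, one_mul,
          Finset.sum_add_distrib]
        rw [Finset.sum_ite_eq Finset.univ μ
          (fun γ => ι K (b lam) * φ (ι K (bL (Sum.inr (γ, α)))) P)]
        simp
      -- commutation of generators
      have comm : ι K (b μ) * ι K (b lam)
          = ι K (b lam) * ι K (b μ) + ∑ β, C μ lam β • ι K (b β) := by
        have hsum : (ι K) (∑ α, C μ lam α • b α) = ∑ α, C μ lam α • (ι K) (b α) := by
          rw [map_sum]
          simp
        have h := congrArg (ι K (L := g)) (hg μ lam)
        simp only [LieHom.map_lie, Ring.lie_def, hsum] at h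
        exact sub_eq_iff_eq_add'.mp h
      calc ι K (b μ) * (ι K (b lam) * P)
          = ι K (b lam) * (ι K (b μ) * P) + ∑ β, C μ lam β • (ι K (b β) * P) := by
            rw [← mul_assoc, comm, add_mul, Finset.sum_mul, mul_assoc]
            simp [smul_mul_assoc]
        _ = ι K (b lam) * (∑ α, φ (ι K (bL (Sum.inr (μ, α)))) P * ι K (b α))
              + ∑ β, C μ lam β • (∑ α, φ (ι K (bL (Sum.inr (β, α)))) P * ι K (b α)) := by
            rw [ih μ]
            congr 1
            exact Finset.sum_congr rfl fun β _ => by rw [ih β]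
        _ = ∑ α, φ (ι K (bL (Sum.inr (μ, α)))) (ι K (b lam) * P) * ι K (b α) := by
            simp only [key2, add_mul, Finset.sum_mul, smul_mul_assoc,
              Finset.sum_add_distrib, Finset.mul_sum, Finset.smul_sum, mul_assoc]
            rw [Finset.sum_comm]
end

section
/- In the associative algebra H generated by X_μ, T_{μν}, T^{-1}_{μν} with relations [X_μ,X_ν] = Σ_α C_{μνα}X_α, [T_{μν},X_λ] = Σ_α C_{μλα}T_{αν}, [T^{-1}_{μν},X_λ] = Σ_α C_{λαν}T^{-1}_{μα}, commuting T's and T^{-1}'s, and Σ_α T^{-1}_{μα}T_{αν} = Σ_α T_{μα}T^{-1}_{αν} = δ_{μν}, the elements Y_μ := Σ_α X_α T^{-1}_{μα} commute with all X_ν: [X_μ, Y_ν] = 0. -/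
/-- in the algebra `H`, the elements `Y_μ = Σ_α X_α T⁻¹_{μα}` commute with
all `X_ν`. -/
theorem stmt6 {K : Type*} [Field K] {n : ℕ} {H : Type*} [Ring H] [Algebra K H]
    (X : Fin n → H) (T Tinv : Fin n → Fin n → H) (C : Fin n → Fin n → Fin n → K)
    (hXX : ∀ μ ν, ⁅X μ, X ν⁆ = ∑ α, C μ ν α • X α)
    (hTT : ∀ μ ν α β, ⁅T μ ν, T α β⁆ = 0)
    (hTiTi : ∀ μ ν α β, ⁅Tinv μ ν, Tinv α β⁆ = 0)
    (hTX : ∀ μ ν lam, ⁅T μ ν, X lam⁆ = ∑ α, C μ lam α • T α ν)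
    (hTiX : ∀ μ ν lam, ⁅Tinv μ ν, X lam⁆ = ∑ α, C lam α ν • Tinv μ α)
    (hTiT : ∀ μ ν, ∑ α, Tinv μ α * T α ν = if μ = ν then 1 else 0)
    (hTTi : ∀ μ ν, ∑ α, T μ α * Tinv α ν = if μ = ν then 1 else 0) :
    ∀ μ ν, ⁅X μ, ∑ α, X α * Tinv ν α⁆ = 0 := by
  intro μ ν
  have hXTi : ∀ α, ⁅X μ, Tinv ν α⁆ = -∑ β, C μ β α • Tinv ν β := by
    intro α
    rw [Ring.lie_def, ← neg_sub, ← Ring.lie_def, hTiX]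
  have lsum : ⁅X μ, ∑ α, X α * Tinv ν α⁆ = ∑ α, ⁅X μ, X α * Tinv ν α⁆ := by
    simp [Ring.lie_def, Finset.mul_sum, Finset.sum_mul, Finset.sum_sub_distrib]
  rw [lsum]
  have key : ∀ α, ⁅X μ, X α * Tinv ν α⁆
      = (∑ β, C μ α β • (X β * Tinv ν α)) - ∑ β, C μ β α • (X α * Tinv ν β) := by
    intro α
    have h1 := hXX μ α
    have h2 := hXTi α
    rw [Ring.lie_def] at h1 h2 ⊢
    have hsplit : X μ * (X α * Tinv ν α) - X α * Tinv ν α * X μ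
        = (X μ * X α - X α * X μ) * Tinv ν α
          + X α * (X μ * Tinv ν α - Tinv ν α * X μ) := by noncomm_ring
    rw [hsplit, h1, h2, mul_neg, Finset.sum_mul, Finset.mul_sum, sub_eq_add_neg]
    simp [smul_mul_assoc, mul_smul_comm]
  simp only [key, Finset.sum_sub_distrib]
  rw [Finset.sum_comm]
  exact sub_self _
end

section
/- Let C be the n×n matrix with entries C_{μν} = Σ_α C_{μαν} ∂_α in the (semicompleted) Weyl algebra, where C_{μαν} are structure constants of a Lie algebra. Then for all m ≥ 1 and indices μ, ν, λ: Σ_α (C^m)_{μα} C_{αλν} = Σ_{α,β} [Σ_{k=0}^{m} binom(m,k) (-1)^k (C^k)_{λα} (C^{m-k})_{βν}] C_{μαβ}. -/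
open MvPolynomial

lemma pascal_sum9 {R : Type*} [CommRing R] (f g : ℕ → R) (m : ℕ) :
    (∑ k ∈ Finset.range (m+1), (m.choose k : R) * (-1)^k * f k * g (m+1-k))
      - ∑ k ∈ Finset.range (m+1), (m.choose k : R) * (-1)^k * f (k+1) * g (m-k)
    = ∑ k ∈ Finset.range (m+2), ((m+1).choose k : R) * (-1)^k * f k * g (m+1-k) := by
  rw [Finset.sum_range_succ' (fun k => ((m+1).choose k : R) * (-1)^k * f k * g (m+1-k)) (m+1),
      Finset.sum_range_succ' (fun k => ((m).choose k : R) * (-1)^k * f k * g (m+1-k)) m]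
  have hext : ∑ k ∈ Finset.range m, ((m.choose (k+1) : R) * (-1)^(k+1) * f (k+1) * g (m+1-(k+1)))
      = ∑ k ∈ Finset.range (m+1), ((m.choose (k+1) : R) * (-1)^(k+1) * f (k+1) * g (m+1-(k+1))) := by
    rw [Finset.sum_range_succ]
    simp [Nat.choose_succ_self]
  rw [hext, add_sub_right_comm]
  congr 1
  · rw [← Finset.sum_sub_distrib]
    refine Finset.sum_congr rfl fun k _ => ?_
    simp only [Nat.succ_sub_succ, Nat.choose_succ_succ]
    push_cast
    ring
  · simp

/-- for the matrix `C_{μν} = Σ_α C_{μαν}∂_α` built from structure constants,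
`Σ_α (C^m)_{μα} C_{αλν} = Σ_{α,β} [Σ_{k=0}^m binom(m,k)(-1)^k (C^k)_{λα}(C^{m-k})_{βν}] C_{μαβ}`
for all `m ≥ 1`. -/
theorem stmt9 {K : Type*} [Field K] {n : ℕ} (c : Fin n → Fin n → Fin n → K)
    (hanti : ∀ μ ν α, c μ ν α = - c ν μ α)
    (hjac : ∀ μ α β ν, ∑ ρ, (c μ α ρ * c ρ β ν + c α β ρ * c ρ μ ν + c β μ ρ * c ρ α ν) = 0)
    (M : Matrix (Fin n) (Fin n) (MvPolynomial (Fin n) K))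
    (hM : ∀ μ ν, M μ ν = ∑ α, MvPolynomial.C (c μ α ν) * MvPolynomial.X α) :
    ∀ (m : ℕ), 1 ≤ m → ∀ μ ν lam,
      ∑ α, (M ^ m) μ α * MvPolynomial.C (c α lam ν)
        = ∑ α, ∑ β,
            (∑ k ∈ Finset.range (m + 1),
              (m.choose k : MvPolynomial (Fin n) K) * (-1) ^ k
                * (M ^ k) lam α * (M ^ (m - k)) β ν)
            * MvPolynomial.C (c μ α β) := by
  -- Jacobi identity, rearranged using antisymmetry
  have hs : ∀ μ ρ lam ν, ∑ s, c μ ρ s * c s lam ν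
      = (∑ s, c μ lam s * c s ρ ν) - ∑ s, c μ s ν * c lam ρ s := by
    intro μ ρ lam ν
    have h0 := hjac μ ρ lam ν
    have h1 : ∑ s, (c μ ρ s * c s lam ν - ((c μ lam s * c s ρ ν) - c μ s ν * c lam ρ s)) = 0 := by
      rw [← h0]
      refine Finset.sum_congr rfl fun s _ => ?_
      rw [hanti lam μ s, hanti s μ ν, hanti ρ lam s]
      ring
    rw [Finset.sum_sub_distrib, sub_eq_zero, Finset.sum_sub_distrib] at h1
    exact h1
  have canon : ∀ (w : Fin n → Fin n → K), ∑ ρ, C (∑ α, w ρ α) * X ρ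
      = ∑ α, ∑ ρ, C (w ρ α) * X ρ := by
    intro w
    rw [Finset.sum_comm]
    exact Finset.sum_congr rfl fun ρ _ => by rw [map_sum, Finset.sum_mul]
  -- the key first-order identity
  have hbase : ∀ μ lam ν, ∑ α, M μ α * C (c α lam ν)
      = (∑ β, C (c μ lam β) * M β ν) - ∑ α, C (c μ α ν) * M lam α := by
    intro μ lam ν
    calc ∑ α, M μ α * C (c α lam ν)
        = ∑ α, ∑ ρ, C (c μ ρ α * c α lam ν) * X ρ := by
          refine Finset.sum_congr rfl fun α _ => ?_
          rw [hM, Finset.sum_mul]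
          exact Finset.sum_congr rfl fun ρ _ => by rw [map_mul]; ring
      _ = ∑ ρ, C (∑ α, c μ ρ α * c α lam ν) * X ρ := (canon _).symm
      _ = ∑ ρ, C ((∑ s, c μ lam s * c s ρ ν) - ∑ s, c μ s ν * c lam ρ s) * X ρ :=
          Finset.sum_congr rfl fun ρ _ => by rw [hs]
      _ = (∑ ρ, C (∑ s, c μ lam s * c s ρ ν) * X ρ)
            - ∑ ρ, C (∑ s, c μ s ν * c lam ρ s) * X ρ := by
          rw [← Finset.sum_sub_distrib]
          exact Finset.sum_congr rfl fun ρ _ => by rw [map_sub, sub_mul]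
      _ = (∑ β, C (c μ lam β) * M β ν) - ∑ α, C (c μ α ν) * M lam α := by
          rw [canon (fun ρ s => c μ lam s * c s ρ ν), canon (fun ρ s => c μ s ν * c lam ρ s)]
          congr 1
          · refine Finset.sum_congr rfl fun β _ => ?_
            rw [hM, Finset.mul_sum]
            exact Finset.sum_congr rfl fun ρ _ => by rw [map_mul]; ring
          · refine Finset.sum_congr rfl fun α _ => ?_
            rw [hM, Finset.mul_sum]
            exact Finset.sum_congr rfl fun ρ _ => by rw [map_mul]; ring
  have hpow1 : ∀ (j : ℕ) (x y : Fin n), (M^(j+1)) x y = ∑ γ, M x γ * (M^j) γ y := by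
    intro j x y; rw [pow_succ', Matrix.mul_apply]
  have hpow2 : ∀ (j : ℕ) (x y : Fin n), (M^(j+1)) x y = ∑ γ, (M^j) x γ * M γ y := by
    intro j x y; rw [pow_succ, Matrix.mul_apply]
  intro m hm
  induction m, hm using Nat.le_induction with
  | base =>
    intro μ ν lam
    have hone : ∀ (x y : Fin n), (M ^ (0:ℕ)) x y = if x = y then (1:MvPolynomial (Fin n) K) else 0 := by
      intro x y; rw [pow_zero]; exact Matrix.one_apply
    have hk : ∀ α β : Fin n, (∑ k ∈ Finset.range (1+1), ((1:ℕ).choose k : MvPolynomial (Fin n) K) * (-1)^k * (M^k) lam α * (M^(1-k)) β ν)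
        = (if lam = α then (1:MvPolynomial (Fin n) K) else 0) * M β ν - M lam α * (if β = ν then 1 else 0) := by
      intro α β
      rw [Finset.sum_range_succ, Finset.sum_range_one]
      norm_num [hone, Matrix.one_apply]
      split_ifs <;> ring
    simp only [pow_one]
    rw [hbase μ lam ν]
    simp only [hk, sub_mul, Finset.sum_sub_distrib, ite_mul, one_mul, zero_mul, mul_ite,
      mul_zero, mul_one]
    congr 1
    · rw [Finset.sum_comm]
      simp only [Finset.sum_ite_eq, Finset.mem_univ, if_true]
      exact Finset.sum_congr rfl fun β _ => mul_comm _ _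
    · simp only [Finset.sum_ite_eq', Finset.mem_univ, if_true]
      exact Finset.sum_congr rfl fun α _ => mul_comm _ _
  | succ m hm ih =>
    intro μ ν lam
    have hP : ∑ α, ∑ β, (∑ k ∈ Finset.range (m + 1), (m.choose k : MvPolynomial (Fin n) K) * (-1) ^ k * (M ^ k) lam α * (M ^ (m - k)) β ν) * (∑ b, C (c μ α b) * M b β)
        = ∑ α, ∑ b, (∑ k ∈ Finset.range (m + 1), (m.choose k : MvPolynomial (Fin n) K) * (-1) ^ k * (M ^ k) lam α * (M ^ (m + 1 - k)) b ν) * C (c μ α b) := by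
      refine Finset.sum_congr rfl fun α _ => ?_
      calc ∑ β, (∑ k ∈ Finset.range (m + 1), (m.choose k : MvPolynomial (Fin n) K) * (-1) ^ k * (M ^ k) lam α * (M ^ (m - k)) β ν) * (∑ b, C (c μ α b) * M b β)
          = ∑ b, (∑ β, (∑ k ∈ Finset.range (m + 1), (m.choose k : MvPolynomial (Fin n) K) * (-1) ^ k * (M ^ k) lam α * (M ^ (m - k)) β ν) * M b β) * C (c μ α b) := by
            simp only [Finset.mul_sum]
            rw [Finset.sum_comm]
            refine Finset.sum_congr rfl fun b _ => ?_
            rw [Finset.sum_mul]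
            exact Finset.sum_congr rfl fun β _ => by ring
        _ = ∑ b, (∑ k ∈ Finset.range (m + 1), (m.choose k : MvPolynomial (Fin n) K) * (-1) ^ k * (M ^ k) lam α * (M ^ (m + 1 - k)) b ν) * C (c μ α b) := by
            refine Finset.sum_congr rfl fun b _ => ?_
            congr 1
            calc ∑ β, (∑ k ∈ Finset.range (m + 1), (m.choose k : MvPolynomial (Fin n) K) * (-1) ^ k * (M ^ k) lam α * (M ^ (m - k)) β ν) * M b β
                = ∑ k ∈ Finset.range (m + 1), ∑ β, (m.choose k : MvPolynomial (Fin n) K) * (-1) ^ k * (M ^ k) lam α * (M ^ (m - k)) β ν * M b β := by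
                  simp only [Finset.sum_mul]
                  exact Finset.sum_comm
              _ = ∑ k ∈ Finset.range (m + 1), (m.choose k : MvPolynomial (Fin n) K) * (-1) ^ k * (M ^ k) lam α * (M ^ (m + 1 - k)) b ν := by
                  refine Finset.sum_congr rfl fun k hk => ?_
                  have hkm : m + 1 - k = (m - k) + 1 := by
                    have := Finset.mem_range.mp hk; omega
                  rw [hkm, hpow1 (m - k) b ν, Finset.mul_sum]
                  exact Finset.sum_congr rfl fun β _ => by ring
    have hQ : ∑ α, ∑ β, (∑ k ∈ Finset.range (m + 1), (m.choose k : MvPolynomial (Fin n) K) * (-1) ^ k * (M ^ k) lam α * (M ^ (m - k)) β ν) * (∑ a, C (c μ a β) * M α a)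
        = ∑ a, ∑ β, (∑ k ∈ Finset.range (m + 1), (m.choose k : MvPolynomial (Fin n) K) * (-1) ^ k * (M ^ (k + 1)) lam a * (M ^ (m - k)) β ν) * C (c μ a β) := by
      rw [Finset.sum_comm]
      calc ∑ β, ∑ α, (∑ k ∈ Finset.range (m + 1), (m.choose k : MvPolynomial (Fin n) K) * (-1) ^ k * (M ^ k) lam α * (M ^ (m - k)) β ν) * (∑ a, C (c μ a β) * M α a)
          = ∑ β, ∑ a, (∑ α, (∑ k ∈ Finset.range (m + 1), (m.choose k : MvPolynomial (Fin n) K) * (-1) ^ k * (M ^ k) lam α * (M ^ (m - k)) β ν) * M α a) * C (c μ a β) := by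
            refine Finset.sum_congr rfl fun β _ => ?_
            simp only [Finset.mul_sum]
            rw [Finset.sum_comm]
            refine Finset.sum_congr rfl fun a _ => ?_
            rw [Finset.sum_mul]
            exact Finset.sum_congr rfl fun α _ => by ring
        _ = ∑ β, ∑ a, (∑ k ∈ Finset.range (m + 1), (m.choose k : MvPolynomial (Fin n) K) * (-1) ^ k * (M ^ (k + 1)) lam a * (M ^ (m - k)) β ν) * C (c μ a β) := by
            refine Finset.sum_congr rfl fun β _ => Finset.sum_congr rfl fun a _ => ?_
            congr 1
            calc ∑ α, (∑ k ∈ Finset.range (m + 1), (m.choose k : MvPolynomial (Fin n) K) * (-1) ^ k * (M ^ k) lam α * (M ^ (m - k)) β ν) * M α a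
                = ∑ k ∈ Finset.range (m + 1), ∑ α, (m.choose k : MvPolynomial (Fin n) K) * (-1) ^ k * (M ^ k) lam α * (M ^ (m - k)) β ν * M α a := by
                  simp only [Finset.sum_mul]
                  exact Finset.sum_comm
              _ = ∑ k ∈ Finset.range (m + 1), (m.choose k : MvPolynomial (Fin n) K) * (-1) ^ k * (M ^ (k + 1)) lam a * (M ^ (m - k)) β ν := by
                  refine Finset.sum_congr rfl fun k hk => ?_
                  rw [hpow2 k lam a]
                  simp only [Finset.mul_sum, Finset.sum_mul]
                  exact Finset.sum_congr rfl fun α _ => by ring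
        _ = ∑ a, ∑ β, (∑ k ∈ Finset.range (m + 1), (m.choose k : MvPolynomial (Fin n) K) * (-1) ^ k * (M ^ (k + 1)) lam a * (M ^ (m - k)) β ν) * C (c μ a β) := Finset.sum_comm
    calc ∑ α, (M ^ (m + 1)) μ α * C (c α lam ν)
        = ∑ γ, M μ γ * ∑ α, (M ^ m) γ α * C (c α lam ν) := by
          simp only [hpow1 m, Finset.sum_mul, Finset.mul_sum, mul_assoc]
          exact Finset.sum_comm
      _ = ∑ γ, M μ γ * ∑ α, ∑ β, (∑ k ∈ Finset.range (m + 1), (m.choose k : MvPolynomial (Fin n) K) * (-1) ^ k * (M ^ k) lam α * (M ^ (m - k)) β ν) * C (c γ α β) :=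
          Finset.sum_congr rfl fun γ _ => by rw [ih γ ν lam]
      _ = ∑ α, ∑ β, (∑ k ∈ Finset.range (m + 1), (m.choose k : MvPolynomial (Fin n) K) * (-1) ^ k * (M ^ k) lam α * (M ^ (m - k)) β ν) * ∑ γ, M μ γ * C (c γ α β) := by
          simp only [Finset.mul_sum]
          rw [Finset.sum_comm]
          refine Finset.sum_congr rfl fun α _ => ?_
          rw [Finset.sum_comm]
          refine Finset.sum_congr rfl fun β _ => Finset.sum_congr rfl fun γ _ => by ring
      _ = ∑ α, ∑ β, (∑ k ∈ Finset.range (m + 1), (m.choose k : MvPolynomial (Fin n) K) * (-1) ^ k * (M ^ k) lam α * (M ^ (m - k)) β ν) * ((∑ b, C (c μ α b) * M b β) - ∑ a, C (c μ a β) * M α a) :=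
          Finset.sum_congr rfl fun α _ => Finset.sum_congr rfl fun β _ => by rw [hbase μ α β]
      _ = (∑ α, ∑ β, (∑ k ∈ Finset.range (m + 1), (m.choose k : MvPolynomial (Fin n) K) * (-1) ^ k * (M ^ k) lam α * (M ^ (m - k)) β ν) * (∑ b, C (c μ α b) * M b β))
            - ∑ α, ∑ β, (∑ k ∈ Finset.range (m + 1), (m.choose k : MvPolynomial (Fin n) K) * (-1) ^ k * (M ^ k) lam α * (M ^ (m - k)) β ν) * (∑ a, C (c μ a β) * M α a) := by
          simp only [mul_sub, Finset.sum_sub_distrib]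
      _ = (∑ α, ∑ β, (∑ k ∈ Finset.range (m + 1), (m.choose k : MvPolynomial (Fin n) K) * (-1) ^ k * (M ^ k) lam α * (M ^ (m + 1 - k)) β ν) * C (c μ α β))
            - ∑ α, ∑ β, (∑ k ∈ Finset.range (m + 1), (m.choose k : MvPolynomial (Fin n) K) * (-1) ^ k * (M ^ (k + 1)) lam α * (M ^ (m - k)) β ν) * C (c μ α β) := by rw [hP, hQ]
      _ = ∑ α, ∑ β,
            (∑ k ∈ Finset.range (m + 1 + 1),
              ((m + 1).choose k : MvPolynomial (Fin n) K) * (-1) ^ k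
                * (M ^ k) lam α * (M ^ (m + 1 - k)) β ν)
            * C (c μ α β) := by
          rw [← Finset.sum_sub_distrib]
          refine Finset.sum_congr rfl fun α _ => ?_
          rw [← Finset.sum_sub_distrib]
          refine Finset.sum_congr rfl fun β _ => ?_
          rw [← sub_mul]
          congr 1
          exact pascal_sum9 (fun k => (M ^ k) lam α) (fun j => (M ^ j) β ν) m
end

section
/- With C the matrix C_{μν} = Σ_α C_{μαν}∂_α over the polynomial ring in commuting variables ∂_1,...,∂_n, the formal partial derivative satisfies ∂/∂∂_λ (C^m)_{μν} = Σ_{α,β} C_{μαβ} [Σ_{k=1}^{m} binom(m,k) (-1)^{k-1} (C^{k-1})_{λα} (C^{m-k})_{βν}] for all m ≥ 1. -/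
open MvPolynomial Finset

namespace Stmt10Aux

variable {K : Type*} [Field K] {n : ℕ}

noncomputable def Amat (c : Fin n → Fin n → Fin n → K) (l : Fin n) :
    Matrix (Fin n) (Fin n) (MvPolynomial (Fin n) K) :=
  Matrix.of fun μ ν => MvPolynomial.C (c μ l ν)

theorem hcommAux (c : Fin n → Fin n → Fin n → K)
    (hanti : ∀ μ ν α, c μ ν α = - c ν μ α)
    (hjac : ∀ μ α β ν, ∑ ρ, (c μ α ρ * c ρ β ν + c α β ρ * c ρ μ ν + c β μ ρ * c ρ α ν) = 0)
    (M : Matrix (Fin n) (Fin n) (MvPolynomial (Fin n) K))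
    (hM : ∀ μ ν, M μ ν = ∑ α, MvPolynomial.C (c μ α ν) * MvPolynomial.X α) (l : Fin n) :
    Amat c l * M = M * Amat c l + ∑ ρ, M l ρ • Amat c ρ := by
  refine Matrix.ext fun μ ν => ?_
  have keyK : ∀ α : Fin n, ∑ ρ, c μ l ρ * c ρ α ν
      = ∑ ρ, (c μ α ρ * c ρ l ν + c l α ρ * c μ ρ ν) := by
    intro α
    have h2 : ∑ ρ, ((c μ α ρ * c ρ l ν + c l α ρ * c μ ρ ν) - c μ l ρ * c ρ α ν) = 0 := by
      rw [← hjac μ α l ν]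
      refine Finset.sum_congr rfl fun ρ _ => ?_
      rw [hanti α l, hanti ρ μ, hanti l μ]; ring
    rw [Finset.sum_sub_distrib] at h2
    exact (sub_eq_zero.mp h2).symm
  simp only [Matrix.add_apply, Matrix.mul_apply, Matrix.sum_apply, Matrix.smul_apply,
    Amat, Matrix.of_apply, hM, smul_eq_mul, Finset.mul_sum, Finset.sum_mul]
  rw [Finset.sum_comm]
  conv_rhs => rw [Finset.sum_comm, Finset.sum_comm (f := fun x i => MvPolynomial.C (c l i x) * MvPolynomial.X i * MvPolynomial.C (c μ x ν))]
  rw [← Finset.sum_add_distrib]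
  refine Finset.sum_congr rfl fun α _ => ?_
  rw [← Finset.sum_add_distrib]
  trans (MvPolynomial.C (∑ ρ, c μ l ρ * c ρ α ν) * MvPolynomial.X α)
  · rw [map_sum, Finset.sum_mul]
    exact Finset.sum_congr rfl fun ρ _ => by rw [C_mul]; ring
  · rw [keyK α, map_sum, Finset.sum_mul]
    exact Finset.sum_congr rfl fun ρ _ => by rw [C_add, C_mul, C_mul]; ring


theorem mapMul (lam : Fin n) (P Q : Matrix (Fin n) (Fin n) (MvPolynomial (Fin n) K)) :
    (P * Q).map (pderiv lam) = P.map (pderiv lam) * Q + P * Q.map (pderiv lam) := by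
  refine Matrix.ext fun μ ν => ?_
  simp only [Matrix.map_apply, Matrix.mul_apply, Matrix.add_apply, map_sum, pderiv_mul]
  rw [← Finset.sum_add_distrib]

theorem mapM (c : Fin n → Fin n → Fin n → K)
    (M : Matrix (Fin n) (Fin n) (MvPolynomial (Fin n) K))
    (hM : ∀ μ ν, M μ ν = ∑ α, MvPolynomial.C (c μ α ν) * MvPolynomial.X α) (lam : Fin n) :
    M.map (pderiv lam) = Amat c lam := by
  refine Matrix.ext fun μ ν => ?_
  simp only [Matrix.map_apply, hM, map_sum, Amat, Matrix.of_apply]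
  rw [Finset.sum_eq_single lam]
  · simp [pderiv_X_self]
  · intro b _ hb
    simp [pderiv_C_mul, pderiv_X_of_ne hb]
  · simp

theorem powMap (c : Fin n → Fin n → Fin n → K)
    (M : Matrix (Fin n) (Fin n) (MvPolynomial (Fin n) K))
    (hM : ∀ μ ν, M μ ν = ∑ α, MvPolynomial.C (c μ α ν) * MvPolynomial.X α) (lam : Fin n) :
    ∀ m : ℕ, (M ^ (m + 1)).map (pderiv lam)
      = ∑ i ∈ Finset.range (m + 1), M ^ i * Amat c lam * M ^ (m - i) := by
  intro m
  induction m with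
  | zero => simp [mapM c M hM lam]
  | succ m ih =>
    rw [pow_succ' M (m + 1), mapMul, ih, mapM c M hM lam]
    conv_rhs => rw [Finset.sum_range_succ']
    simp only [Nat.succ_sub_succ_eq_sub, pow_zero, one_mul, Nat.sub_zero]
    rw [Finset.mul_sum, add_comm]
    congr 1
    refine Finset.sum_congr rfl fun i hi => ?_
    rw [pow_succ' M i, mul_assoc, mul_assoc, ← mul_assoc]


theorem tri {β : Type*} [AddCommMonoid β] (m : ℕ) (f : ℕ → ℕ → β) :
    ∑ i ∈ Finset.range m, ∑ k ∈ Finset.range (i + 1), f i k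
      = ∑ k ∈ Finset.range m, ∑ i ∈ Finset.Ico k m, f i k := by
  have h := Finset.sum_Ico_Ico_comm 0 m (fun k i => f i k)
  simp only [← Finset.range_eq_Ico] at h
  exact h.symm

theorem binom_abel {R : Type*} {N : Type*} [CommRing R] [AddCommGroup N] [Module R N]
    (i : ℕ) (F : ℕ → N) :
    ∑ k ∈ Finset.range (i + 2), (((i + 1).choose k : R) * (-1) ^ k) • F k
    = ∑ k ∈ Finset.range (i + 1), ((i.choose k : R) * (-1) ^ k) • F k
      - ∑ k ∈ Finset.range (i + 1), ((i.choose k : R) * (-1) ^ k) • F (k + 1) := by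
  rw [Finset.sum_range_succ']
  have key : ∀ k : ℕ, (((i + 1).choose (k + 1) : R) * (-1) ^ (k + 1)) • F (k + 1)
      = ((i.choose (k + 1) : R) * (-1) ^ (k + 1)) • F (k + 1)
        - ((i.choose k : R) * (-1) ^ k) • F (k + 1) := by
    intro k
    rw [Nat.choose_succ_succ, Nat.cast_add, ← sub_smul]
    congr 1
    ring
  rw [Finset.sum_congr rfl fun k _ => key k, Finset.sum_sub_distrib]
  have h1 : ∑ k ∈ Finset.range (i + 1), ((i.choose (k + 1) : R) * (-1) ^ (k + 1)) • F (k + 1)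
      = ∑ k ∈ Finset.range i, ((i.choose (k + 1) : R) * (-1) ^ (k + 1)) • F (k + 1) := by
    rw [Finset.sum_range_succ, Nat.choose_succ_self]
    simp
  have h2 : ∑ k ∈ Finset.range (i + 1), ((i.choose k : R) * (-1) ^ k) • F k
      = ∑ k ∈ Finset.range i, ((i.choose (k + 1) : R) * (-1) ^ (k + 1)) • F (k + 1)
        + ((i.choose 0 : R) * (-1) ^ 0) • F 0 := Finset.sum_range_succ' _ _
  rw [h1, h2]
  simp only [Nat.choose_zero_right, Nat.cast_one, pow_zero, mul_one]
  abel


theorem hkey (c : Fin n → Fin n → Fin n → K)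
    (hanti : ∀ μ ν α, c μ ν α = - c ν μ α)
    (hjac : ∀ μ α β ν, ∑ ρ, (c μ α ρ * c ρ β ν + c α β ρ * c ρ μ ν + c β μ ρ * c ρ α ν) = 0)
    (M : Matrix (Fin n) (Fin n) (MvPolynomial (Fin n) K))
    (hM : ∀ μ ν, M μ ν = ∑ α, MvPolynomial.C (c μ α ν) * MvPolynomial.X α) (l : Fin n) :
    ∀ i : ℕ, M ^ i * Amat c l
      = ∑ k ∈ Finset.range (i + 1), ((i.choose k : MvPolynomial (Fin n) K) * (-1) ^ k)
          • ∑ α, (M ^ k) l α • (Amat c α * M ^ (i - k)) := by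
  have hstep : ∀ (α : Fin n) (j : ℕ), M * (Amat c α * M ^ j)
      = Amat c α * M ^ (j + 1) - ∑ ρ, M α ρ • (Amat c ρ * M ^ j) := by
    intro α j
    have h := hcommAux c hanti hjac M hM α
    have h2 : M * Amat c α = Amat c α * M - ∑ ρ, M α ρ • Amat c ρ := by rw [h]; abel
    calc M * (Amat c α * M ^ j) = M * Amat c α * M ^ j := by rw [mul_assoc]
      _ = (Amat c α * M - ∑ ρ, M α ρ • Amat c ρ) * M ^ j := by rw [h2]
      _ = _ := by
          rw [sub_mul, Finset.sum_mul, mul_assoc, ← pow_succ']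
          congr 1
          exact Finset.sum_congr rfl fun ρ _ => smul_mul_assoc _ _ _
  intro i
  induction i with
  | zero =>
    simp only [pow_zero, one_mul, zero_add, Finset.range_one, Finset.sum_singleton,
      Nat.choose_self, Nat.cast_one, mul_one, one_smul, Matrix.one_apply, Nat.sub_self]
    rw [Finset.sum_eq_single l]
    · simp
    · intro b _ hb; simp [(Ne.symm hb)]
    · simp
  | succ i ih =>
    have e1 : M ^ (i + 1) * Amat c l = M * (M ^ i * Amat c l) := by
      rw [pow_succ', mul_assoc]
    rw [e1, ih, Finset.mul_sum]
    have e2 : ∀ k ∈ Finset.range (i + 1),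
        M * (((i.choose k : MvPolynomial (Fin n) K) * (-1) ^ k)
            • ∑ α, (M ^ k) l α • (Amat c α * M ^ (i - k)))
        = ((i.choose k : MvPolynomial (Fin n) K) * (-1) ^ k)
            • (∑ α, (M ^ k) l α • (Amat c α * M ^ (i + 1 - k))
              - ∑ α, (M ^ (k + 1)) l α • (Amat c α * M ^ (i - k))) := by
      intro k hk
      have hki : k ≤ i := Nat.lt_succ_iff.mp (Finset.mem_range.mp hk)
      have hik : i - k + 1 = i + 1 - k := by omega
      rw [mul_smul_comm, Finset.mul_sum]
      congr 1
      calc ∑ α, M * ((M ^ k) l α • (Amat c α * M ^ (i - k)))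
          = ∑ α, (M ^ k) l α • (Amat c α * M ^ (i + 1 - k)
              - ∑ ρ, M α ρ • (Amat c ρ * M ^ (i - k))) := by
            refine Finset.sum_congr rfl fun α _ => ?_
            rw [mul_smul_comm, hstep α (i - k), hik]
        _ = ∑ α, (M ^ k) l α • (Amat c α * M ^ (i + 1 - k))
            - ∑ α, (M ^ k) l α • ∑ ρ, M α ρ • (Amat c ρ * M ^ (i - k)) := by
            rw [← Finset.sum_sub_distrib]
            exact Finset.sum_congr rfl fun α _ => smul_sub _ _ _
        _ = _ := by
            congr 1
            calc ∑ α, (M ^ k) l α • ∑ ρ, M α ρ • (Amat c ρ * M ^ (i - k))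
                = ∑ α, ∑ ρ, ((M ^ k) l α * M α ρ) • (Amat c ρ * M ^ (i - k)) := by
                  refine Finset.sum_congr rfl fun α _ => ?_
                  rw [Finset.smul_sum]
                  exact Finset.sum_congr rfl fun ρ _ => (smul_smul _ _ _)
              _ = ∑ ρ, (∑ α, (M ^ k) l α * M α ρ) • (Amat c ρ * M ^ (i - k)) := by
                  rw [Finset.sum_comm]
                  exact Finset.sum_congr rfl fun ρ _ => (Finset.sum_smul).symm
              _ = ∑ ρ, (M ^ (k + 1)) l ρ • (Amat c ρ * M ^ (i - k)) := by
                  refine Finset.sum_congr rfl fun ρ _ => ?_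
                  rw [pow_succ, Matrix.mul_apply]
    rw [Finset.sum_congr rfl e2]
    simp only [smul_sub]
    rw [Finset.sum_sub_distrib]
    have hb := binom_abel (R := MvPolynomial (Fin n) K) i
      (fun k => ∑ α, (M ^ k) l α • (Amat c α * M ^ (i + 1 - k)))
    rw [hb]
    refine congrArg (fun x => _ - x) ?_
    refine Finset.sum_congr rfl fun k hk => ?_
    congr 1
    refine Finset.sum_congr rfl fun α _ => ?_
    have hik2 : i + 1 - (k + 1) = i - k := by omega
    rw [hik2]

end Stmt10Aux

open Stmt10Aux

open MvPolynomial

/-- the formal partial derivative of the entries of `C^m` satisfies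
`∂/∂∂_λ (C^m)_{μν} = Σ_{α,β} C_{μαβ} [Σ_{k=1}^m binom(m,k)(-1)^{k-1}(C^{k-1})_{λα}(C^{m-k})_{βν}]`. -/
theorem stmt10 {K : Type*} [Field K] {n : ℕ} (c : Fin n → Fin n → Fin n → K)
    (hanti : ∀ μ ν α, c μ ν α = - c ν μ α)
    (hjac : ∀ μ α β ν, ∑ ρ, (c μ α ρ * c ρ β ν + c α β ρ * c ρ μ ν + c β μ ρ * c ρ α ν) = 0)
    (M : Matrix (Fin n) (Fin n) (MvPolynomial (Fin n) K))
    (hM : ∀ μ ν, M μ ν = ∑ α, MvPolynomial.C (c μ α ν) * MvPolynomial.X α) :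
    ∀ (m : ℕ), 1 ≤ m → ∀ μ ν lam,
      MvPolynomial.pderiv lam ((M ^ m) μ ν)
        = ∑ α, ∑ β, MvPolynomial.C (c μ α β)
            * (∑ k ∈ Finset.Icc 1 m,
                (m.choose k : MvPolynomial (Fin n) K) * (-1) ^ (k - 1)
                  * (M ^ (k - 1)) lam α * (M ^ (m - k)) β ν) := by
  intro m hm μ ν lam
  obtain ⟨m', rfl⟩ : ∃ m', m = m' + 1 := ⟨m - 1, by omega⟩
  have main : (M ^ (m' + 1)).map (pderiv lam)
      = ∑ k ∈ Finset.range (m' + 1),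
          (((m' + 1).choose (k + 1) : MvPolynomial (Fin n) K) * (-1) ^ k)
            • ∑ α, (M ^ k) lam α • (Amat c α * M ^ (m' - k)) := by
    rw [powMap c M hM lam m']
    have e1 : ∀ i ∈ Finset.range (m' + 1), M ^ i * Amat c lam * M ^ (m' - i)
        = ∑ k ∈ Finset.range (i + 1), ((i.choose k : MvPolynomial (Fin n) K) * (-1) ^ k)
            • ∑ α, (M ^ k) lam α • (Amat c α * M ^ (m' - k)) := by
      intro i hi
      have him : i ≤ m' := Nat.lt_succ_iff.mp (Finset.mem_range.mp hi)
      rw [hkey c hanti hjac M hM lam i, Finset.sum_mul]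
      refine Finset.sum_congr rfl fun k hk => ?_
      have hki : k ≤ i := Nat.lt_succ_iff.mp (Finset.mem_range.mp hk)
      rw [smul_mul_assoc, Finset.sum_mul]
      congr 1
      refine Finset.sum_congr rfl fun α _ => ?_
      rw [smul_mul_assoc, mul_assoc, ← pow_add]
      have hx : i - k + (m' - i) = m' - k := by omega
      rw [hx]
    rw [Finset.sum_congr rfl e1, tri]
    refine Finset.sum_congr rfl fun k hk => ?_
    rw [← Finset.sum_smul]
    congr 1
    rw [← Finset.sum_mul]
    congr 1
    rw [← Nat.cast_sum]
    congr 1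
    rw [Finset.Ico_add_one_right_eq_Icc, Nat.sum_Icc_choose]
  have lhs : MvPolynomial.pderiv lam ((M ^ (m' + 1)) μ ν)
      = ((M ^ (m' + 1)).map (pderiv lam)) μ ν := rfl
  rw [lhs, main]
  have e2 : ∀ (α β : Fin n),
      ∑ k ∈ Finset.Icc 1 (m' + 1), ((m' + 1).choose k : MvPolynomial (Fin n) K)
          * (-1) ^ (k - 1) * (M ^ (k - 1)) lam α * (M ^ (m' + 1 - k)) β ν
      = ∑ k ∈ Finset.range (m' + 1), ((m' + 1).choose (k + 1) : MvPolynomial (Fin n) K)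
          * (-1) ^ k * (M ^ k) lam α * (M ^ (m' - k)) β ν := by
    intro α β
    rw [← Finset.Ico_add_one_right_eq_Icc, Finset.sum_Ico_eq_sum_range]
    refine Finset.sum_congr (by congr 1) fun k _ => ?_
    have h1 : 1 + k = k + 1 := by omega
    have h2 : m' + 1 - (k + 1) = m' - k := by omega
    rw [h1, Nat.add_sub_cancel, h2]
  trans ∑ k ∈ Finset.range (m' + 1), ∑ α, ∑ β,
      MvPolynomial.C (c μ α β) * (((m' + 1).choose (k + 1) : MvPolynomial (Fin n) K)
        * (-1) ^ k * (M ^ k) lam α * (M ^ (m' - k)) β ν)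
  · simp only [Matrix.sum_apply, Matrix.smul_apply, smul_eq_mul, Matrix.mul_apply,
      Amat, Matrix.of_apply, Finset.mul_sum]
    refine Finset.sum_congr rfl fun k _ => Finset.sum_congr rfl fun α _ =>
      Finset.sum_congr rfl fun β _ => by ring
  · rw [Finset.sum_comm]
    refine Finset.sum_congr rfl fun α _ => ?_
    rw [Finset.sum_comm]
    refine Finset.sum_congr rfl fun β _ => ?_
    rw [e2 α β, Finset.mul_sum]
end

section
/- With C the matrix C_{μν} = Σ_α C_{μαν}∂_α built from Lie algebra structure constants, one has Σ_{α,β,ρ} C_{βρα} (e^C)_{ακ} (e^{-C})_{μρ} (e^{-C})_{νβ} = -C_{μνκ} for all indices μ, ν, κ. -/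
noncomputable section

/-- total degree of a monomial exponent. -/
def deg {n : ℕ} (d : Fin n →₀ ℕ) : ℕ := d.sum fun _ k => k

/-- the matrix power series `Σ_m a_m M^m` (entrywise; well defined since the entries of
`M` below have zero constant term, so the coefficient of `d` only involves `m ≤ deg d`). -/
def matF {K : Type*} [Field K] {n : ℕ} (a : ℕ → K)
    (M : Matrix (Fin n) (Fin n) (MvPowerSeries (Fin n) K)) :
    Matrix (Fin n) (Fin n) (MvPowerSeries (Fin n) K) :=
  fun μ ν d => ∑ m ∈ Finset.range (deg d + 1), a m * MvPowerSeries.coeff d ((M ^ m) μ ν)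

/-- the matrix `C_{μν} = Σ_α C_{μαν} ∂_α`. -/
def Cmat {K : Type*} [Field K] {n : ℕ} (c : Fin n → Fin n → Fin n → K) :
    Matrix (Fin n) (Fin n) (MvPowerSeries (Fin n) K) :=
  fun μ ν => ∑ α, (MvPowerSeries.C : K →+* MvPowerSeries (Fin n) K) (c μ α ν) * MvPowerSeries.X α

namespace Stmt13Aux

open Finset MvPowerSeries

section Helpers
variable {M : Type*} [AddCommMonoid M]

lemma sum3_rot {ι : Type*} [Fintype ι] (F : ι → ι → ι → M) :
    (∑ a, ∑ b, ∑ c, F a b c) = ∑ b, ∑ c, ∑ a, F a b c := by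
  rw [Finset.sum_comm]
  exact Finset.sum_congr rfl fun b _ => Finset.sum_comm

lemma sum4_A {ι : Type*} [Fintype ι] (F : ι → ι → ι → ι → M) :
    (∑ a, ∑ b, ∑ c, ∑ d, F a b c d) = ∑ a, ∑ c, ∑ d, ∑ b, F a b c d := by
  refine Finset.sum_congr rfl fun a _ => ?_
  rw [Finset.sum_comm]
  exact Finset.sum_congr rfl fun c _ => Finset.sum_comm

lemma sum4_B {ι : Type*} [Fintype ι] (F : ι → ι → ι → ι → M) :
    (∑ a, ∑ b, ∑ c, ∑ d, F a b c d) = ∑ c, ∑ b, ∑ d, ∑ a, F a b c d :=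
  calc (∑ a, ∑ b, ∑ c, ∑ d, F a b c d)
      = ∑ b, ∑ a, ∑ c, ∑ d, F a b c d := Finset.sum_comm
    _ = ∑ b, ∑ c, ∑ d, ∑ a, F a b c d := Finset.sum_congr rfl fun b _ =>
        (calc (∑ a, ∑ c, ∑ d, F a b c d)
            = ∑ c, ∑ a, ∑ d, F a b c d := Finset.sum_comm
          _ = ∑ c, ∑ d, ∑ a, F a b c d := Finset.sum_congr rfl fun c _ => Finset.sum_comm)
    _ = ∑ c, ∑ b, ∑ d, ∑ a, F a b c d := Finset.sum_comm

lemma sum4_C {ι : Type*} [Fintype ι] (F : ι → ι → ι → ι → M) :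
    (∑ a, ∑ b, ∑ c, ∑ d, F a b c d) = ∑ a, ∑ c, ∑ b, ∑ d, F a b c d :=
  Finset.sum_congr rfl fun a _ => Finset.sum_comm

lemma sum4_D {ι : Type*} [Fintype ι] (F : ι → ι → ι → ι → M) :
    (∑ a, ∑ b, ∑ c, ∑ d, F a b c d) = ∑ c, ∑ b, ∑ a, ∑ d, F a b c d :=
  calc (∑ a, ∑ b, ∑ c, ∑ d, F a b c d)
      = ∑ b, ∑ a, ∑ c, ∑ d, F a b c d := Finset.sum_comm
    _ = ∑ b, ∑ c, ∑ a, ∑ d, F a b c d := Finset.sum_congr rfl fun b _ => Finset.sum_comm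
    _ = ∑ c, ∑ b, ∑ a, ∑ d, F a b c d := Finset.sum_comm

lemma pack3 {ι : Type*} (t : Finset ι) (f : ι → ι → ι → M) :
    ∑ q ∈ t ×ˢ t ×ˢ t, f q.1 q.2.1 q.2.2 = ∑ x ∈ t, ∑ y ∈ t, ∑ z ∈ t, f x y z := by
  rw [Finset.sum_product]
  exact Finset.sum_congr rfl fun x _ => Finset.sum_product _ _ _

lemma sum33 {ι κι : Type*} (s : Finset ι) (t : Finset κι)
    (F : ι → ι → ι → κι → κι → κι → M) :
    (∑ a ∈ s, ∑ b ∈ s, ∑ c ∈ s, ∑ x ∈ t, ∑ y ∈ t, ∑ z ∈ t, F a b c x y z)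
      = ∑ x ∈ t, ∑ y ∈ t, ∑ z ∈ t, ∑ a ∈ s, ∑ b ∈ s, ∑ c ∈ s, F a b c x y z := by
  simp only [← pack3]
  exact Finset.sum_comm
end Helpers

variable {K : Type*} [Field K] {n : ℕ}

lemma deg_add (a b : Fin n →₀ ℕ) : deg (a + b) = deg a + deg b :=
  Finsupp.sum_add_index' (fun _ => rfl) (fun _ _ _ => rfl)

lemma deg_zero : deg (0 : Fin n →₀ ℕ) = 0 := by simp [deg]

lemma deg_eq_zero {d : Fin n →₀ ℕ} (h : deg d = 0) : d = 0 := by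
  rw [deg, Finsupp.sum] at h
  ext a
  by_cases ha : d a = 0
  · simp [ha]
  · exact absurd (Finset.sum_eq_zero_iff.1 h a (Finsupp.mem_support_iff.2 ha)) ha

lemma coeff_Cmat (c : Fin n → Fin n → Fin n → K) (μ ν : Fin n) {d : Fin n →₀ ℕ}
    (h : deg d ≠ 1) : MvPowerSeries.coeff d (Cmat c μ ν) = 0 := by
  classical
  rw [Cmat, map_sum]
  refine Finset.sum_eq_zero fun α _ => ?_
  rw [coeff_C_mul, coeff_X, if_neg, mul_zero]
  rintro rfl
  exact h (by simp [deg, Finsupp.sum_single_index])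

lemma coeff_Cmat_pow (c : Fin n → Fin n → Fin n → K) (m : ℕ) (μ ν : Fin n) {d : Fin n →₀ ℕ}
    (h : deg d ≠ m) : MvPowerSeries.coeff d ((Cmat c ^ m) μ ν) = 0 := by
  classical
  induction m generalizing μ ν d with
  | zero =>
    rw [pow_zero, Matrix.one_apply]
    split
    · rw [coeff_one, if_neg]
      rintro rfl
      exact h deg_zero
    · simp
  | succ m ih =>
    rw [pow_succ, Matrix.mul_apply, map_sum]
    refine Finset.sum_eq_zero fun σ _ => ?_
    rw [coeff_mul]
    refine Finset.sum_eq_zero fun p hp => ?_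
    rw [Finset.HasAntidiagonal.mem_antidiagonal] at hp
    by_cases h2 : deg p.2 = 1
    · have h1 : deg p.1 ≠ m := by
        intro h1
        exact h (by rw [← hp, deg_add, h1, h2])
      rw [ih _ _ h1, zero_mul]
    · rw [coeff_Cmat c _ _ h2, mul_zero]

lemma sum_coeff_pow_collapse (c : Fin n → Fin n → Fin n → K) (a : ℕ → K) (μ ν : Fin n)
    (d : Fin n →₀ ℕ) {N : ℕ} (hN : deg d < N) :
    ∑ m ∈ Finset.range N, a m * MvPowerSeries.coeff d ((Cmat c ^ m) μ ν)
      = a (deg d) * MvPowerSeries.coeff d ((Cmat c ^ (deg d)) μ ν) := by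
  refine Finset.sum_eq_single (deg d) (fun m _ hm => ?_)
      (fun hm => absurd (Finset.mem_range.2 hN) hm)
  rw [coeff_Cmat_pow c m μ ν (Ne.symm hm), mul_zero]

lemma coeff_matF (c : Fin n → Fin n → Fin n → K) (a : ℕ → K) (μ ν : Fin n) (d : Fin n →₀ ℕ) :
    MvPowerSeries.coeff d (matF a (Cmat c) μ ν)
      = a (deg d) * MvPowerSeries.coeff d ((Cmat c ^ (deg d)) μ ν) := by
  rw [MvPowerSeries.coeff_apply, matF]
  exact sum_coeff_pow_collapse c a μ ν d (Nat.lt_succ_self _)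

lemma coeff_matF_trunc (c : Fin n → Fin n → Fin n → K) (a : ℕ → K) (μ ν : Fin n)
    {d : Fin n →₀ ℕ} {N : ℕ} (hN : deg d < N) :
    MvPowerSeries.coeff d (matF a (Cmat c) μ ν)
      = MvPowerSeries.coeff d
          (∑ m ∈ Finset.range N, (MvPowerSeries.C : K →+* MvPowerSeries (Fin n) K) (a m) * (Cmat c ^ m) μ ν) := by
  rw [coeff_matF, map_sum]
  simp only [coeff_C_mul]
  rw [sum_coeff_pow_collapse c a μ ν d hN]

lemma coeff_mul_congr {f f' g g' : MvPowerSeries (Fin n) K} {d : Fin n →₀ ℕ}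
    (hf : ∀ e : Fin n →₀ ℕ, deg e ≤ deg d → MvPowerSeries.coeff e f = MvPowerSeries.coeff e f')
    (hg : ∀ e : Fin n →₀ ℕ, deg e ≤ deg d → MvPowerSeries.coeff e g = MvPowerSeries.coeff e g') :
    MvPowerSeries.coeff d (f * g) = MvPowerSeries.coeff d (f' * g') := by
  classical
  rw [coeff_mul, coeff_mul]
  refine Finset.sum_congr rfl fun p hp => ?_
  rw [Finset.HasAntidiagonal.mem_antidiagonal] at hp
  have hdeg : deg p.1 + deg p.2 = deg d := by rw [← deg_add, hp]
  rw [hf p.1 (by omega), hg p.2 (by omega)]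


lemma jac' (c : Fin n → Fin n → Fin n → K)
    (hanti : ∀ μ ν α, c μ ν α = - c ν μ α)
    (hjac : ∀ μ α β ν, ∑ ρ, (c μ α ρ * c ρ β ν + c α β ρ * c ρ μ ν + c β μ ρ * c ρ α ν) = 0)
    (β ρ lam κ : Fin n) :
    ∑ α, c β ρ α * c α lam κ
      = (∑ σ, c β σ κ * c ρ lam σ) + ∑ σ, c σ ρ κ * c β lam σ := by
  have h := hjac β ρ lam κ
  have h1 : (∑ σ, (c β ρ σ * c σ lam κ + c ρ lam σ * c σ β κ + c lam β σ * c σ ρ κ))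
      = (∑ α, c β ρ α * c α lam κ) - (∑ σ, c β σ κ * c ρ lam σ)
        - ∑ σ, c σ ρ κ * c β lam σ := by
    rw [← Finset.sum_sub_distrib, ← Finset.sum_sub_distrib]
    refine Finset.sum_congr rfl fun σ _ => ?_
    rw [hanti σ β κ, hanti lam β σ]
    ring
  rw [h] at h1
  linear_combination -h1

lemma hform (f : Fin n → K) (g : Fin n → Fin n → K) :
    (∑ α, (MvPowerSeries.C : K →+* MvPowerSeries (Fin n) K) (f α)
        * ∑ lam, (MvPowerSeries.C : K →+* MvPowerSeries (Fin n) K) (g α lam) * MvPowerSeries.X lam)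
      = ∑ lam, (MvPowerSeries.C : K →+* MvPowerSeries (Fin n) K) (∑ α, f α * g α lam) * MvPowerSeries.X lam := by
  simp only [Finset.mul_sum, ← mul_assoc, ← map_mul]
  rw [Finset.sum_comm]
  simp only [← Finset.sum_mul, ← map_sum]

lemma keyI (c : Fin n → Fin n → Fin n → K)
    (hanti : ∀ μ ν α, c μ ν α = - c ν μ α)
    (hjac : ∀ μ α β ν, ∑ ρ, (c μ α ρ * c ρ β ν + c α β ρ * c ρ μ ν + c β μ ρ * c ρ α ν) = 0)
    (β ρ κ : Fin n) :
    (∑ α, (MvPowerSeries.C : K →+* MvPowerSeries (Fin n) K) (c β ρ α) * Cmat c α κ)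
      = (∑ σ, (MvPowerSeries.C : K →+* MvPowerSeries (Fin n) K) (c β σ κ) * Cmat c ρ σ)
        + ∑ σ, (MvPowerSeries.C : K →+* MvPowerSeries (Fin n) K) (c σ ρ κ) * Cmat c β σ := by
  calc (∑ α, (MvPowerSeries.C : K →+* MvPowerSeries (Fin n) K) (c β ρ α) * Cmat c α κ)
      = ∑ lam, (MvPowerSeries.C : K →+* MvPowerSeries (Fin n) K) (∑ α, c β ρ α * c α lam κ) * MvPowerSeries.X lam :=
        hform _ _
    _ = ∑ lam, (MvPowerSeries.C : K →+* MvPowerSeries (Fin n) K)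
          ((∑ σ, c β σ κ * c ρ lam σ) + ∑ σ, c σ ρ κ * c β lam σ) * MvPowerSeries.X lam :=
        Finset.sum_congr rfl fun lam _ => by rw [jac' c hanti hjac β ρ lam κ]
    _ = (∑ lam, (MvPowerSeries.C : K →+* MvPowerSeries (Fin n) K) (∑ σ, c β σ κ * c ρ lam σ) * MvPowerSeries.X lam)
        + ∑ lam, (MvPowerSeries.C : K →+* MvPowerSeries (Fin n) K) (∑ σ, c σ ρ κ * c β lam σ) * MvPowerSeries.X lam := by
        simp only [map_add, add_mul, Finset.sum_add_distrib]
    _ = (∑ σ, (MvPowerSeries.C : K →+* MvPowerSeries (Fin n) K) (c β σ κ) * Cmat c ρ σ)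
        + ∑ σ, (MvPowerSeries.C : K →+* MvPowerSeries (Fin n) K) (c σ ρ κ) * Cmat c β σ := by
        rw [← hform (fun σ => c β σ κ) (fun σ lam => c ρ lam σ),
          ← hform (fun σ => c σ ρ κ) (fun σ lam => c β lam σ)]
        rfl


/-- the basic trilinear quantity. -/
def tE (c : Fin n → Fin n → Fin n → K) (μ ν κ : Fin n) (k m2 m3 : ℕ) :
    MvPowerSeries (Fin n) K :=
  ∑ β, ∑ ρ, (∑ α, (MvPowerSeries.C : K →+* MvPowerSeries (Fin n) K) (c β ρ α) * (Cmat c ^ k) α κ)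
      * ((Cmat c ^ m2) μ ρ * (Cmat c ^ m3) ν β)

lemma inner1 (c : Fin n → Fin n → Fin n → K)
    (hanti : ∀ μ ν α, c μ ν α = - c ν μ α)
    (hjac : ∀ μ α β ν, ∑ ρ, (c μ α ρ * c ρ β ν + c α β ρ * c ρ μ ν + c β μ ρ * c ρ α ν) = 0)
    (κ β ρ : Fin n) (k : ℕ) :
    (∑ α, (MvPowerSeries.C : K →+* MvPowerSeries (Fin n) K) (c β ρ α) * (Cmat c ^ (k+1)) α κ)
      = (∑ τ, ∑ σ, (MvPowerSeries.C : K →+* MvPowerSeries (Fin n) K) (c β τ σ) * (Cmat c ^ k) σ κ * Cmat c ρ τ)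
        + ∑ τ, ∑ σ, (MvPowerSeries.C : K →+* MvPowerSeries (Fin n) K) (c τ ρ σ) * (Cmat c ^ k) σ κ * Cmat c β τ := by
  calc (∑ α, (MvPowerSeries.C : K →+* MvPowerSeries (Fin n) K) (c β ρ α) * (Cmat c ^ (k+1)) α κ)
      = ∑ α, (MvPowerSeries.C : K →+* MvPowerSeries (Fin n) K) (c β ρ α) * ∑ σ, Cmat c α σ * (Cmat c ^ k) σ κ := by
        simp only [pow_succ', Matrix.mul_apply]
    _ = ∑ σ, (∑ α, (MvPowerSeries.C : K →+* MvPowerSeries (Fin n) K) (c β ρ α) * Cmat c α σ) * (Cmat c ^ k) σ κ := by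
        simp only [Finset.mul_sum, Finset.sum_mul]
        rw [Finset.sum_comm]
        exact Finset.sum_congr rfl fun σ _ => Finset.sum_congr rfl fun α _ => by ring
    _ = ∑ σ, ((∑ τ, (MvPowerSeries.C : K →+* MvPowerSeries (Fin n) K) (c β τ σ) * Cmat c ρ τ)
          + ∑ τ, (MvPowerSeries.C : K →+* MvPowerSeries (Fin n) K) (c τ ρ σ) * Cmat c β τ) * (Cmat c ^ k) σ κ :=
        Finset.sum_congr rfl fun σ _ => by rw [keyI c hanti hjac β ρ σ]
    _ = (∑ σ, ∑ τ, (MvPowerSeries.C : K →+* MvPowerSeries (Fin n) K) (c β τ σ) * (Cmat c ^ k) σ κ * Cmat c ρ τ)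
        + ∑ σ, ∑ τ, (MvPowerSeries.C : K →+* MvPowerSeries (Fin n) K) (c τ ρ σ) * (Cmat c ^ k) σ κ * Cmat c β τ := by
        rw [← Finset.sum_add_distrib]
        refine Finset.sum_congr rfl fun σ _ => ?_
        rw [add_mul, Finset.sum_mul, Finset.sum_mul]
        exact congrArg₂ (· + ·)
          (Finset.sum_congr rfl fun τ _ => by ring)
          (Finset.sum_congr rfl fun τ _ => by ring)
    _ = (∑ τ, ∑ σ, (MvPowerSeries.C : K →+* MvPowerSeries (Fin n) K) (c β τ σ) * (Cmat c ^ k) σ κ * Cmat c ρ τ)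
        + ∑ τ, ∑ σ, (MvPowerSeries.C : K →+* MvPowerSeries (Fin n) K) (c τ ρ σ) * (Cmat c ^ k) σ κ * Cmat c β τ :=
        congrArg₂ (· + ·) Finset.sum_comm Finset.sum_comm

lemma tE_succ (c : Fin n → Fin n → Fin n → K)
    (hanti : ∀ μ ν α, c μ ν α = - c ν μ α)
    (hjac : ∀ μ α β ν, ∑ ρ, (c μ α ρ * c ρ β ν + c α β ρ * c ρ μ ν + c β μ ρ * c ρ α ν) = 0)
    (μ ν κ : Fin n) (k m2 m3 : ℕ) :
    tE c μ ν κ (k+1) m2 m3 = tE c μ ν κ k (m2+1) m3 + tE c μ ν κ k m2 (m3+1) := by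
  have expand : tE c μ ν κ (k+1) m2 m3
      = (∑ β, ∑ ρ, ∑ τ, ∑ σ, (MvPowerSeries.C : K →+* MvPowerSeries (Fin n) K) (c β τ σ) * (Cmat c ^ k) σ κ
            * Cmat c ρ τ * ((Cmat c ^ m2) μ ρ * (Cmat c ^ m3) ν β))
        + ∑ β, ∑ ρ, ∑ τ, ∑ σ, (MvPowerSeries.C : K →+* MvPowerSeries (Fin n) K) (c τ ρ σ) * (Cmat c ^ k) σ κ
            * Cmat c β τ * ((Cmat c ^ m2) μ ρ * (Cmat c ^ m3) ν β) := by
    rw [tE, ← Finset.sum_add_distrib]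
    refine Finset.sum_congr rfl fun β _ => ?_
    rw [← Finset.sum_add_distrib]
    refine Finset.sum_congr rfl fun ρ _ => ?_
    rw [inner1 c hanti hjac κ β ρ k]
    simp only [add_mul, Finset.sum_mul]
  rw [expand]
  have pieceA : (∑ β, ∑ ρ, ∑ τ, ∑ σ, (MvPowerSeries.C : K →+* MvPowerSeries (Fin n) K) (c β τ σ) * (Cmat c ^ k) σ κ
        * Cmat c ρ τ * ((Cmat c ^ m2) μ ρ * (Cmat c ^ m3) ν β)) = tE c μ ν κ k (m2+1) m3 := by
    rw [tE]
    simp only [pow_succ, Matrix.mul_apply, Finset.sum_mul, Finset.mul_sum]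
    rw [sum4_C]
    exact Finset.sum_congr rfl fun β _ => Finset.sum_congr rfl fun τ _ =>
      Finset.sum_congr rfl fun ρ _ => Finset.sum_congr rfl fun σ _ => by ring
  have pieceB : (∑ β, ∑ ρ, ∑ τ, ∑ σ, (MvPowerSeries.C : K →+* MvPowerSeries (Fin n) K) (c τ ρ σ) * (Cmat c ^ k) σ κ
        * Cmat c β τ * ((Cmat c ^ m2) μ ρ * (Cmat c ^ m3) ν β)) = tE c μ ν κ k m2 (m3+1) := by
    rw [tE]
    simp only [pow_succ, Matrix.mul_apply, Finset.sum_mul, Finset.mul_sum]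
    rw [sum4_D]
    exact Finset.sum_congr rfl fun τ _ => Finset.sum_congr rfl fun ρ _ =>
      Finset.sum_congr rfl fun β _ => Finset.sum_congr rfl fun σ _ => by ring
  rw [pieceA, pieceB]


lemma coeff_tE_ne (c : Fin n → Fin n → Fin n → K) (μ ν κ : Fin n) {k m2 m3 : ℕ}
    {d : Fin n →₀ ℕ} (h : deg d ≠ k + m2 + m3) :
    MvPowerSeries.coeff d (tE c μ ν κ k m2 m3) = 0 := by
  classical
  rw [tE, map_sum]
  refine Finset.sum_eq_zero fun β _ => ?_
  rw [map_sum]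
  refine Finset.sum_eq_zero fun ρ _ => ?_
  rw [coeff_mul]
  refine Finset.sum_eq_zero fun p hp => ?_
  rw [Finset.HasAntidiagonal.mem_antidiagonal] at hp
  by_cases h1 : deg p.1 = k
  · rw [coeff_mul]
    have hz : (∑ q ∈ Finset.HasAntidiagonal.antidiagonal p.2,
        MvPowerSeries.coeff q.1 ((Cmat c ^ m2) μ ρ)
          * MvPowerSeries.coeff q.2 ((Cmat c ^ m3) ν β)) = 0 := by
      refine Finset.sum_eq_zero fun q hq => ?_
      rw [Finset.HasAntidiagonal.mem_antidiagonal] at hq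
      have hd : deg d = deg p.1 + (deg q.1 + deg q.2) := by
        rw [← hp, deg_add, ← hq, deg_add]
      by_cases h2 : deg q.1 = m2
      · have h3 : deg q.2 ≠ m3 := by intro h3; exact h (by omega)
        rw [coeff_Cmat_pow c m3 ν β h3, mul_zero]
      · rw [coeff_Cmat_pow c m2 μ ρ h2, zero_mul]
    rw [hz, mul_zero]
  · have hz : MvPowerSeries.coeff p.1
        (∑ α, (MvPowerSeries.C : K →+* MvPowerSeries (Fin n) K) (c β ρ α) * (Cmat c ^ k) α κ) = 0 := by
      rw [map_sum]
      refine Finset.sum_eq_zero fun α _ => ?_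
      rw [coeff_C_mul, coeff_Cmat_pow c k α κ h1, mul_zero]
    rw [hz, zero_mul]


lemma mul_triple_sum {R : Type*} [CommRing R] {N : ℕ} (w : R) (f g h : ℕ → R) :
    w * ((∑ m ∈ Finset.range N, f m) * ((∑ m ∈ Finset.range N, g m) * (∑ m ∈ Finset.range N, h m)))
      = ∑ m1 ∈ Finset.range N, ∑ m2 ∈ Finset.range N, ∑ m3 ∈ Finset.range N,
          w * (f m1 * (g m2 * h m3)) := by
  rw [Finset.sum_mul_sum, Finset.sum_mul_sum]
  simp only [Finset.mul_sum]

lemma ring_expand (c : Fin n → Fin n → Fin n → K) (μ ν κ : Fin n) (x y z : ℕ → K) (N : ℕ) :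
    (∑ α, ∑ β, ∑ ρ, (MvPowerSeries.C : K →+* MvPowerSeries (Fin n) K) (c β ρ α) *
        ((∑ m ∈ Finset.range N, (MvPowerSeries.C : K →+* MvPowerSeries (Fin n) K) (x m) * (Cmat c ^ m) α κ) *
         ((∑ m ∈ Finset.range N, (MvPowerSeries.C : K →+* MvPowerSeries (Fin n) K) (y m) * (Cmat c ^ m) μ ρ) *
          (∑ m ∈ Finset.range N, (MvPowerSeries.C : K →+* MvPowerSeries (Fin n) K) (z m) * (Cmat c ^ m) ν β))))
    = ∑ m1 ∈ Finset.range N, ∑ m2 ∈ Finset.range N, ∑ m3 ∈ Finset.range N,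
        (MvPowerSeries.C : K →+* MvPowerSeries (Fin n) K) (x m1) * ((MvPowerSeries.C : K →+* MvPowerSeries (Fin n) K) (y m2)
          * ((MvPowerSeries.C : K →+* MvPowerSeries (Fin n) K) (z m3) * tE c μ ν κ m1 m2 m3)) := by
  have step1 : (∑ α, ∑ β, ∑ ρ, (MvPowerSeries.C : K →+* MvPowerSeries (Fin n) K) (c β ρ α) *
        ((∑ m ∈ Finset.range N, (MvPowerSeries.C : K →+* MvPowerSeries (Fin n) K) (x m) * (Cmat c ^ m) α κ) *
         ((∑ m ∈ Finset.range N, (MvPowerSeries.C : K →+* MvPowerSeries (Fin n) K) (y m) * (Cmat c ^ m) μ ρ) *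
          (∑ m ∈ Finset.range N, (MvPowerSeries.C : K →+* MvPowerSeries (Fin n) K) (z m) * (Cmat c ^ m) ν β))))
      = ∑ α, ∑ β, ∑ ρ, ∑ m1 ∈ Finset.range N, ∑ m2 ∈ Finset.range N, ∑ m3 ∈ Finset.range N,
          (MvPowerSeries.C : K →+* MvPowerSeries (Fin n) K) (c β ρ α)
            * (((MvPowerSeries.C : K →+* MvPowerSeries (Fin n) K) (x m1) * (Cmat c ^ m1) α κ)
              * (((MvPowerSeries.C : K →+* MvPowerSeries (Fin n) K) (y m2) * (Cmat c ^ m2) μ ρ)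
                * ((MvPowerSeries.C : K →+* MvPowerSeries (Fin n) K) (z m3) * (Cmat c ^ m3) ν β))) :=
    Finset.sum_congr rfl fun α _ => Finset.sum_congr rfl fun β _ =>
      Finset.sum_congr rfl fun ρ _ => mul_triple_sum _ _ _ _
  rw [step1, sum33]
  refine Finset.sum_congr rfl fun m1 _ => Finset.sum_congr rfl fun m2 _ =>
    Finset.sum_congr rfl fun m3 _ => ?_
  rw [tE]
  simp only [Finset.mul_sum, Finset.sum_mul]
  rw [sum3_rot]
  exact Finset.sum_congr rfl fun β _ => Finset.sum_congr rfl fun ρ _ =>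
    Finset.sum_congr rfl fun α _ => by ring


/-- the weighted double sum. -/
def WE (c : Fin n → Fin n → Fin n → K) (μ ν κ : Fin n) (E k : ℕ) :
    MvPowerSeries (Fin n) K :=
  ∑ m2 ∈ Finset.range (E+1),
    (MvPowerSeries.C : K →+* MvPowerSeries (Fin n) K) ((-1 : K) ^ m2 * (m2.factorial : K)⁻¹)
      * ((MvPowerSeries.C : K →+* MvPowerSeries (Fin n) K) ((-1 : K) ^ (E - m2) * ((E - m2).factorial : K)⁻¹)
          * tE c μ ν κ k m2 (E - m2))

lemma bb_succ [CharZero K] (j : ℕ) :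
    (-((j+1 : ℕ) : K)) * ((-1 : K) ^ (j+1) * (((j+1 : ℕ).factorial : K))⁻¹)
      = (-1 : K) ^ j * ((j.factorial : K))⁻¹ := by
  have h1 : (((j+1 : ℕ)).factorial : K) = ((j+1 : ℕ) : K) * (j.factorial : K) := by
    rw [Nat.factorial_succ]; push_cast; ring
  have h2 : ((j+1 : ℕ) : K) ≠ 0 := Nat.cast_ne_zero.2 (Nat.succ_ne_zero j)
  have h3 : (j.factorial : K) ≠ 0 := Nat.cast_ne_zero.2 (Nat.factorial_ne_zero j)
  have key : (((j+1 : ℕ).factorial : K))⁻¹ = (((j+1 : ℕ)) : K)⁻¹ * ((j.factorial : K))⁻¹ := by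
    rw [h1, mul_inv]
  rw [key, pow_succ]
  push_cast at h2
  field_simp

set_option maxHeartbeats 1000000 in
lemma WE_succ [CharZero K] (c : Fin n → Fin n → Fin n → K)
    (hanti : ∀ μ ν α, c μ ν α = - c ν μ α)
    (hjac : ∀ μ α β ν, ∑ ρ, (c μ α ρ * c ρ β ν + c α β ρ * c ρ μ ν + c β μ ρ * c ρ α ν) = 0)
    (μ ν κ : Fin n) (E k : ℕ) :
    WE c μ ν κ E (k+1) = (MvPowerSeries.C : K →+* MvPowerSeries (Fin n) K) (-((E+1 : ℕ) : K)) * WE c μ ν κ (E+1) k := by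
  have lhs_split : WE c μ ν κ E (k+1)
      = (∑ m2 ∈ Finset.range (E+1),
          (MvPowerSeries.C : K →+* MvPowerSeries (Fin n) K) ((-1 : K) ^ m2 * (m2.factorial : K)⁻¹)
            * ((MvPowerSeries.C : K →+* MvPowerSeries (Fin n) K) ((-1 : K) ^ (E - m2) * ((E - m2).factorial : K)⁻¹)
                * tE c μ ν κ k (m2+1) (E - m2)))
        + ∑ m2 ∈ Finset.range (E+1),
            (MvPowerSeries.C : K →+* MvPowerSeries (Fin n) K) ((-1 : K) ^ m2 * (m2.factorial : K)⁻¹)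
              * ((MvPowerSeries.C : K →+* MvPowerSeries (Fin n) K) ((-1 : K) ^ (E - m2) * ((E - m2).factorial : K)⁻¹)
                  * tE c μ ν κ k m2 ((E - m2)+1)) := by
    rw [WE, ← Finset.sum_add_distrib]
    refine Finset.sum_congr rfl fun m2 _ => ?_
    rw [tE_succ c hanti hjac μ ν κ k m2 (E - m2), mul_add, mul_add]
  rw [lhs_split, WE, Finset.mul_sum]
  have rhs_split : ∀ m2 ∈ Finset.range (E+1+1),
      (MvPowerSeries.C : K →+* MvPowerSeries (Fin n) K) (-((E+1 : ℕ) : K))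
        * ((MvPowerSeries.C : K →+* MvPowerSeries (Fin n) K) ((-1 : K) ^ m2 * (m2.factorial : K)⁻¹)
            * ((MvPowerSeries.C : K →+* MvPowerSeries (Fin n) K) ((-1 : K) ^ (E+1 - m2) * ((E+1 - m2).factorial : K)⁻¹)
                * tE c μ ν κ k m2 (E+1 - m2)))
      = ((MvPowerSeries.C : K →+* MvPowerSeries (Fin n) K) (-((m2 : ℕ) : K))
          * ((MvPowerSeries.C : K →+* MvPowerSeries (Fin n) K) ((-1 : K) ^ m2 * (m2.factorial : K)⁻¹)
              * ((MvPowerSeries.C : K →+* MvPowerSeries (Fin n) K) ((-1 : K) ^ (E+1 - m2) * ((E+1 - m2).factorial : K)⁻¹)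
                  * tE c μ ν κ k m2 (E+1 - m2))))
        + (MvPowerSeries.C : K →+* MvPowerSeries (Fin n) K) (-(((E+1 - m2 : ℕ)) : K))
            * ((MvPowerSeries.C : K →+* MvPowerSeries (Fin n) K) ((-1 : K) ^ m2 * (m2.factorial : K)⁻¹)
                * ((MvPowerSeries.C : K →+* MvPowerSeries (Fin n) K) ((-1 : K) ^ (E+1 - m2) * ((E+1 - m2).factorial : K)⁻¹)
                    * tE c μ ν κ k m2 (E+1 - m2))) := by
    intro m2 hm2
    rw [Finset.mem_range] at hm2
    have hcast : ((E+1 - m2 : ℕ) : K) = ((E+1 : ℕ) : K) - (m2 : K) := by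
      rw [Nat.cast_sub (by omega)]
    rw [← add_mul, ← map_add]
    congr 2
    rw [hcast]
    push_cast
    ring
  rw [Finset.sum_congr rfl rhs_split, Finset.sum_add_distrib]
  refine congrArg₂ (· + ·) ?_ ?_
  · -- first sum: reindex with sum_range_succ'
    conv_rhs => rw [Finset.sum_range_succ']
    have h0 : (MvPowerSeries.C : K →+* MvPowerSeries (Fin n) K) (-((0 : ℕ) : K))
        * ((MvPowerSeries.C : K →+* MvPowerSeries (Fin n) K) ((-1 : K) ^ 0 * ((0:ℕ).factorial : K)⁻¹)
            * ((MvPowerSeries.C : K →+* MvPowerSeries (Fin n) K) ((-1 : K) ^ (E+1-0) * ((E+1-0).factorial : K)⁻¹)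
                * tE c μ ν κ k 0 (E+1-0))) = 0 := by
      simp
    rw [h0, add_zero]
    refine Finset.sum_congr rfl fun i hi => ?_
    rw [Finset.mem_range] at hi
    have hsub : E + 1 - (i + 1) = E - i := by omega
    rw [hsub, ← bb_succ i, map_mul]
    simp only [map_mul, map_neg, map_pow, map_one, map_natCast]
    ring
  · -- second sum: drop last term with sum_range_succ
    conv_rhs => rw [Finset.sum_range_succ]
    have h0 : (MvPowerSeries.C : K →+* MvPowerSeries (Fin n) K) (-(((E+1 - (E+1) : ℕ)) : K))
        * ((MvPowerSeries.C : K →+* MvPowerSeries (Fin n) K) ((-1 : K) ^ (E+1) * ((E+1).factorial : K)⁻¹)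
            * ((MvPowerSeries.C : K →+* MvPowerSeries (Fin n) K) ((-1 : K) ^ (E+1-(E+1)) * ((E+1-(E+1)).factorial : K)⁻¹)
                * tE c μ ν κ k (E+1) (E+1-(E+1)))) = 0 := by
      rw [Nat.sub_self]
      simp
    rw [h0, add_zero]
    refine Finset.sum_congr rfl fun m2 hm2 => ?_
    rw [Finset.mem_range] at hm2
    have hsub : E + 1 - m2 = (E - m2) + 1 := by omega
    rw [hsub, ← bb_succ (E - m2), map_mul]
    simp only [map_mul, map_neg, map_pow, map_one, map_natCast]
    ring

lemma WE_sc [CharZero K] (c : Fin n → Fin n → Fin n → K)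
    (hanti : ∀ μ ν α, c μ ν α = - c ν μ α)
    (hjac : ∀ μ α β ν, ∑ ρ, (c μ α ρ * c ρ β ν + c α β ρ * c ρ μ ν + c β μ ρ * c ρ α ν) = 0)
    (μ ν κ : Fin n) :
    ∀ (k E : ℕ), (MvPowerSeries.C : K →+* MvPowerSeries (Fin n) K) ((E.factorial : K)) * WE c μ ν κ E k
      = (MvPowerSeries.C : K →+* MvPowerSeries (Fin n) K) ((-1 : K) ^ k * (((E+k).factorial : K))) * WE c μ ν κ (E+k) 0 := by
  intro k
  induction k with
  | zero => intro E; simp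
  | succ k ih =>
    intro E
    rw [WE_succ c hanti hjac μ ν κ E k, ← mul_assoc, ← map_mul]
    have h1 : (E.factorial : K) * (-((E+1 : ℕ) : K)) = -(((E+1 : ℕ).factorial : K)) := by
      rw [Nat.factorial_succ]
      push_cast
      ring
    rw [h1, map_neg, neg_mul, ih (E+1), ← neg_mul, ← map_neg]
    have h2 : E + 1 + k = E + (k + 1) := by omega
    rw [h2]
    congr 1
    rw [pow_succ]
    ring

/-- the assembled sum. -/
def SE (c : Fin n → Fin n → Fin n → K) (μ ν κ : Fin n) (D : ℕ) :
    MvPowerSeries (Fin n) K :=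
  ∑ m1 ∈ Finset.range (D+1),
    (MvPowerSeries.C : K →+* MvPowerSeries (Fin n) K) ((m1.factorial : K)⁻¹) * WE c μ ν κ (D - m1) m1

lemma tE_zero (c : Fin n → Fin n → Fin n → K)
    (hanti : ∀ μ ν α, c μ ν α = - c ν μ α) (μ ν κ : Fin n) :
    tE c μ ν κ 0 0 0 = -((MvPowerSeries.C : K →+* MvPowerSeries (Fin n) K) (c μ ν κ)) := by
  rw [tE]
  simp [Matrix.one_apply]
  rw [hanti ν μ κ, map_neg]

lemma WE_zero (c : Fin n → Fin n → Fin n → K)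
    (hanti : ∀ μ ν α, c μ ν α = - c ν μ α) (μ ν κ : Fin n) :
    WE c μ ν κ 0 0 = -((MvPowerSeries.C : K →+* MvPowerSeries (Fin n) K) (c μ ν κ)) := by
  rw [WE, Finset.sum_range_one]
  norm_num
  exact tE_zero c hanti μ ν κ

lemma SE_eval [CharZero K] (c : Fin n → Fin n → Fin n → K)
    (hanti : ∀ μ ν α, c μ ν α = - c ν μ α)
    (hjac : ∀ μ α β ν, ∑ ρ, (c μ α ρ * c ρ β ν + c α β ρ * c ρ μ ν + c β μ ρ * c ρ α ν) = 0)
    (μ ν κ : Fin n) (D : ℕ) :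
    SE c μ ν κ D = if D = 0 then -((MvPowerSeries.C : K →+* MvPowerSeries (Fin n) K) (c μ ν κ)) else 0 := by
  have hW : ∀ m1 ∈ Finset.range (D+1),
      (MvPowerSeries.C : K →+* MvPowerSeries (Fin n) K) ((m1.factorial : K)⁻¹) * WE c μ ν κ (D - m1) m1
        = (MvPowerSeries.C : K →+* MvPowerSeries (Fin n) K) ((-1 : K) ^ m1 * (D.choose m1 : K)) * WE c μ ν κ D 0 := by
    intro m1 hm1
    rw [Finset.mem_range] at hm1
    have hk : m1 ≤ D := by omega
    have h1 := WE_sc c hanti hjac μ ν κ m1 (D - m1)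
    rw [show D - m1 + m1 = D from by omega] at h1
    have hnz : (((D - m1).factorial : K)) ≠ 0 := Nat.cast_ne_zero.2 (Nat.factorial_ne_zero _)
    have h2 : WE c μ ν κ (D - m1) m1
        = (MvPowerSeries.C : K →+* MvPowerSeries (Fin n) K) ((((D - m1).factorial : K))⁻¹)
            * ((MvPowerSeries.C : K →+* MvPowerSeries (Fin n) K) ((-1 : K) ^ m1 * (((D).factorial : K)))
                * WE c μ ν κ D 0) := by
      rw [← h1, ← mul_assoc, ← map_mul, inv_mul_cancel₀ hnz, map_one, one_mul]
    rw [h2, ← mul_assoc, ← map_mul, ← mul_assoc, ← map_mul]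
    congr 2
    have hch : (D.factorial : K) = (D.choose m1 : K) * (m1.factorial : K) * ((D - m1).factorial : K) := by
      exact_mod_cast congrArg (Nat.cast (R := K)) (Nat.choose_mul_factorial_mul_factorial hk).symm
    rw [hch]
    have hm1nz : ((m1.factorial : K)) ≠ 0 := Nat.cast_ne_zero.2 (Nat.factorial_ne_zero _)
    field_simp
  rw [SE, Finset.sum_congr rfl hW, ← Finset.sum_mul, ← map_sum]
  have halt : (∑ k ∈ Finset.range (D+1), (-1 : K) ^ k * (D.choose k : K))
      = if D = 0 then 1 else 0 := by
    have h := Int.alternating_sum_range_choose (n := D)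
    calc (∑ k ∈ Finset.range (D+1), (-1 : K) ^ k * (D.choose k : K))
        = ((∑ k ∈ Finset.range (D+1), (-1 : ℤ) ^ k * (D.choose k : ℤ) : ℤ) : K) := by
          push_cast
          rfl
      _ = (((if D = 0 then 1 else 0) : ℤ) : K) := by rw [h]
      _ = if D = 0 then 1 else 0 := by split <;> simp
  rw [halt]
  split
  · next hD =>
    subst hD
    rw [map_one, one_mul]
    exact WE_zero c hanti μ ν κ
  · rw [map_zero, zero_mul]

end Stmt13Aux

open Stmt13Aux Finset MvPowerSeries in
/-- `Σ_{α,β,ρ} C_{βρα} (e^C)_{ακ} (e^{-C})_{μρ} (e^{-C})_{νβ} = -C_{μνκ}`. -/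
theorem stmt13 {K : Type*} [Field K] [CharZero K] {n : ℕ}
    (c : Fin n → Fin n → Fin n → K)
    (hanti : ∀ μ ν α, c μ ν α = - c ν μ α)
    (hjac : ∀ μ α β ν, ∑ ρ, (c μ α ρ * c ρ β ν + c α β ρ * c ρ μ ν + c β μ ρ * c ρ α ν) = 0)
    (μ ν κ : Fin n) :
    ∑ α, ∑ β, ∑ ρ, (MvPowerSeries.C : K →+* MvPowerSeries (Fin n) K) (c β ρ α)
        * (matF (fun m => (m.factorial : K)⁻¹) (Cmat c) α κ
            * (matF (fun m => (-1 : K) ^ m * (m.factorial : K)⁻¹) (Cmat c) μ ρ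
                * matF (fun m => (-1 : K) ^ m * (m.factorial : K)⁻¹) (Cmat c) ν β))
      = - (MvPowerSeries.C : K →+* MvPowerSeries (Fin n) K) (c μ ν κ) := by
  classical
  apply MvPowerSeries.ext
  intro d
  simp only [map_sum, MvPowerSeries.coeff_C_mul]
  have hrep : ∀ (α β ρ : Fin n),
      MvPowerSeries.coeff d (matF (fun m => (m.factorial : K)⁻¹) (Cmat c) α κ
        * (matF (fun m => (-1 : K) ^ m * (m.factorial : K)⁻¹) (Cmat c) μ ρ
            * matF (fun m => (-1 : K) ^ m * (m.factorial : K)⁻¹) (Cmat c) ν β))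
      = MvPowerSeries.coeff d
          ((∑ m ∈ Finset.range (deg d + 1),
              (MvPowerSeries.C : K →+* MvPowerSeries (Fin n) K) ((m.factorial : K)⁻¹) * (Cmat c ^ m) α κ)
           * ((∑ m ∈ Finset.range (deg d + 1),
              (MvPowerSeries.C : K →+* MvPowerSeries (Fin n) K) ((-1 : K) ^ m * (m.factorial : K)⁻¹) * (Cmat c ^ m) μ ρ)
              * (∑ m ∈ Finset.range (deg d + 1),
              (MvPowerSeries.C : K →+* MvPowerSeries (Fin n) K) ((-1 : K) ^ m * (m.factorial : K)⁻¹) * (Cmat c ^ m) ν β))) := by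
    intro α β ρ
    refine coeff_mul_congr (fun e he => coeff_matF_trunc c _ _ _ (by omega)) (fun e he => ?_)
    exact coeff_mul_congr (fun e2 he2 => coeff_matF_trunc c _ _ _ (by omega))
      (fun e2 he2 => coeff_matF_trunc c _ _ _ (by omega))
  simp only [hrep]
  have hring := congrArg (MvPowerSeries.coeff d)
    (ring_expand c μ ν κ (fun m => (m.factorial : K)⁻¹)
      (fun m => (-1 : K) ^ m * (m.factorial : K)⁻¹)
      (fun m => (-1 : K) ^ m * (m.factorial : K)⁻¹) (deg d + 1))
  simp only [map_sum, MvPowerSeries.coeff_C_mul] at hring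
  rw [hring]
  simp only [← Finset.mul_sum]
  have hm3 : ∀ m1 m2 : ℕ,
      (∑ m3 ∈ Finset.range (deg d + 1),
          (-1 : K) ^ m3 * (m3.factorial : K)⁻¹ * MvPowerSeries.coeff d (tE c μ ν κ m1 m2 m3))
        = (-1 : K) ^ (deg d - m1 - m2) * ((deg d - m1 - m2).factorial : K)⁻¹
            * MvPowerSeries.coeff d (tE c μ ν κ m1 m2 (deg d - m1 - m2)) := by
    intro m1 m2
    refine Finset.sum_eq_single (deg d - m1 - m2) (fun m3 _ hne => ?_)
      (fun hnm => absurd (Finset.mem_range.2 (by omega)) hnm)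
    rw [coeff_tE_ne c μ ν κ (by omega), mul_zero]
  simp only [hm3]
  have hm2 : ∀ m1 : ℕ,
      (∑ m2 ∈ Finset.range (deg d + 1),
          (-1 : K) ^ m2 * (m2.factorial : K)⁻¹
            * ((-1 : K) ^ (deg d - m1 - m2) * ((deg d - m1 - m2).factorial : K)⁻¹
                * MvPowerSeries.coeff d (tE c μ ν κ m1 m2 (deg d - m1 - m2))))
        = MvPowerSeries.coeff d (WE c μ ν κ (deg d - m1) m1) := by
    intro m1
    rw [WE, map_sum]
    simp only [MvPowerSeries.coeff_C_mul]
    refine (Finset.sum_subset (fun x hx => ?_) (fun x hx hnx => ?_)).symm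
    · rw [Finset.mem_range] at *
      omega
    · have hgt : ¬ x < deg d - m1 + 1 := fun h => hnx (Finset.mem_range.2 h)
      rw [coeff_tE_ne c μ ν κ (by omega), mul_zero, mul_zero]
  simp only [hm2]
  have hSE : MvPowerSeries.coeff d (SE c μ ν κ (deg d))
      = ∑ m1 ∈ Finset.range (deg d + 1),
          (m1.factorial : K)⁻¹ * MvPowerSeries.coeff d (WE c μ ν κ (deg d - m1) m1) := by
    rw [SE, map_sum]
    simp only [MvPowerSeries.coeff_C_mul]
  rw [← hSE, SE_eval c hanti hjac μ ν κ (deg d)]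
  by_cases hD : deg d = 0
  · rw [if_pos hD]
  · rw [if_neg hD, map_zero]
    have hd0 : d ≠ 0 := fun h => hD (by rw [h]; exact deg_zero)
    rw [map_neg, MvPowerSeries.coeff_C, if_neg hd0, neg_zero]

end
end

section
/- In the Weyl algebra with generators x_1,...,x_n, ∂_1,...,∂_n ([∂_μ,x_ν] = δ_{μν}), the operators x̂_μ = x_μ T + ia_μ (x·∂) S, where T = A/(e^A-1), S = 1/A - 1/(e^A-1) are formal power series in A = ia·∂ and x·∂ = Σ_α x_α∂_α, satisfy the κ-deformed commutation relations [x̂_μ, x̂_ν] = i(a_μ x̂_ν - a_ν x̂_μ). -/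
noncomputable section

open MvPolynomial

variable {n : ℕ}

/-- multiplication by `x_μ` as an operator on polynomials. -/
def xop (μ : Fin n) : Module.End ℂ (MvPolynomial (Fin n) ℂ) :=
  LinearMap.mulLeft ℂ (MvPolynomial.X μ)

/-- the partial derivative `∂_μ` as an operator on polynomials. -/
def dop (μ : Fin n) : Module.End ℂ (MvPolynomial (Fin n) ℂ) :=
  (MvPolynomial.pderiv μ).toLinearMap

/-- the operator `A = i a·∂`. -/
def Aop (a : Fin n → ℂ) : Module.End ℂ (MvPolynomial (Fin n) ℂ) :=
  ∑ α, (Complex.I * a α) • dop α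

/-- the operator `x·∂ = Σ_α x_α ∂_α`. -/
def xdop : Module.End ℂ (MvPolynomial (Fin n) ℂ) := ∑ α : Fin n, xop α * dop α

/-! ### Scalar (Bernoulli) identities -/

section ScalarPart
open PowerSeries

/-- the coefficients `B_m/m!` of the power series `A/(e^A-1)`. -/
def ff (m : ℕ) : ℂ := (bernoulli m : ℂ) / (m.factorial : ℂ)

/-- the coefficients `-B_{m+1}/(m+1)!` of the power series `1/A - 1/(e^A-1)`. -/
def gg (m : ℕ) : ℂ := -((bernoulli (m + 1) : ℂ) / ((m + 1).factorial : ℂ))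

lemma gg_eq (m : ℕ) : gg m = -ff (m+1) := rfl

/-- coefficients of the derivative of a power series -/
def der (c : ℕ → ℂ) (m : ℕ) : ℂ := ((m : ℂ) + 1) * c (m + 1)

/-- coefficients of `z·(d/dz)` applied to a power series -/
def mder (c : ℕ → ℂ) (m : ℕ) : ℂ := (m : ℂ) * c m

/-- Cauchy product of coefficient sequences -/
def conv (c e : ℕ → ℂ) (s : ℕ) : ℂ := ∑ i ∈ Finset.range (s + 1), c i * e (s - i)

lemma conv_comm (c e : ℕ → ℂ) : conv c e = conv e c := by
  funext s
  rw [conv, conv, ← Finset.sum_range_reflect (fun i => e i * c (s - i)) (s+1)]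
  apply Finset.sum_congr rfl
  intro i hi
  have hi' : i < s + 1 := Finset.mem_range.mp hi
  have h1 : s + 1 - 1 - i = s - i := by omega
  have h2 : s - (s - i) = i := by omega
  rw [h1, h2, mul_comm]

lemma coeff_bps (m : ℕ) : (PowerSeries.coeff m) (bernoulliPowerSeries ℂ) = ff m := by
  rw [bernoulliPowerSeries, PowerSeries.coeff_mk, ff, map_div₀, eq_ratCast, eq_ratCast]
  push_cast
  rfl

lemma derivExpPS : d⁄dX ℂ (PowerSeries.exp ℂ) = PowerSeries.exp ℂ := by
  ext m
  rw [PowerSeries.coeff_derivative, PowerSeries.coeff_exp, PowerSeries.coeff_exp]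
  rw [map_div₀, map_div₀]
  simp only [map_one, map_natCast]
  have h1 : ((m+1).factorial : ℂ) = (m.factorial : ℂ) * ((m : ℂ) + 1) := by
    rw [Nat.factorial_succ]; push_cast; ring
  rw [h1]
  have h2 : (m.factorial : ℂ) ≠ 0 := Nat.cast_ne_zero.mpr m.factorial_ne_zero
  have h3 : (m : ℂ) + 1 ≠ 0 := Nat.cast_add_one_ne_zero m
  push_cast
  field_simp

lemma key_ps : (PowerSeries.X : ℂ⟦X⟧) * d⁄dX ℂ (bernoulliPowerSeries ℂ)
    = bernoulliPowerSeries ℂ - PowerSeries.X * bernoulliPowerSeries ℂ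
      - bernoulliPowerSeries ℂ ^ 2 := by
  have h1 : bernoulliPowerSeries ℂ * (PowerSeries.exp ℂ - 1) = PowerSeries.X :=
    bernoulliPowerSeries_mul_exp_sub_one ℂ
  have h2 : d⁄dX ℂ (bernoulliPowerSeries ℂ * (PowerSeries.exp ℂ - 1)) = 1 := by
    rw [h1, PowerSeries.derivative_X]
  rw [Derivation.leibniz] at h2
  simp only [smul_eq_mul, map_sub, derivExpPS, Derivation.map_one_eq_zero, sub_zero] at h2
  have h3 : bernoulliPowerSeries ℂ * (bernoulliPowerSeries ℂ * PowerSeries.exp ℂ)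
      + bernoulliPowerSeries ℂ * ((PowerSeries.exp ℂ - 1) * d⁄dX ℂ (bernoulliPowerSeries ℂ))
      = bernoulliPowerSeries ℂ := by
    rw [← mul_add]
    rw [show bernoulliPowerSeries ℂ * PowerSeries.exp ℂ
        + (PowerSeries.exp ℂ - 1) * d⁄dX ℂ (bernoulliPowerSeries ℂ) = 1 from by
      linear_combination h2]
    rw [mul_one]
  have h4 : bernoulliPowerSeries ℂ * ((PowerSeries.exp ℂ - 1) * d⁄dX ℂ (bernoulliPowerSeries ℂ))
      = PowerSeries.X * d⁄dX ℂ (bernoulliPowerSeries ℂ) := by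
    rw [← mul_assoc, h1]
  have h5 : bernoulliPowerSeries ℂ * (bernoulliPowerSeries ℂ * PowerSeries.exp ℂ)
      = bernoulliPowerSeries ℂ * (bernoulliPowerSeries ℂ * (PowerSeries.exp ℂ - 1))
        + bernoulliPowerSeries ℂ * bernoulliPowerSeries ℂ := by ring
  rw [h4, h5] at h3
  linear_combination h3 - h1 * bernoulliPowerSeries ℂ

lemma ff_zero : ff 0 = 1 := by simp [ff]

lemma bstar (s : ℕ) : ((s : ℂ) + 1) * ff (s+1)
    = ff (s+1) - ff s - ∑ i ∈ Finset.range (s+2), ff i * ff (s+1-i) := by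
  have h := congrArg (PowerSeries.coeff (s+1)) key_ps
  rw [PowerSeries.coeff_succ_X_mul, PowerSeries.coeff_derivative] at h
  simp only [map_sub] at h
  rw [PowerSeries.coeff_succ_X_mul, pow_two, PowerSeries.coeff_mul] at h
  rw [Finset.Nat.sum_antidiagonal_eq_sum_range_succ (fun i j =>
    (PowerSeries.coeff i) (bernoulliPowerSeries ℂ)
      * (PowerSeries.coeff j) (bernoulliPowerSeries ℂ))] at h
  simp only [coeff_bps] at h
  rw [← h]
  ring

/-- the master identity `f' + f + f'·A·g - g·f = 0` equivalently
`conv (der ff) ff + conv (mder ff) gg - conv gg ff = -ff`. -/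
lemma main_id (s : ℕ) :
    conv (der ff) ff s + conv (mder ff) gg s - conv gg ff s = -ff s := by
  show (∑ i ∈ Finset.range (s+1), ((((i:ℂ))+1) * ff (i+1)) * ff (s-i))
    + (∑ i ∈ Finset.range (s+1), ((i:ℂ) * ff i) * (-(ff ((s-i)+1))))
    - (∑ i ∈ Finset.range (s+1), (-(ff (i+1))) * ff (s-i))
    = -ff s
  have h2 : (∑ i ∈ Finset.range (s+1), ((i:ℂ) * ff i) * (ff ((s-i)+1)))
      = ∑ i ∈ Finset.range s, (((i:ℂ)+1) * ff (i+1)) * ff (s-i) := by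
    rw [Finset.sum_range_succ']
    simp only [Nat.cast_zero, zero_mul, ff_zero, mul_one, add_zero]
    apply Finset.sum_congr rfl
    intro i hi
    have hi' : i < s := Finset.mem_range.mp hi
    have : s - (i+1) + 1 = s - i := by omega
    rw [this]
    push_cast
    ring
  have h3 : (∑ i ∈ Finset.range (s+1), ((i:ℂ) * ff i) * (-(ff ((s-i)+1))))
      = -∑ i ∈ Finset.range (s+1), ((i:ℂ) * ff i) * (ff ((s-i)+1)) := by
    rw [← Finset.sum_neg_distrib]
    apply Finset.sum_congr rfl
    intro i _
    ring
  have h4 : (∑ i ∈ Finset.range (s+1), (-(ff (i+1))) * ff (s-i))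
      = -∑ i ∈ Finset.range (s+1), ff (i+1) * ff (s-i) := by
    rw [← Finset.sum_neg_distrib]
    apply Finset.sum_congr rfl
    intro i _
    ring
  rw [h3, h4, h2]
  rw [Finset.sum_range_succ (fun i => (((i:ℂ))+1) * ff (i+1) * ff (s-i)) s]
  have h5 : ∑ i ∈ Finset.range (s+2), ff i * ff (s+1-i)
      = ff (s+1) + ∑ i ∈ Finset.range (s+1), ff (i+1) * ff (s-i) := by
    rw [Finset.sum_range_succ']
    rw [ff_zero]
    simp only [Nat.sub_zero, one_mul]
    rw [add_comm]
    congr 1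
    apply Finset.sum_congr rfl
    intro i hi
    have : s + 1 - (i + 1) = s - i := by omega
    rw [this]
  have hstar := bstar s
  rw [h5] at hstar
  simp only [Nat.sub_self, ff_zero, mul_one]
  linear_combination hstar

end ScalarPart

end

noncomputable section
open MvPolynomial

variable {n : ℕ}

/-! ### basic operator identities -/

lemma xdop_apply (p : MvPolynomial (Fin n) ℂ) :
    xdop p = ∑ α : Fin n, X α * pderiv α p := by
  simp [xdop, LinearMap.sum_apply, Module.End.mul_apply, xop, dop, LinearMap.mulLeft_apply]

lemma Aop_apply (a : Fin n → ℂ) (p : MvPolynomial (Fin n) ℂ) :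
    Aop a p = ∑ α : Fin n, (Complex.I * a α) • pderiv α p := by
  simp [Aop, LinearMap.sum_apply, LinearMap.smul_apply, dop]

lemma pderiv_X_mul (α ν : Fin n) (p : MvPolynomial (Fin n) ℂ) :
    pderiv α (X ν * p) = X ν * pderiv α p + if ν = α then p else 0 := by
  rw [pderiv_mul, pderiv_X]
  rw [Pi.single_apply]
  rw [add_comm]
  congr 1
  split <;> simp

lemma pderiv_comm (α β : Fin n) (p : MvPolynomial (Fin n) ℂ) :
    pderiv α (pderiv β p) = pderiv β (pderiv α p) := by
  induction p using MvPolynomial.induction_on' with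
  | monomial u c =>
    rw [pderiv_monomial, pderiv_monomial, pderiv_monomial, pderiv_monomial]
    rcases eq_or_ne α β with h | h
    · rw [h]
    · have hidx : u - Finsupp.single β 1 - Finsupp.single α 1
          = u - Finsupp.single α 1 - Finsupp.single β 1 := tsub_right_comm
      have ha : (u - Finsupp.single β 1 : Fin n →₀ ℕ) α = u α := by
        rw [Finsupp.tsub_apply, Finsupp.single_eq_of_ne' (Ne.symm h)]
        simp
      have hb : (u - Finsupp.single α 1 : Fin n →₀ ℕ) β = u β := by
        rw [Finsupp.tsub_apply, Finsupp.single_eq_of_ne' h]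
        simp
      rw [hidx, ha, hb]
      congr 1
      push_cast
      ring
  | add p q hp hq => simp [map_add, hp, hq]

lemma Aop_X_mul (a : Fin n → ℂ) (ν : Fin n) (p : MvPolynomial (Fin n) ℂ) :
    Aop a (X ν * p) = X ν * Aop a p + (Complex.I * a ν) • p := by
  rw [Aop_apply, Aop_apply, Finset.mul_sum]
  simp only [pderiv_X_mul, smul_add, Finset.sum_add_distrib, smul_ite, smul_zero,
    Finset.sum_ite_eq, Finset.mem_univ, if_true, mul_smul_comm]

lemma Apow_succ_X_mul (a : Fin n → ℂ) (ν : Fin n) (m : ℕ) (p : MvPolynomial (Fin n) ℂ) :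
    (Aop a ^ (m+1)) (X ν * p)
      = X ν * (Aop a ^ (m+1)) p + (((m:ℂ)+1) * (Complex.I * a ν)) • (Aop a ^ m) p := by
  induction m generalizing p with
  | zero => simp [pow_one, Aop_X_mul]
  | succ m ih =>
    have h1 : (Aop a ^ (m+1+1)) (X ν * p) = Aop a ((Aop a ^ (m+1)) (X ν * p)) := by
      rw [pow_succ']; rfl
    have h2 : (Aop a ^ (m+1+1)) p = Aop a ((Aop a ^ (m+1)) p) := by
      rw [pow_succ']; rfl
    have h3 : (Aop a ^ (m+1)) p = Aop a ((Aop a ^ m) p) := by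
      rw [pow_succ']; rfl
    rw [h1, ih p, map_add, map_smul, Aop_X_mul, h2, h3]
    push_cast
    module

lemma D_X_mul (ν : Fin n) (p : MvPolynomial (Fin n) ℂ) :
    xdop (X ν * p) = X ν * xdop p + X ν * p := by
  rw [xdop_apply, xdop_apply, Finset.mul_sum]
  simp only [pderiv_X_mul, mul_add, Finset.sum_add_distrib, mul_ite, mul_zero,
    Finset.sum_ite_eq, Finset.mem_univ, if_true]
  congr 1
  apply Finset.sum_congr rfl
  intro α _
  ring

lemma Aop_D (a : Fin n → ℂ) (p : MvPolynomial (Fin n) ℂ) :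
    Aop a (xdop p) = xdop (Aop a p) + Aop a p := by
  rw [Aop_apply]
  simp only [xdop_apply, map_sum, pderiv_X_mul, smul_add, Finset.sum_add_distrib, smul_ite,
    smul_zero, Finset.sum_ite_eq, Finset.mem_univ, if_true]
  rw [Aop_apply]
  congr 1
  simp only [Finset.smul_sum, map_sum, map_smul, Finset.mul_sum]
  rw [Finset.sum_comm]
  apply Finset.sum_congr rfl
  intro β _
  apply Finset.sum_congr rfl
  intro α _
  rw [Derivation.map_smul, mul_smul_comm, pderiv_comm]
  · apply Finset.sum_congr rfl
    intro α _
    rw [Finset.sum_ite_eq' Finset.univ α (fun β => pderiv β p)]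
    simp


/-! ### degree lemmas -/

lemma deg_pderiv_le (α : Fin n) (p : MvPolynomial (Fin n) ℂ) :
    (pderiv α p).totalDegree ≤ p.totalDegree - 1 := by
  classical
  conv_lhs => rw [← support_sum_monomial_coeff p]
  rw [map_sum]
  refine le_trans (totalDegree_finset_sum _ _) (Finset.sup_le ?_)
  intro u hu
  rw [pderiv_monomial]
  by_cases h0 : (coeff u p * (u α : ℂ)) = 0
  · rw [h0]
    simp
  · rw [totalDegree_monomial _ h0]
    have huα : u α ≠ 0 := by
      intro h
      rw [h] at h0
      simp at h0
    have hle : (u.sum fun _ e => e) ≤ p.totalDegree := le_totalDegree hu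
    have hsum1 : ((u - Finsupp.single α 1).sum fun _ e => e)
        = ∑ β : Fin n, (u - Finsupp.single α 1 : Fin n →₀ ℕ) β :=
      Finsupp.sum_fintype _ _ (fun _ => rfl)
    have hsum2 : (u.sum fun _ e => e) = ∑ β : Fin n, u β :=
      Finsupp.sum_fintype _ _ (fun _ => rfl)
    have hpt : ∀ β : Fin n, (Finsupp.single α 1 : Fin n →₀ ℕ) β ≤ u β := by
      intro β
      rcases eq_or_ne α β with h | h
      · subst h
        rw [Finsupp.single_eq_same]
        omega
      · rw [Finsupp.single_eq_of_ne' h]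
        exact Nat.zero_le _
    have hsub : (∑ β : Fin n, (u - Finsupp.single α 1 : Fin n →₀ ℕ) β)
        + ∑ β : Fin n, (Finsupp.single α 1 : Fin n →₀ ℕ) β = ∑ β : Fin n, u β := by
      rw [← Finset.sum_add_distrib]
      apply Finset.sum_congr rfl
      intro β _
      rw [Finsupp.tsub_apply]
      have := hpt β
      omega
    have hsing : ∑ β : Fin n, (Finsupp.single α 1 : Fin n →₀ ℕ) β = 1 := by
      have : ∀ β : Fin n, (Finsupp.single α 1 : Fin n →₀ ℕ) β
          = if α = β then 1 else 0 := by
        intro β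
        rcases eq_or_ne α β with h | h
        · subst h; simp
        · rw [Finsupp.single_eq_of_ne' h, if_neg h]
      simp only [this, Finset.sum_ite_eq, Finset.mem_univ, if_true]
    rw [hsing] at hsub
    rw [hsum1]
    rw [hsum2] at hle
    omega

lemma pderiv_of_deg_zero (α : Fin n) (p : MvPolynomial (Fin n) ℂ)
    (h : p.totalDegree = 0) : pderiv α p = 0 := by
  classical
  conv_lhs => rw [← support_sum_monomial_coeff p]
  rw [map_sum]
  apply Finset.sum_eq_zero
  intro u hu
  rw [pderiv_monomial]
  have : u α = 0 := (totalDegree_eq_zero_iff (Fin n) p).mp h u hu α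
  rw [this]
  simp

lemma deg_Aop_le (a : Fin n → ℂ) (p : MvPolynomial (Fin n) ℂ) :
    (Aop a p).totalDegree ≤ p.totalDegree - 1 := by
  rw [Aop_apply]
  refine le_trans (totalDegree_finset_sum _ _) (Finset.sup_le ?_)
  intro α _
  exact le_trans (totalDegree_smul_le _ _) (deg_pderiv_le α p)

lemma Aop_of_deg_zero (a : Fin n → ℂ) (p : MvPolynomial (Fin n) ℂ)
    (h : p.totalDegree = 0) : Aop a p = 0 := by
  rw [Aop_apply]
  apply Finset.sum_eq_zero
  intro α _
  rw [pderiv_of_deg_zero α p h, smul_zero]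

lemma Apow_zero (a : Fin n → ℂ) : ∀ (m : ℕ) (p : MvPolynomial (Fin n) ℂ),
    p.totalDegree < m → (Aop a ^ m) p = 0 := by
  intro m
  induction m with
  | zero => intro p hp; omega
  | succ m ih =>
    intro p hp
    rw [pow_succ, Module.End.mul_apply]
    by_cases h0 : p.totalDegree = 0
    · rw [Aop_of_deg_zero a p h0, map_zero]
    · apply ih
      have := deg_Aop_le a p
      omega

lemma deg_Apow_le (a : Fin n → ℂ) (m : ℕ) (p : MvPolynomial (Fin n) ℂ) :
    ((Aop a ^ m) p).totalDegree ≤ p.totalDegree := by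
  induction m with
  | zero => simp
  | succ m ih =>
    rw [pow_succ', Module.End.mul_apply]
    calc (Aop a ((Aop a ^ m) p)).totalDegree
        ≤ ((Aop a ^ m) p).totalDegree - 1 := deg_Aop_le a _
      _ ≤ p.totalDegree := le_trans (Nat.sub_le _ _) ih

lemma Apow_D (a : Fin n → ℂ) (m : ℕ) (p : MvPolynomial (Fin n) ℂ) :
    (Aop a ^ m) (xdop p) = xdop ((Aop a ^ m) p) + (m : ℂ) • (Aop a ^ m) p := by
  induction m generalizing p with
  | zero => simp
  | succ m ih =>
    have h1 : (Aop a ^ (m+1)) (xdop p) = Aop a ((Aop a ^ m) (xdop p)) := by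
      rw [pow_succ']; rfl
    have h2 : ∀ q : MvPolynomial (Fin n) ℂ, (Aop a ^ (m+1)) q = Aop a ((Aop a ^ m) q) := by
      intro q; rw [pow_succ']; rfl
    rw [h1, ih p, map_add, map_smul, Aop_D, ← h2]
    push_cast
    module

lemma deg_D_le (p : MvPolynomial (Fin n) ℂ) :
    (xdop p).totalDegree ≤ p.totalDegree + 1 := by
  rw [xdop_apply]
  refine le_trans (totalDegree_finset_sum _ _) (Finset.sup_le ?_)
  intro α _
  calc (X α * pderiv α p).totalDegree
      ≤ (X α : MvPolynomial (Fin n) ℂ).totalDegree + (pderiv α p).totalDegree :=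
        totalDegree_mul _ _
    _ ≤ 1 + p.totalDegree := by
        have h1 : (X α : MvPolynomial (Fin n) ℂ).totalDegree = 1 := totalDegree_X α
        have h2 : (pderiv α p).totalDegree ≤ p.totalDegree :=
          le_trans (deg_pderiv_le α p) (Nat.sub_le _ _)
        omega
    _ = p.totalDegree + 1 := by omega

/-! ### triangular double sum lemma -/

lemma tri {M : Type*} [AddCommMonoid M] (N : ℕ) (F : ℕ → ℕ → M)
    (hF : ∀ i j, N ≤ i + j → F i j = 0) :
    ∑ m ∈ Finset.range N, ∑ j ∈ Finset.range N, F m j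
      = ∑ s ∈ Finset.range N, ∑ i ∈ Finset.range (s+1), F i (s - i) := by
  classical
  have hr : ∀ s, ∑ i ∈ Finset.range (s+1), F i (s-i)
      = ∑ q ∈ Finset.HasAntidiagonal.antidiagonal s, F q.1 q.2 := by
    intro s
    rw [Finset.Nat.sum_antidiagonal_eq_sum_range_succ_mk]
  simp only [hr]
  rw [← Finset.sum_biUnion]
  · rw [← Finset.sum_product']
    apply (Finset.sum_subset ?_ ?_).symm
    · intro q hq
      rw [Finset.mem_biUnion] at hq
      obtain ⟨s, hs, hq⟩ := hq
      rw [Finset.HasAntidiagonal.mem_antidiagonal] at hq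
      rw [Finset.mem_range] at hs
      rw [Finset.mem_product, Finset.mem_range, Finset.mem_range]
      omega
    · intro q hq hnq
      apply hF
      by_contra hlt
      apply hnq
      rw [Finset.mem_biUnion]
      exact ⟨q.1 + q.2, Finset.mem_range.mpr (by omega), Finset.HasAntidiagonal.mem_antidiagonal.mpr rfl⟩
  · intro s hs t ht hst
    apply Finset.disjoint_left.mpr
    intro q hqs hqt
    rw [Finset.HasAntidiagonal.mem_antidiagonal] at hqs hqt
    exact hst (hqs ▸ hqt ▸ rfl)


/-! ### the Φ calculus -/

section Phi

variable (a : Fin n → ℂ) (Φ : (ℕ → ℂ) → Module.End ℂ (MvPolynomial (Fin n) ℂ))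
variable (hΦ : ∀ (c : ℕ → ℂ) (p : MvPolynomial (Fin n) ℂ),
      Φ c p = ∑ m ∈ Finset.range (p.totalDegree + 1), c m • ((Aop a ^ m) p))

include hΦ

lemma phiF (c : ℕ → ℂ) (p : MvPolynomial (Fin n) ℂ) (N : ℕ) (hN : p.totalDegree < N) :
    Φ c p = ∑ m ∈ Finset.range N, c m • ((Aop a ^ m) p) := by
  rw [hΦ]
  apply Finset.sum_subset
  · exact Finset.range_subset_range.mpr (by omega)
  · intro m hm hnot
    rw [Finset.mem_range] at hm
    rw [Finset.mem_range] at hnot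
    rw [Apow_zero a m p (by omega), smul_zero]

lemma deg_phi_le (c : ℕ → ℂ) (p : MvPolynomial (Fin n) ℂ) :
    (Φ c p).totalDegree ≤ p.totalDegree := by
  rw [hΦ]
  refine le_trans (totalDegree_finset_sum _ _) (Finset.sup_le ?_)
  intro m _
  exact le_trans (totalDegree_smul_le _ _) (deg_Apow_le a m p)

lemma phi_X (c : ℕ → ℂ) (ν : Fin n) (p : MvPolynomial (Fin n) ℂ) :
    Φ c (X ν * p) = X ν * Φ c p + (Complex.I * a ν) • Φ (der c) p := by
  have hXp : (X ν * p).totalDegree < p.totalDegree + 1 + 1 := by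
    have h1 := totalDegree_mul (X ν) p
    have h2 : (X ν : MvPolynomial (Fin n) ℂ).totalDegree = 1 := totalDegree_X ν
    omega
  rw [phiF a Φ hΦ c (X ν * p) (p.totalDegree + 1 + 1) hXp]
  rw [Finset.sum_range_succ']
  simp only [pow_zero, Module.End.one_apply]
  simp only [Apow_succ_X_mul a ν, smul_add, Finset.sum_add_distrib, smul_smul]
  rw [phiF a Φ hΦ c p (p.totalDegree + 1 + 1) (by omega)]
  rw [phiF a Φ hΦ (der c) p (p.totalDegree + 1) (by omega)]
  rw [Finset.mul_sum]
  simp only [mul_smul_comm]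
  rw [Finset.sum_range_succ' (fun m => c m • (X ν * (Aop a ^ m) p)) (p.totalDegree + 1)]
  simp only [pow_zero, Module.End.one_apply, Finset.smul_sum, smul_smul]
  have hS2 : ∑ x ∈ Finset.range (p.totalDegree + 1),
        (c (x+1) * (((x:ℂ)+1) * (Complex.I * a ν))) • ((Aop a ^ x) p)
      = ∑ x ∈ Finset.range (p.totalDegree + 1),
        ((Complex.I * a ν) * der c x) • ((Aop a ^ x) p) := by
    apply Finset.sum_congr rfl
    intro m _
    congr 1
    rw [der]
    ring
  rw [hS2]
  abel

lemma phi_D (c : ℕ → ℂ) (p : MvPolynomial (Fin n) ℂ) :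
    Φ c (xdop p) = xdop (Φ c p) + Φ (mder c) p := by
  have hDp : (xdop p).totalDegree < p.totalDegree + 1 + 1 := by
    have := deg_D_le p
    omega
  rw [phiF a Φ hΦ c (xdop p) (p.totalDegree + 1 + 1) hDp]
  simp only [Apow_D a, smul_add, Finset.sum_add_distrib, smul_smul]
  rw [phiF a Φ hΦ c p (p.totalDegree + 1 + 1) (by omega)]
  rw [phiF a Φ hΦ (mder c) p (p.totalDegree + 1 + 1) (by omega)]
  rw [map_sum]
  congr 1
  · apply Finset.sum_congr rfl
    intro m _
    rw [map_smul]
  · apply Finset.sum_congr rfl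
    intro m _
    congr 1
    rw [mder]
    ring

lemma phi_phi (c e : ℕ → ℂ) (p : MvPolynomial (Fin n) ℂ) :
    Φ c (Φ e p) = Φ (conv c e) p := by
  have hd : (Φ e p).totalDegree < p.totalDegree + 1 := by
    have := deg_phi_le a Φ hΦ e p
    omega
  rw [phiF a Φ hΦ c (Φ e p) (p.totalDegree + 1) hd]
  rw [phiF a Φ hΦ e p (p.totalDegree + 1) (by omega)]
  rw [phiF a Φ hΦ (conv c e) p (p.totalDegree + 1) (by omega)]
  simp only [map_sum, map_smul, Finset.smul_sum, smul_smul]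
  have hA : ∀ m j : ℕ, (Aop a ^ m) ((Aop a ^ j) p) = (Aop a ^ (m + j)) p := by
    intro m j
    rw [pow_add, Module.End.mul_apply]
  simp only [hA]
  rw [tri (p.totalDegree + 1) (fun m j => (c m * e j) • (Aop a ^ (m + j)) p) ?_]
  · apply Finset.sum_congr rfl
    intro s hs
    rw [conv, Finset.sum_smul]
    apply Finset.sum_congr rfl
    intro i hi
    rw [Finset.mem_range] at hi
    have : i + (s - i) = s := by omega
    rw [this]
  · intro i j hij
    show (c i * e j) • (Aop a ^ (i + j)) p = 0
    rw [Apow_zero a (i + j) p (by omega), smul_zero]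

lemma phi_key (p : MvPolynomial (Fin n) ℂ) :
    Φ (conv (der ff) ff) p
      = -(Φ ff p) - Φ (conv (mder ff) gg) p + Φ (conv gg ff) p := by
  rw [hΦ, hΦ, hΦ, hΦ]
  rw [← Finset.sum_neg_distrib, ← Finset.sum_sub_distrib, ← Finset.sum_add_distrib]
  apply Finset.sum_congr rfl
  intro m _
  rw [← neg_smul, ← sub_smul, ← add_smul]
  congr 1
  have h := main_id m
  linear_combination h

end Phi


/-- the operators `x̂_μ = x_μ T + i a_μ (x·∂) S`, with
`T = A/(e^A-1) = Σ_m (B_m/m!) A^m` and `S = 1/A - 1/(e^A-1) = -Σ_m (B_{m+1}/(m+1)!) A^m`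
(`B₁ = -1/2` convention), satisfy `[x̂_μ, x̂_ν] = i(a_μ x̂_ν - a_ν x̂_μ)`.  Here `Φ c` is the
operator `Σ_m c_m A^m`, which is well defined as on any polynomial the sum is finite. -/
theorem stmt18 (a : Fin n → ℂ)
    (Φ : (ℕ → ℂ) → Module.End ℂ (MvPolynomial (Fin n) ℂ))
    (hΦ : ∀ (c : ℕ → ℂ) (p : MvPolynomial (Fin n) ℂ),
      Φ c p = ∑ m ∈ Finset.range (p.totalDegree + 1), c m • ((Aop a ^ m) p))
    (T S : Module.End ℂ (MvPolynomial (Fin n) ℂ))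
    (hT : T = Φ fun m => (bernoulli m : ℂ) / (m.factorial : ℂ))
    (hS : S = Φ fun m => -((bernoulli (m + 1) : ℂ) / ((m + 1).factorial : ℂ)))
    (xhat : Fin n → Module.End ℂ (MvPolynomial (Fin n) ℂ))
    (hxhat : ∀ μ, xhat μ = xop μ * T + (Complex.I * a μ) • (xdop * S)) :
    ∀ μ ν, ⁅xhat μ, xhat ν⁆
      = (Complex.I * a μ) • xhat ν - (Complex.I * a ν) • xhat μ := by
  have hff : T = Φ ff := hT
  have hgg : S = Φ gg := hS
  have hxap : ∀ (μ : Fin n) (p : MvPolynomial (Fin n) ℂ),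
      xhat μ p = X μ * Φ ff p + (Complex.I * a μ) • xdop (Φ gg p) := by
    intro μ p
    rw [hxhat μ]
    simp only [LinearMap.add_apply, LinearMap.smul_apply, Module.End.mul_apply, xop,
      LinearMap.mulLeft_apply, hff, hgg]
  have hcv : conv ff gg = conv gg ff := conv_comm ff gg
  have hcomp : ∀ (μ ν : Fin n) (p : MvPolynomial (Fin n) ℂ), xhat μ (xhat ν p) =
      X μ * (X ν * Φ (conv ff ff) p)
      + (Complex.I * a ν) • (X μ * Φ (conv (der ff) ff) p)
      + (Complex.I * a μ) • (X ν * xdop (Φ (conv gg ff) p))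
      + (Complex.I * a μ) • (X ν * Φ (conv gg ff) p)
      + ((Complex.I * a μ) * (Complex.I * a ν)) • xdop (Φ (conv (der gg) ff) p)
      + (Complex.I * a ν) • (X μ * xdop (Φ (conv gg ff) p))
      + (Complex.I * a ν) • (X μ * Φ (conv (mder ff) gg) p)
      + ((Complex.I * a μ) * (Complex.I * a ν)) • xdop (xdop (Φ (conv gg gg) p))
      + ((Complex.I * a μ) * (Complex.I * a ν)) • xdop (Φ (conv (mder gg) gg) p) := by
    intro μ ν p
    rw [hxap ν p, map_add, map_smul, hxap μ, hxap μ]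
    rw [phi_X a Φ hΦ ff ν (Φ ff p), phi_X a Φ hΦ gg ν (Φ ff p)]
    rw [phi_D a Φ hΦ ff (Φ gg p), phi_D a Φ hΦ gg (Φ gg p)]
    simp only [phi_phi a Φ hΦ]
    rw [hcv]
    simp only [map_add, map_smul, D_X_mul, mul_add, mul_smul_comm, smul_add, smul_smul]
    module
  intro μ ν
  apply LinearMap.ext
  intro p
  rw [Ring.lie_def]
  simp only [LinearMap.sub_apply, Module.End.mul_apply, LinearMap.smul_apply]
  rw [hcomp μ ν p, hcomp ν μ p, hxap ν p, hxap μ p]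
  rw [phi_key a Φ hΦ p]
  rw [mul_left_comm (X ν) (X μ) (Φ (conv ff ff) p)]
  simp only [mul_add, mul_sub, mul_neg, smul_add, smul_sub, smul_neg]
  module

end
end

section
/- In the Weyl algebra completion, the dual κ-deformed generators ŷ_μ = x_μ A/(1-e^{-A}) + ia_μ(x·∂)(1/A - 1/(1-e^{-A})) commute with the generators x̂_μ = x_μ A/(e^A-1) + ia_μ(x·∂)(1/A - 1/(e^A-1)): [x̂_μ, ŷ_ν] = 0 for all μ, ν, and the ŷ's satisfy [ŷ_μ, ŷ_ν] = -i(a_μ ŷ_ν - a_ν ŷ_μ). -/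
noncomputable section

open MvPolynomial

variable {n : ℕ}

/-- Cauchy convolution of coefficient sequences. -/
def st19conv (c d : ℕ → ℂ) : ℕ → ℂ := fun m => ∑ k ∈ Finset.range (m + 1), c k * d (m - k)

/-- derivative on coefficient sequences. -/
def st19D (c : ℕ → ℂ) : ℕ → ℂ := fun m => c (m + 1) * ((m + 1 : ℕ) : ℂ)

/-- `t·d/dt` on coefficient sequences. -/
def st19M (c : ℕ → ℂ) : ℕ → ℂ := fun m => c m * ((m : ℕ) : ℂ)

def st19b : ℕ → ℂ := fun m => (bernoulli m : ℂ) / (m.factorial : ℂ)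
def st19b' : ℕ → ℂ := fun m => (-1 : ℂ) ^ m * (bernoulli m : ℂ) / (m.factorial : ℂ)
def st19s : ℕ → ℂ := fun m => -((bernoulli (m + 1) : ℂ) / ((m + 1).factorial : ℂ))
def st19u : ℕ → ℂ := fun m => (-1 : ℂ) ^ m * (bernoulli (m + 1) : ℂ) / ((m + 1).factorial : ℂ)

namespace st19

open PowerSeries

lemma mk_inj {c d : ℕ → ℂ} (h : PowerSeries.mk c = PowerSeries.mk d) : c = d :=
  funext fun m => by simpa using congrArg (PowerSeries.coeff m) h

lemma mk_add (c d : ℕ → ℂ) :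
    PowerSeries.mk (fun m => c m + d m) = PowerSeries.mk c + PowerSeries.mk d := by
  ext m; simp

lemma mk_sub (c d : ℕ → ℂ) :
    PowerSeries.mk (fun m => c m - d m) = PowerSeries.mk c - PowerSeries.mk d := by
  ext m; simp

lemma mk_conv (c d : ℕ → ℂ) :
    PowerSeries.mk (st19conv c d) = PowerSeries.mk c * PowerSeries.mk d := by
  ext m
  rw [PowerSeries.coeff_mul, Finset.Nat.sum_antidiagonal_eq_sum_range_succ_mk]
  simp [st19conv]

lemma mk_D (c : ℕ → ℂ) : PowerSeries.mk (st19D c) = d⁄dX ℂ (PowerSeries.mk c) := by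
  ext m
  rw [PowerSeries.coeff_derivative]
  simp [st19D]

lemma mk_M (c : ℕ → ℂ) :
    PowerSeries.mk (st19M c) = PowerSeries.X * d⁄dX ℂ (PowerSeries.mk c) := by
  ext m
  cases m with
  | zero => simp [st19M]
  | succ m => rw [PowerSeries.coeff_succ_X_mul, PowerSeries.coeff_derivative]; simp [st19M]

lemma exp_sub_one_ne_zero : PowerSeries.exp ℂ - 1 ≠ 0 := by
  intro h
  have := congrArg (PowerSeries.coeff 1) h
  simp [PowerSeries.coeff_exp] at this

lemma derivative_exp : d⁄dX ℂ (PowerSeries.exp ℂ) = PowerSeries.exp ℂ := by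
  ext m
  rw [PowerSeries.coeff_derivative, PowerSeries.coeff_exp, PowerSeries.coeff_exp, eq_ratCast,
    eq_ratCast]
  push_cast [Nat.factorial_succ]
  have h1 : ((m.factorial : ℂ)) ≠ 0 := by exact_mod_cast Nat.factorial_ne_zero m
  have h2 : ((m : ℂ) + 1) ≠ 0 := by
    have : ((m + 1 : ℕ) : ℂ) ≠ 0 := Nat.cast_ne_zero.mpr (Nat.succ_ne_zero m)
    push_cast at this; exact this
  field_simp

lemma mk_b_eq : PowerSeries.mk st19b = bernoulliPowerSeries ℂ := by
  ext m
  rw [bernoulliPowerSeries, PowerSeries.coeff_mk, PowerSeries.coeff_mk, eq_ratCast]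
  push_cast [st19b]
  ring

lemma hFE : PowerSeries.mk st19b * (PowerSeries.exp ℂ - 1) = PowerSeries.X := by
  rw [mk_b_eq]; exact bernoulliPowerSeries_mul_exp_sub_one ℂ

lemma bernoulli_odd_zero {m : ℕ} (h : Odd m) (h1 : 1 < m) : bernoulli m = 0 := by
  rw [bernoulli, bernoulli'_eq_zero_of_odd h h1, mul_zero]

lemma hG : PowerSeries.mk st19b' = PowerSeries.mk st19b + PowerSeries.X := by
  ext m
  rw [map_add, PowerSeries.coeff_mk, PowerSeries.coeff_mk, PowerSeries.coeff_X]
  match m with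
  | 0 => norm_num [st19b, st19b']
  | 1 => norm_num [st19b, st19b', bernoulli_one]
  | (m + 2) =>
    have : ¬(m + 2 = 1) := by omega
    rw [if_neg this, add_zero, st19b, st19b']
    rcases Nat.even_or_odd (m + 2) with he | ho
    · rw [he.neg_one_pow, one_mul]
    · rw [bernoulli_odd_zero ho (by omega)]
      norm_num

lemma hSX : PowerSeries.X * PowerSeries.mk st19s = 1 - PowerSeries.mk st19b := by
  ext m
  cases m with
  | zero =>
    simp [st19b, bernoulli_zero]
  | succ m =>
    rw [PowerSeries.coeff_succ_X_mul, map_sub, PowerSeries.coeff_mk, PowerSeries.coeff_mk,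
      PowerSeries.coeff_one, if_neg (Nat.succ_ne_zero m)]
    simp [st19s, st19b]

lemma hU : PowerSeries.mk st19u = PowerSeries.mk st19s - 1 := by
  ext m
  rw [map_sub, PowerSeries.coeff_mk, PowerSeries.coeff_mk, PowerSeries.coeff_one]
  match m with
  | 0 => norm_num [st19u, st19s, bernoulli_one]
  | (m + 1) =>
    rw [if_neg (Nat.succ_ne_zero m), sub_zero, st19u, st19s]
    rcases Nat.even_or_odd (m + 1) with he | ho
    · rw [he.neg_one_pow, one_mul, bernoulli_odd_zero he.add_one (by omega)]
      norm_num
    · rw [ho.neg_one_pow]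
      ring

end st19

namespace st19
open PowerSeries

local notation "K" => PowerSeries.mk st19b
local notation "G" => PowerSeries.mk st19b'
local notation "Ss" => PowerSeries.mk st19s
local notation "U" => PowerSeries.mk st19u
local notation "XX" => (PowerSeries.X : PowerSeries ℂ)
local notation "E" => PowerSeries.exp ℂ

lemma hKd : d⁄dX ℂ K * (E - 1) + K * E = 1 := by
  have h := congrArg (d⁄dX ℂ) hFE
  rw [Derivation.leibniz, map_sub, derivative_exp, PowerSeries.derivative_X] at h
  simp only [Derivation.map_one_eq_zero, sub_zero, smul_eq_mul] at h
  linear_combination h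

lemma core : XX * d⁄dX ℂ K + XX * K + K * K - K = 0 := by
  have h2 : (XX * d⁄dX ℂ K + XX * K + K * K - K) * ((E - 1) * (E - 1))
      = 0 * ((E - 1) * (E - 1)) := by
    linear_combination (XX * (E - 1)) * hKd + (K * (E - 1) - (E - 1)) * hFE
  exact mul_right_cancel₀ (mul_ne_zero exp_sub_one_ne_zero exp_sub_one_ne_zero) h2

lemma hXU : XX * U = 1 - K - XX := by
  rw [hU, mul_sub, hSX, mul_one]

lemma hDG : d⁄dX ℂ G = d⁄dX ℂ K + 1 := by
  rw [hG, map_add, PowerSeries.derivative_X]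

lemma hDU : d⁄dX ℂ U = d⁄dX ℂ Ss := by
  rw [hU, map_sub]
  simp only [Derivation.map_one_eq_zero, sub_zero]

lemma psI : d⁄dX ℂ K * G + (XX * d⁄dX ℂ K) * U - U * K = 0 := by
  have h : XX * (d⁄dX ℂ K * G + (XX * d⁄dX ℂ K) * U - U * K) = XX * 0 := by
    rw [hG]
    linear_combination (XX * d⁄dX ℂ K - K) * hXU + core
  exact mul_left_cancel₀ PowerSeries.X_ne_zero h

lemma psII : Ss * G - d⁄dX ℂ G * K - (XX * d⁄dX ℂ G) * Ss = 0 := by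
  have h : XX * (Ss * G - d⁄dX ℂ G * K - (XX * d⁄dX ℂ G) * Ss) = XX * 0 := by
    rw [hDG, hG]
    linear_combination (K + XX - XX * (d⁄dX ℂ K + 1)) * hSX - core
  exact mul_left_cancel₀ PowerSeries.X_ne_zero h

lemma psIII : d⁄dX ℂ Ss * G + (XX * d⁄dX ℂ Ss) * U - d⁄dX ℂ U * K - (XX * d⁄dX ℂ U) * Ss = 0 := by
  rw [hDU, hG, hU]
  ring

lemma psIV : d⁄dX ℂ G * G + (XX * d⁄dX ℂ G) * U - U * G - G = 0 := by
  have h : XX * (d⁄dX ℂ G * G + (XX * d⁄dX ℂ G) * U - U * G - G) = XX * 0 := by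
    rw [hDG, hG]
    linear_combination (XX * (d⁄dX ℂ K + 1) - (K + XX)) * hXU + core
  exact mul_left_cancel₀ PowerSeries.X_ne_zero h

end st19

namespace st19
open PowerSeries

lemma mk_addsub (x y z : ℕ → ℂ) :
    PowerSeries.mk (fun m => x m + y m - z m)
      = PowerSeries.mk x + PowerSeries.mk y - PowerSeries.mk z := by
  ext m; simp

lemma seqI : st19conv (st19D st19b) st19b'
    = fun m => st19conv st19b st19u m - st19conv (st19M st19b) st19u m := by
  apply mk_inj
  rw [mk_sub, mk_conv, mk_conv, mk_conv, mk_D, mk_M]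
  linear_combination psI

lemma seqII : st19conv (st19D st19b') st19b
    = fun m => st19conv st19s st19b' m - st19conv (st19M st19b') st19s m := by
  apply mk_inj
  rw [mk_sub, mk_conv, mk_conv, mk_conv, mk_D, mk_M]
  linear_combination -psII

lemma seqIII : st19conv (st19D st19s) st19b'
    = fun m => st19conv (st19D st19u) st19b m + st19conv (st19M st19u) st19s m
        - st19conv (st19M st19s) st19u m := by
  apply mk_inj
  rw [mk_addsub, mk_conv, mk_conv, mk_conv, mk_conv, mk_D, mk_D, mk_M, mk_M]
  linear_combination psIII

lemma seqIV : st19conv (st19D st19b') st19b'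
    = fun m => st19conv st19u st19b' m + st19b' m - st19conv (st19M st19b') st19u m := by
  apply mk_inj
  rw [mk_addsub, mk_conv, mk_conv, mk_conv, mk_D, mk_M]
  linear_combination psIV

lemma conv_comm (c d : ℕ → ℂ) : st19conv c d = st19conv d c := by
  funext m
  rw [st19conv, st19conv, ← Finset.sum_range_reflect]
  apply Finset.sum_congr rfl
  intro k hk
  rw [Finset.mem_range] at hk
  have h1 : m + 1 - 1 - k = m - k := by omega
  have h2 : m - (m - k) = k := by omega
  rw [h1, h2, mul_comm]

end st19


namespace st19

open Finset

lemma xop_apply (μ : Fin n) (p : MvPolynomial (Fin n) ℂ) : xop μ p = MvPolynomial.X μ * p := rfl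

lemma dop_apply (μ : Fin n) (p : MvPolynomial (Fin n) ℂ) : dop μ p = pderiv μ p := rfl

lemma aop_apply (a : Fin n → ℂ) (p : MvPolynomial (Fin n) ℂ) :
    Aop a p = ∑ α, (Complex.I * a α) • pderiv α p := by
  rw [Aop, LinearMap.sum_apply]
  simp [dop_apply]

lemma xdop_apply (p : MvPolynomial (Fin n) ℂ) :
    xdop p = ∑ α, MvPolynomial.X α * pderiv α p := by
  rw [xdop, LinearMap.sum_apply]
  simp [xop_apply, dop_apply]

/-- degree bound for `pderiv`. -/
lemma td_pderiv {d : ℕ} (i : Fin n) {p : MvPolynomial (Fin n) ℂ} (h : p.totalDegree ≤ d + 1) :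
    (pderiv i p).totalDegree ≤ d := by
  classical
  conv_lhs => rw [p.as_sum]
  rw [map_sum]
  refine (totalDegree_finset_sum _ _).trans (Finset.sup_le fun s hs => ?_)
  rw [pderiv_monomial]
  rcases Nat.eq_zero_or_pos (s i) with h0 | h0
  · simp [h0]
  · refine (totalDegree_monomial_le _ _).trans ?_
    have hle : Finsupp.single i 1 ≤ s := by
      rw [Finsupp.single_le_iff]; exact h0
    have hrepr : s - Finsupp.single i 1 + Finsupp.single i 1 = s := tsub_add_cancel_of_le hle
    have hs' : (s.sum fun _ e => e) ≤ d + 1 := (le_totalDegree hs).trans h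
    have hsplit : (s.sum fun _ e => e)
        = ((s - Finsupp.single i 1).sum fun _ e => e) + 1 := by
      conv_lhs => rw [← hrepr]
      rw [Finsupp.sum_add_index' (fun _ => rfl) (fun _ _ _ => rfl),
        Finsupp.sum_single_index rfl]
    have hid : ((s - Finsupp.single i 1).sum fun _ => id)
        = ((s - Finsupp.single i 1).sum fun _ e => e) := rfl
    omega

lemma pderiv_eq_zero_of_td0 (i : Fin n) {p : MvPolynomial (Fin n) ℂ}
    (h : p.totalDegree = 0) : pderiv i p = 0 := by
  apply pderiv_eq_zero_of_notMem_vars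
  intro hv
  obtain ⟨m, hm, him⟩ := (mem_vars i).mp hv
  have h0 := (totalDegree_eq_zero_iff _ p).mp h m hm i
  rw [Finsupp.mem_support_iff] at him
  exact him h0

lemma td_aop (a : Fin n → ℂ) {d : ℕ} {p : MvPolynomial (Fin n) ℂ} (h : p.totalDegree ≤ d + 1) :
    (Aop a p).totalDegree ≤ d := by
  rw [aop_apply]
  refine (totalDegree_finset_sum _ _).trans (Finset.sup_le fun α _ => ?_)
  exact (totalDegree_smul_le _ _).trans (td_pderiv α h)

lemma td_aop_le (a : Fin n → ℂ) (p : MvPolynomial (Fin n) ℂ) :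
    (Aop a p).totalDegree ≤ p.totalDegree :=
  td_aop a (Nat.le_succ _)

lemma td_apow_le (a : Fin n → ℂ) (m : ℕ) (p : MvPolynomial (Fin n) ℂ) :
    ((Aop a ^ m) p).totalDegree ≤ p.totalDegree := by
  induction m generalizing p with
  | zero => simp
  | succ m ih =>
    rw [pow_succ, Module.End.mul_apply]
    exact (ih _).trans (td_aop_le a p)

lemma aop_zero_of_td0 (a : Fin n → ℂ) {p : MvPolynomial (Fin n) ℂ}
    (h : p.totalDegree = 0) : Aop a p = 0 := by
  rw [aop_apply]
  refine Finset.sum_eq_zero fun α _ => ?_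
  rw [pderiv_eq_zero_of_td0 α h, smul_zero]

lemma apow_eq_zero (a : Fin n → ℂ) {m : ℕ} {p : MvPolynomial (Fin n) ℂ}
    (h : p.totalDegree < m) : (Aop a ^ m) p = 0 := by
  induction m generalizing p with
  | zero => omega
  | succ m ih =>
    rw [pow_succ, Module.End.mul_apply]
    rcases Nat.eq_zero_or_pos m with rfl | hm
    · rw [aop_zero_of_td0 a (by omega), map_zero]
    · refine ih ?_
      have h1 : p.totalDegree ≤ (m - 1) + 1 := by omega
      have := td_aop a h1
      omega

lemma td_xdop (p : MvPolynomial (Fin n) ℂ) : (xdop p).totalDegree ≤ p.totalDegree := by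
  rw [xdop_apply]
  refine (totalDegree_finset_sum _ _).trans (Finset.sup_le fun α _ => ?_)
  rcases Nat.eq_zero_or_pos p.totalDegree with h0 | h0
  · rw [pderiv_eq_zero_of_td0 α h0, mul_zero]
    simp
  · refine (totalDegree_mul _ _).trans ?_
    have h1 : p.totalDegree ≤ (p.totalDegree - 1) + 1 := by omega
    have h2 := td_pderiv α h1
    have h3 : (MvPolynomial.X α : MvPolynomial (Fin n) ℂ).totalDegree = 1 := totalDegree_X α
    omega

/-- commutator basics -/
lemma dop_xop (α ν : Fin n) :
    dop α * xop ν = xop ν * dop α + (if α = ν then 1 else 0) := by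
  apply LinearMap.ext; intro p
  simp only [LinearMap.add_apply, Module.End.mul_apply, xop_apply, dop_apply]
  rw [pderiv_mul]
  by_cases h : α = ν
  · subst h
    rw [pderiv_X_self]
    simp [add_comm]
  · rw [pderiv_X_of_ne (Ne.symm h)]
    simp [h]

lemma xop_comm (μ ν : Fin n) : xop μ * xop ν = xop ν * xop μ := by
  apply LinearMap.ext; intro p
  simp only [Module.End.mul_apply, xop_apply]
  ring

lemma aop_xop (a : Fin n → ℂ) (ν : Fin n) :
    Aop a * xop ν = xop ν * Aop a + (Complex.I * a ν) • 1 := by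
  rw [Aop, Finset.sum_mul, Finset.mul_sum]
  have h1 : ∀ α : Fin n, (Complex.I * a α) • dop α * xop ν
      = xop ν * ((Complex.I * a α) • dop α)
        + (if α = ν then (Complex.I * a α) • (1 : Module.End ℂ (MvPolynomial (Fin n) ℂ))
            else 0) := by
    intro α
    rw [smul_mul_assoc, dop_xop, smul_add, ← mul_smul_comm]
    congr 1
    split <;> simp
  rw [Finset.sum_congr rfl fun α _ => h1 α, Finset.sum_add_distrib]
  congr 1
  rw [Finset.sum_ite_eq' Finset.univ ν
    (fun α => (Complex.I * a α) • (1 : Module.End ℂ (MvPolynomial (Fin n) ℂ)))]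
  simp

lemma xdop_xop (ν : Fin n) : xdop * xop ν = xop ν * xdop + xop ν := by
  rw [xdop, Finset.sum_mul, Finset.mul_sum]
  have h1 : ∀ α : Fin n, xop α * dop α * xop ν
      = xop ν * (xop α * dop α) + (if α = ν then xop α else 0) := by
    intro α
    rw [mul_assoc, dop_xop, mul_add, ← mul_assoc, xop_comm α ν, mul_assoc, mul_ite, mul_one,
      mul_zero]
  rw [Finset.sum_congr rfl fun α _ => h1 α, Finset.sum_add_distrib]
  congr 1
  rw [Finset.sum_ite_eq' Finset.univ ν xop]
  simp

lemma pderiv_comm' (α β : Fin n) (p : MvPolynomial (Fin n) ℂ) :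
    pderiv α (pderiv β p) = pderiv β (pderiv α p) := by
  induction p using MvPolynomial.induction_on with
  | C c => simp
  | add p q hp hq => simp [hp, hq]
  | mul_X p i hp =>
    have hXX : ∀ γ δ : Fin n,
        pderiv γ (pderiv δ (MvPolynomial.X i : MvPolynomial (Fin n) ℂ)) = 0 := by
      intro γ δ
      by_cases h : δ = i
      · subst h; rw [pderiv_X_self]; simp
      · rw [pderiv_X_of_ne (fun he => h he.symm)]; simp
    simp only [pderiv_mul, map_add, hp, hXX, map_zero]
    ring

lemma dop_xdop (α : Fin n) : dop α * xdop = xdop * dop α + dop α := by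
  rw [xdop, Finset.mul_sum, Finset.sum_mul]
  have h1 : ∀ β : Fin n, dop α * (xop β * dop β)
      = xop β * dop β * dop α + (if α = β then dop β else 0) := by
    intro β
    have hc : dop α * dop β = dop β * dop α := by
      apply LinearMap.ext; intro p
      simp only [Module.End.mul_apply, dop_apply]
      exact pderiv_comm' α β p
    rw [← mul_assoc, dop_xop α β, add_mul, mul_assoc, hc, ← mul_assoc, ite_mul, one_mul, zero_mul]
  rw [Finset.sum_congr rfl fun β _ => h1 β, Finset.sum_add_distrib]
  congr 1
  rw [Finset.sum_congr rfl (fun β _ => by rw [show (if α = β then dop β else 0)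
    = (if β = α then dop β else 0) from by by_cases h : α = β <;> simp [h, Ne.symm, eq_comm]]),
    Finset.sum_ite_eq' Finset.univ α dop]
  simp

lemma aop_xdop (a : Fin n → ℂ) : Aop a * xdop = xdop * Aop a + Aop a := by
  rw [Aop, Finset.sum_mul, Finset.mul_sum]
  have h1 : ∀ α : Fin n, (Complex.I * a α) • dop α * xdop
      = xdop * ((Complex.I * a α) • dop α) + (Complex.I * a α) • dop α := by
    intro α
    rw [smul_mul_assoc, dop_xdop, smul_add, mul_smul_comm]
  rw [Finset.sum_congr rfl fun α _ => h1 α, Finset.sum_add_distrib]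

lemma apow_xop (a : Fin n → ℂ) (ν : Fin n) (m : ℕ) :
    Aop a ^ (m + 1) * xop ν
      = xop ν * Aop a ^ (m + 1) + (((m + 1 : ℕ) : ℂ) * (Complex.I * a ν)) • Aop a ^ m := by
  induction m with
  | zero =>
    simp only [zero_add, pow_one, pow_zero, Nat.cast_one, one_mul]
    exact aop_xop a ν
  | succ m ih =>
    have step : Aop a ^ (m + 2) * xop ν = Aop a * (Aop a ^ (m + 1) * xop ν) := by
      rw [← mul_assoc, ← pow_succ']
    rw [step, ih, mul_add, ← mul_assoc, aop_xop, add_mul, smul_mul_assoc, one_mul, mul_assoc,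
      ← pow_succ', mul_smul_comm, ← pow_succ']
    push_cast
    module

lemma apow_xdop (a : Fin n → ℂ) (m : ℕ) :
    Aop a ^ m * xdop = xdop * Aop a ^ m + (m : ℂ) • Aop a ^ m := by
  induction m with
  | zero => simp
  | succ m ih =>
    have step : Aop a ^ (m + 1) * xdop = Aop a * (Aop a ^ m * xdop) := by
      rw [← mul_assoc, ← pow_succ']
    rw [step, ih, mul_add, ← mul_assoc, aop_xdop, add_mul, mul_assoc, ← pow_succ',
      mul_smul_comm, ← pow_succ']
    push_cast
    module

end st19

namespace st19

open Finset


variable (a : Fin n → ℂ) (Φ : (ℕ → ℂ) → Module.End ℂ (MvPolynomial (Fin n) ℂ))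
  (hΦ : ∀ (c : ℕ → ℂ) (p : MvPolynomial (Fin n) ℂ),
    Φ c p = ∑ m ∈ Finset.range (p.totalDegree + 1), c m • ((Aop a ^ m) p))

include hΦ

lemma phi_apply {c : ℕ → ℂ} {p : MvPolynomial (Fin n) ℂ} {N : ℕ} (h : p.totalDegree < N) :
    Φ c p = ∑ m ∈ Finset.range N, c m • ((Aop a ^ m) p) := by
  rw [hΦ]
  apply Finset.sum_subset
  · exact Finset.range_subset_range.mpr (by omega)
  · intro m h1 h2
    rw [Finset.mem_range] at h1 h2
    rw [apow_eq_zero a (by omega), smul_zero]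

lemma phi_add (c d : ℕ → ℂ) : Φ (fun m => c m + d m) = Φ c + Φ d := by
  apply LinearMap.ext; intro p
  rw [LinearMap.add_apply, hΦ, hΦ, hΦ, ← Finset.sum_add_distrib]
  exact Finset.sum_congr rfl fun m _ => by rw [← add_smul]

lemma phi_sub (c d : ℕ → ℂ) : Φ (fun m => c m - d m) = Φ c - Φ d := by
  apply LinearMap.ext; intro p
  rw [LinearMap.sub_apply, hΦ, hΦ, hΦ, ← Finset.sum_sub_distrib]
  exact Finset.sum_congr rfl fun m _ => by rw [← sub_smul]

lemma phi_addsub (c d e : ℕ → ℂ) : Φ (fun m => c m + d m - e m) = Φ c + Φ d - Φ e := by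
  rw [phi_sub a Φ hΦ (fun m => c m + d m) e, phi_add a Φ hΦ c d]

lemma td_phi (c : ℕ → ℂ) (p : MvPolynomial (Fin n) ℂ) :
    (Φ c p).totalDegree ≤ p.totalDegree := by
  rw [hΦ]
  refine (totalDegree_finset_sum _ _).trans (Finset.sup_le fun m _ => ?_)
  exact (totalDegree_smul_le _ _).trans (td_apow_le a m p)

omit hΦ

def Pc (c : ℕ → ℂ) (N : ℕ) : Polynomial ℂ :=
  ∑ m ∈ Finset.range N, Polynomial.C (c m) * Polynomial.X ^ m

lemma coeff_Pc (c : ℕ → ℂ) (N r : ℕ) : (Pc c N).coeff r = if r < N then c r else 0 := by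
  rw [Pc, Polynomial.finset_sum_coeff]
  simp only [Polynomial.coeff_C_mul, Polynomial.coeff_X_pow, mul_ite, mul_one, mul_zero]
  rw [Finset.sum_ite_eq (Finset.range N) r c]
  simp [Finset.mem_range]

include hΦ

lemma aeval_Pc (c : ℕ → ℂ) (N : ℕ) (p : MvPolynomial (Fin n) ℂ) (hN : p.totalDegree < N) :
    Polynomial.aeval (Aop a) (Pc c N) p = Φ c p := by
  rw [phi_apply a Φ hΦ hN, Pc, map_sum, LinearMap.sum_apply]
  refine Finset.sum_congr rfl fun m _ => ?_
  rw [map_mul, Polynomial.aeval_C, map_pow, Polynomial.aeval_X, Module.End.mul_apply,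
    Module.algebraMap_end_apply]

omit hΦ

lemma aeval_congr (Q₁ Q₂ : Polynomial ℂ) (p : MvPolynomial (Fin n) ℂ)
    (h : ∀ r, r ≤ p.totalDegree → Q₁.coeff r = Q₂.coeff r) :
    Polynomial.aeval (Aop a) Q₁ p = Polynomial.aeval (Aop a) Q₂ p := by
  rw [Polynomial.aeval_eq_sum_range'
      (lt_of_le_of_lt (le_max_left Q₁.natDegree Q₂.natDegree) (Nat.lt_succ_self _)) (Aop a),
    Polynomial.aeval_eq_sum_range'
      (lt_of_le_of_lt (le_max_right Q₁.natDegree Q₂.natDegree) (Nat.lt_succ_self _)) (Aop a),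
    LinearMap.sum_apply, LinearMap.sum_apply]
  refine Finset.sum_congr rfl fun r _ => ?_
  rw [LinearMap.smul_apply, LinearMap.smul_apply]
  by_cases hr : r ≤ p.totalDegree
  · rw [h r hr]
  · rw [apow_eq_zero a (by omega), smul_zero, smul_zero]

include hΦ

lemma phi_mul (c d : ℕ → ℂ) : Φ c * Φ d = Φ (st19conv c d) := by
  apply LinearMap.ext; intro p
  have hpN : p.totalDegree < p.totalDegree + 1 := Nat.lt_succ_self _
  set N := p.totalDegree + 1 with hN
  rw [Module.End.mul_apply]
  have h1 : (Φ d) p = Polynomial.aeval (Aop a) (Pc d N) p := (aeval_Pc a Φ hΦ d N p hpN).symm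
  have hdq : (Polynomial.aeval (Aop a) (Pc d N) p).totalDegree < N := by
    rw [← h1]; exact lt_of_le_of_lt (td_phi a Φ hΦ d p) hpN
  have h2 : Φ c (Polynomial.aeval (Aop a) (Pc d N) p)
      = Polynomial.aeval (Aop a) (Pc c N) (Polynomial.aeval (Aop a) (Pc d N) p) :=
    (aeval_Pc a Φ hΦ c N _ hdq).symm
  rw [h1, h2, ← Module.End.mul_apply, ← map_mul]
  have h3 : ∀ r, r ≤ p.totalDegree →
      (Pc c N * Pc d N).coeff r = (Pc (st19conv c d) (2 * N)).coeff r := by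
    intro r hr
    rw [Polynomial.coeff_mul, Finset.Nat.sum_antidiagonal_eq_sum_range_succ_mk,
      coeff_Pc, if_pos (by omega), st19conv]
    refine Finset.sum_congr rfl fun k hk => ?_
    rw [Finset.mem_range] at hk
    rw [coeff_Pc, coeff_Pc, if_pos (by omega), if_pos (by omega)]
  rw [aeval_congr a _ _ p h3, aeval_Pc a Φ hΦ _ _ p (by omega)]

lemma phi_xop (c : ℕ → ℂ) (ν : Fin n) :
    Φ c * xop ν = xop ν * Φ c + (Complex.I * a ν) • Φ (st19D c) := by
  apply LinearMap.ext; intro p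
  set N := p.totalDegree + 1 with hN
  simp only [Module.End.mul_apply, LinearMap.add_apply, LinearMap.smul_apply, xop_apply]
  have hdeg : (MvPolynomial.X ν * p).totalDegree < N + 1 := by
    have h1 := totalDegree_mul (MvPolynomial.X ν) p
    have h2 : (MvPolynomial.X ν : MvPolynomial (Fin n) ℂ).totalDegree = 1 := totalDegree_X ν
    omega
  rw [phi_apply a Φ hΦ hdeg,
    phi_apply a Φ hΦ (show p.totalDegree < N + 1 by omega) (c := c),
    phi_apply a Φ hΦ (show p.totalDegree < N by omega) (c := st19D c)]
  have key : ∀ i : ℕ, (Aop a ^ (i + 1)) (MvPolynomial.X ν * p)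
      = MvPolynomial.X ν * ((Aop a ^ (i + 1)) p)
        + (((i + 1 : ℕ) : ℂ) * (Complex.I * a ν)) • ((Aop a ^ i) p) := by
    intro i
    have h := congrArg (fun (F : Module.End ℂ (MvPolynomial (Fin n) ℂ)) => F p) (apow_xop a ν i)
    simpa only [Module.End.mul_apply, LinearMap.add_apply, LinearMap.smul_apply, xop_apply] using h
  rw [Finset.sum_range_succ']
  simp only [key, pow_zero, Module.End.one_apply, smul_add]
  rw [Finset.sum_add_distrib]
  have part1 : (∑ i ∈ Finset.range N, c (i + 1) • (MvPolynomial.X ν * (Aop a ^ (i + 1)) p))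
      + c 0 • (MvPolynomial.X ν * p)
      = MvPolynomial.X ν * ∑ m ∈ Finset.range (N + 1), c m • (Aop a ^ m) p := by
    conv_rhs => rw [Finset.sum_range_succ']
    rw [mul_add, Finset.mul_sum]
    congr 1
    · exact Finset.sum_congr rfl fun i _ => (mul_smul_comm _ _ _).symm
    · rw [mul_smul_comm, pow_zero, Module.End.one_apply]
  have part2 : (∑ i ∈ Finset.range N,
        c (i + 1) • ((((i + 1 : ℕ) : ℂ) * (Complex.I * a ν)) • (Aop a ^ i) p))
      = (Complex.I * a ν) • ∑ m ∈ Finset.range N, st19D c m • (Aop a ^ m) p := by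
    rw [Finset.smul_sum]
    refine Finset.sum_congr rfl fun i _ => ?_
    rw [smul_smul, smul_smul, st19D]
    congr 1
    push_cast
    ring
  rw [add_right_comm, part1, part2]

lemma phi_xdop (c : ℕ → ℂ) : Φ c * xdop = xdop * Φ c + Φ (st19M c) := by
  apply LinearMap.ext; intro p
  set N := p.totalDegree + 1 with hN
  simp only [Module.End.mul_apply, LinearMap.add_apply]
  have hdeg : (xdop p).totalDegree < N := by
    have := td_xdop p; omega
  rw [phi_apply a Φ hΦ hdeg, phi_apply a Φ hΦ (show p.totalDegree < N by omega) (c := c),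
    phi_apply a Φ hΦ (show p.totalDegree < N by omega) (c := st19M c)]
  have key : ∀ m : ℕ, (Aop a ^ m) (xdop p)
      = xdop ((Aop a ^ m) p) + (m : ℂ) • ((Aop a ^ m) p) := by
    intro m
    have h := congrArg (fun (F : Module.End ℂ (MvPolynomial (Fin n) ℂ)) => F p) (apow_xdop a m)
    simpa only [Module.End.mul_apply, LinearMap.add_apply, LinearMap.smul_apply] using h
  simp only [key, smul_add]
  rw [Finset.sum_add_distrib, map_sum]
  congr 1
  · refine Finset.sum_congr rfl fun m _ => ?_
    rw [map_smul]
  · refine Finset.sum_congr rfl fun m _ => ?_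
    rw [smul_smul]
    rfl

end st19

namespace st19
open Finset

variable (a : Fin n → ℂ) (Φ : (ℕ → ℂ) → Module.End ℂ (MvPolynomial (Fin n) ℂ))
  (hΦ : ∀ (c : ℕ → ℂ) (p : MvPolynomial (Fin n) ℂ),
    Φ c p = ∑ m ∈ Finset.range (p.totalDegree + 1), c m • ((Aop a ^ m) p))

include hΦ

lemma hA (c e : ℕ → ℂ) (ν : Fin n) :
    Φ c * (xop ν * Φ e)
      = xop ν * Φ (st19conv c e) + (Complex.I * a ν) • Φ (st19conv (st19D c) e) := by
  rw [← mul_assoc, phi_xop a Φ hΦ c ν, add_mul, smul_mul_assoc, mul_assoc,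
    phi_mul a Φ hΦ, phi_mul a Φ hΦ]

lemma hB (c f : ℕ → ℂ) :
    Φ c * (xdop * Φ f) = xdop * Φ (st19conv c f) + Φ (st19conv (st19M c) f) := by
  rw [← mul_assoc, phi_xdop a Φ hΦ c, add_mul, mul_assoc, phi_mul a Φ hΦ, phi_mul a Φ hΦ]

omit hΦ

lemma hC (ν : Fin n) (Z : Module.End ℂ (MvPolynomial (Fin n) ℂ)) :
    xdop * (xop ν * Z) = xop ν * (xdop * Z) + xop ν * Z := by
  rw [← mul_assoc, xdop_xop, add_mul, mul_assoc]

lemma xop_swap (μ ν : Fin n) (Z : Module.End ℂ (MvPolynomial (Fin n) ℂ)) :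
    xop ν * (xop μ * Z) = xop μ * (xop ν * Z) := by
  rw [← mul_assoc, xop_comm ν μ, mul_assoc]

include hΦ

lemma gen_mul (μ ν : Fin n) (c d e f : ℕ → ℂ) :
    (xop μ * Φ c + (Complex.I * a μ) • (xdop * Φ d))
        * (xop ν * Φ e + (Complex.I * a ν) • (xdop * Φ f))
    = xop μ * (xop ν * Φ (st19conv c e))
      + (Complex.I * a ν) • (xop μ * Φ (st19conv (st19D c) e))
      + (Complex.I * a ν) • (xop μ * (xdop * Φ (st19conv c f)))
      + (Complex.I * a ν) • (xop μ * Φ (st19conv (st19M c) f))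
      + (Complex.I * a μ) • (xop ν * (xdop * Φ (st19conv d e)))
      + (Complex.I * a μ) • (xop ν * Φ (st19conv d e))
      + ((Complex.I * a μ) * (Complex.I * a ν)) • (xdop * Φ (st19conv (st19D d) e))
      + ((Complex.I * a μ) * (Complex.I * a ν)) • (xdop * (xdop * Φ (st19conv d f)))
      + ((Complex.I * a μ) * (Complex.I * a ν)) • (xdop * Φ (st19conv (st19M d) f)) := by
  simp only [add_mul, mul_add, smul_mul_assoc, mul_smul_comm, smul_smul, mul_assoc]
  rw [hA a Φ hΦ c e ν, hB a Φ hΦ c f, hA a Φ hΦ d e ν, hB a Φ hΦ d f]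
  simp only [mul_add, smul_add, mul_smul_comm, smul_smul, hC]
  module

end st19

/-- the dual κ-deformed generators
`ŷ_μ = x_μ A/(1-e^{-A}) + i a_μ (x·∂)(1/A - 1/(1-e^{-A}))` commute with
`x̂_μ = x_μ A/(e^A-1) + i a_μ (x·∂)(1/A - 1/(e^A-1))`, and satisfy
`[ŷ_μ, ŷ_ν] = -i(a_μ ŷ_ν - a_ν ŷ_μ)`.  Here `Φ c = Σ_m c_m A^m`, with
`A/(e^A-1) = Σ (B_m/m!) A^m`, `A/(1-e^{-A}) = Σ ((-1)^m B_m/m!) A^m`,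
`1/A - 1/(e^A-1) = -Σ (B_{m+1}/(m+1)!) A^m`,
`1/A - 1/(1-e^{-A}) = Σ ((-1)^m B_{m+1}/(m+1)!) A^m` (`B₁ = -1/2` convention). -/
theorem stmt19 (a : Fin n → ℂ)
    (Φ : (ℕ → ℂ) → Module.End ℂ (MvPolynomial (Fin n) ℂ))
    (hΦ : ∀ (c : ℕ → ℂ) (p : MvPolynomial (Fin n) ℂ),
      Φ c p = ∑ m ∈ Finset.range (p.totalDegree + 1), c m • ((Aop a ^ m) p))
    (T S T' S' : Module.End ℂ (MvPolynomial (Fin n) ℂ))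
    (hT : T = Φ fun m => (bernoulli m : ℂ) / (m.factorial : ℂ))
    (hS : S = Φ fun m => -((bernoulli (m + 1) : ℂ) / ((m + 1).factorial : ℂ)))
    (hT' : T' = Φ fun m => (-1 : ℂ) ^ m * (bernoulli m : ℂ) / (m.factorial : ℂ))
    (hS' : S' = Φ fun m => (-1 : ℂ) ^ m * (bernoulli (m + 1) : ℂ) / ((m + 1).factorial : ℂ))
    (xhat yhat : Fin n → Module.End ℂ (MvPolynomial (Fin n) ℂ))
    (hxhat : ∀ μ, xhat μ = xop μ * T + (Complex.I * a μ) • (xdop * S))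
    (hyhat : ∀ μ, yhat μ = xop μ * T' + (Complex.I * a μ) • (xdop * S')) :
    (∀ μ ν, ⁅xhat μ, yhat ν⁆ = 0)
    ∧ ∀ μ ν, ⁅yhat μ, yhat ν⁆
        = -((Complex.I * a μ) • yhat ν - (Complex.I * a ν) • yhat μ) := by
  have hT2 : T = Φ st19b := hT
  have hS2 : S = Φ st19s := hS
  have hT'2 : T' = Φ st19b' := hT'
  have hS'2 : S' = Φ st19u := hS'
  have PhiI : Φ (st19conv (st19D st19b) st19b')
      = Φ (st19conv st19b st19u) - Φ (st19conv (st19M st19b) st19u) := by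
    rw [st19.seqI, st19.phi_sub a Φ hΦ]
  have PhiII : Φ (st19conv (st19D st19b') st19b)
      = Φ (st19conv st19s st19b') - Φ (st19conv (st19M st19b') st19s) := by
    rw [st19.seqII, st19.phi_sub a Φ hΦ]
  have PhiIII : Φ (st19conv (st19D st19s) st19b')
      = Φ (st19conv (st19D st19u) st19b) + Φ (st19conv (st19M st19u) st19s)
        - Φ (st19conv (st19M st19s) st19u) := by
    rw [st19.seqIII, st19.phi_addsub a Φ hΦ]
  have PhiIV : Φ (st19conv (st19D st19b') st19b')
      = Φ (st19conv st19u st19b') + Φ st19b' - Φ (st19conv (st19M st19b') st19u) := by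
    rw [st19.seqIV, st19.phi_addsub a Φ hΦ]
  have cc1 : st19conv st19b' st19b = st19conv st19b st19b' := st19.conv_comm _ _
  have cc2 : st19conv st19u st19b = st19conv st19b st19u := st19.conv_comm _ _
  have cc3 : st19conv st19b' st19s = st19conv st19s st19b' := st19.conv_comm _ _
  have cc4 : st19conv st19u st19s = st19conv st19s st19u := st19.conv_comm _ _
  have cc5 : st19conv st19b' st19u = st19conv st19u st19b' := st19.conv_comm _ _
  constructor
  · intro μ ν
    rw [Ring.lie_def, hxhat μ, hyhat ν, hT2, hS2, hT'2, hS'2,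
      st19.gen_mul a Φ hΦ μ ν st19b st19s st19b' st19u,
      st19.gen_mul a Φ hΦ ν μ st19b' st19u st19b st19s,
      cc1, cc2, cc3, cc4, PhiI, PhiII, PhiIII, st19.xop_swap μ ν]
    simp only [mul_sub, mul_add, smul_sub, smul_add]
    module
  · intro μ ν
    rw [Ring.lie_def, hyhat μ, hyhat ν, hT'2, hS'2,
      st19.gen_mul a Φ hΦ μ ν st19b' st19u st19b' st19u,
      st19.gen_mul a Φ hΦ ν μ st19b' st19u st19b' st19u,
      cc5, PhiIV, st19.xop_swap μ ν]
    simp only [mul_sub, mul_add, smul_sub, smul_add]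
    module

end
end
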